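/- arXiv:1911.06284 — 13 statements merged into one kernel-verified Lean document; each statement's English description precedes it below -/
import Mathlib

section
/- For all x, x' ∈ 𝒳_K and all y ∈ Y one has ⟨K(x') − K(x) − ∇K(x)(x' − x), y⟩ ≤ (L/2)·‖x − x'‖²·‖P y‖. -/
open scoped RealInnerProductSpace

open Set

/-- Quadratic Taylor estimate for a map with Lipschitz derivative on a convex set. -/
theorem taylor_quad_aux {X Y : Type*}
    [NormedAddCommGroup X] [NormedSpace ℝ X]
    [NormedAddCommGroup Y] [NormedSpace ℝ Y]
    {s : Set X} (hconv : Convex ℝ s)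
    {K : X → Y} {DK : X → X →L[ℝ] Y}
    (hdiff : ∀ x ∈ s, HasFDerivWithinAt K (DK x) s x)
    {M : ℝ}
    (hLip : ∀ x ∈ s, ∀ x' ∈ s, ‖DK x - DK x'‖ ≤ M * ‖x - x'‖)
    {x x' : X} (hx : x ∈ s) (hx' : x' ∈ s) :
    ‖K x' - K x - DK x (x' - x)‖ ≤ M / 2 * ‖x' - x‖ ^ 2 := by
  set v := x' - x with hv
  set γ : ℝ → X := fun t => x + t • v with hγ
  have hmem : ∀ t ∈ Icc (0 : ℝ) 1, γ t ∈ s := by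
    intro t ht
    have : γ t = (1 - t) • x + t • x' := by
      simp only [hγ, hv, smul_sub, sub_smul, one_smul]
      abel
    rw [this]
    exact hconv hx hx' (by linarith [ht.1, ht.2]) ht.1 (by abel)
  set g : ℝ → Y := fun t => K (γ t) - t • (DK x v) with hg
  set f : ℝ → Y := fun t => g t - g 0 with hf
  set f' : ℝ → Y := fun t => DK (γ t) v - DK x v with hf'
  set C : ℝ := M * ‖v‖ ^ 2 with hC
  -- derivative of g within Icc 0 1
  have hgder : ∀ t ∈ Icc (0 : ℝ) 1, HasDerivWithinAt g (f' t) (Icc (0 : ℝ) 1) t := by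
    intro t ht
    have hcurve : HasDerivAt γ v t := by
      simpa [hγ] using ((hasDerivAt_id t).smul_const v).const_add x
    have h1 : HasDerivWithinAt (fun t => K (γ t)) (DK (γ t) v) (Icc (0 : ℝ) 1) t :=
      (hdiff (γ t) (hmem t ht)).comp_hasDerivWithinAt t hcurve.hasDerivWithinAt hmem
    have h2 : HasDerivWithinAt (fun t : ℝ => t • (DK x v)) (DK x v) (Icc (0 : ℝ) 1) t := by
      simpa using (((hasDerivAt_id t).smul_const (DK x v)).hasDerivWithinAt
        (s := Icc (0 : ℝ) 1))
    exact h1.sub h2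
  have hfder : ∀ t ∈ Icc (0 : ℝ) 1, HasDerivWithinAt f (f' t) (Icc (0 : ℝ) 1) t := by
    intro t ht
    exact (hgder t ht).sub_const _
  have hfcont : ContinuousOn f (Icc (0 : ℝ) 1) :=
    fun t ht => (hfder t ht).continuousWithinAt
  have hfder' : ∀ t ∈ Ico (0 : ℝ) 1, HasDerivWithinAt f (f' t) (Ici t) t := by
    intro t ht
    exact (hfder t (Ico_subset_Icc_self ht)).mono_of_mem_nhdsWithin
      (Icc_mem_nhdsGE_of_mem ht)
  have hB : ∀ t : ℝ, HasDerivAt (fun t : ℝ => C / 2 * t ^ 2) (C * t) t := by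
    intro t
    have := (hasDerivAt_pow 2 t).const_mul (C / 2)
    refine this.congr_deriv ?_
    push_cast
    ring
  have hbound : ∀ t ∈ Ico (0 : ℝ) 1, ‖f' t‖ ≤ C * t := by
    intro t ht
    have h1 : ‖f' t‖ = ‖(DK (γ t) - DK x) v‖ := by
      simp [hf', ContinuousLinearMap.sub_apply]
    have h2 : ‖(DK (γ t) - DK x) v‖ ≤ ‖DK (γ t) - DK x‖ * ‖v‖ :=
      (DK (γ t) - DK x).le_opNorm v
    have h3 : ‖DK (γ t) - DK x‖ ≤ M * ‖γ t - x‖ :=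
      hLip (γ t) (hmem t (Ico_subset_Icc_self ht)) x hx
    have h4 : ‖γ t - x‖ = t * ‖v‖ := by
      simp [hγ, norm_smul, abs_of_nonneg ht.1]
    have hv0 : (0 : ℝ) ≤ ‖v‖ := norm_nonneg v
    calc ‖f' t‖ ≤ ‖DK (γ t) - DK x‖ * ‖v‖ := by rw [h1]; exact h2
      _ ≤ (M * (t * ‖v‖)) * ‖v‖ := by
          apply mul_le_mul_of_nonneg_right _ hv0
          rw [← h4]; exact h3
      _ = C * t := by rw [hC]; ring
  have ha : ‖f 0‖ ≤ C / 2 * (0 : ℝ) ^ 2 := by simp [hf]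
  have key := image_norm_le_of_norm_deriv_right_le_deriv_boundary hfcont hfder' ha hB hbound
    (right_mem_Icc.2 zero_le_one)
  have hγ1 : γ 1 = x' := by simp [hγ, hv]
  have hγ0 : γ 0 = x := by simp [hγ]
  have hf1 : f 1 = K x' - K x - DK x (x' - x) := by
    simp [hf, hg, hγ1, hγ0, hv]
    abel
  rw [hf1] at key
  calc ‖K x' - K x - DK x (x' - x)‖ ≤ C / 2 * 1 ^ 2 := key
    _ = M / 2 * ‖x' - x‖ ^ 2 := by rw [hC]; ring

/-- Consequence of the Lipschitz differentiability of `K` on `𝒳` (with `(id - P) ∘ ∇K`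
constant on `𝒳`): a second-order Taylor-type estimate tested against `y`. -/
theorem stmt0 {X Y : Type*}
    [NormedAddCommGroup X] [InnerProductSpace ℝ X] [CompleteSpace X]
    [NormedAddCommGroup Y] [InnerProductSpace ℝ Y] [CompleteSpace Y]
    (𝒳 : Set X) (hconv : Convex ℝ 𝒳)
    (K : X → Y) (DK : X → X →L[ℝ] Y)
    (hdiff : ∀ x ∈ 𝒳, HasFDerivWithinAt K (DK x) 𝒳 x)
    (L : ℝ) (hL : 0 ≤ L)
    (hLip : ∀ x ∈ 𝒳, ∀ x' ∈ 𝒳, ‖DK x - DK x'‖ ≤ L * ‖x - x'‖)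
    (P : Y →L[ℝ] Y)
    (hPsa : ∀ u v : Y, ⟪P u, v⟫ = ⟪u, P v⟫)
    (hPidem : P.comp P = P)
    (hPconst : ∀ x ∈ 𝒳, ∀ x' ∈ 𝒳,
      (ContinuousLinearMap.id ℝ Y - P).comp (DK x)
        = (ContinuousLinearMap.id ℝ Y - P).comp (DK x')) :
    ∀ x ∈ 𝒳, ∀ x' ∈ 𝒳, ∀ y : Y,
      ⟪K x' - K x - DK x (x' - x), y⟫ ≤ (L / 2) * ‖x - x'‖ ^ 2 * ‖P y‖ := by
  intro x hx x' hx' y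
  set Q : Y →L[ℝ] Y := ContinuousLinearMap.id ℝ Y - P with hQ
  set Δ : Y := K x' - K x - DK x (x' - x) with hΔ
  -- Step 1: the (id - P)-component of the remainder vanishes
  have hHdiff : ∀ z ∈ 𝒳, HasFDerivWithinAt (fun w => Q (K w)) (Q.comp (DK z)) 𝒳 z := by
    intro z hz
    exact Q.hasFDerivAt.comp_hasFDerivWithinAt z (hdiff z hz)
  have hHbound : ∀ z ∈ 𝒳, ‖Q.comp (DK z) - Q.comp (DK x)‖ ≤ 0 := by
    intro z hz
    rw [hPconst z hz x hx]
    simp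
  have hzero : Q Δ = 0 := by
    have := hconv.norm_image_sub_le_of_norm_hasFDerivWithin_le' hHdiff hHbound hx hx'
    rw [zero_mul] at this
    have h0 : Q (K x') - Q (K x) - (Q.comp (DK x)) (x' - x) = 0 := by
      rwa [norm_le_zero_iff] at this
    have : Q Δ = Q (K x') - Q (K x) - (Q.comp (DK x)) (x' - x) := by
      simp [hΔ, map_sub]
    rw [this, h0]
  have hPΔ : P Δ = Δ := by
    have : Δ - P Δ = 0 := by
      simpa [hQ, ContinuousLinearMap.sub_apply] using hzero
    exact (sub_eq_zero.mp this).symm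
  -- Step 2: quadratic Taylor bound on the norm of the remainder
  have hnorm : ‖Δ‖ ≤ L / 2 * ‖x' - x‖ ^ 2 :=
    taylor_quad_aux hconv hdiff hLip hx hx'
  -- Step 3: combine
  have h1 : ⟪Δ, y⟫ = ⟪Δ, P y⟫ := by
    rw [← hPΔ, hPsa, hPΔ]
  calc ⟪Δ, y⟫ = ⟪Δ, P y⟫ := h1
    _ ≤ ‖Δ‖ * ‖P y‖ := real_inner_le_norm Δ (P y)
    _ ≤ (L / 2 * ‖x' - x‖ ^ 2) * ‖P y‖ :=
        mul_le_mul_of_nonneg_right hnorm (norm_nonneg _)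
    _ = (L / 2) * ‖x - x'‖ ^ 2 * ‖P y‖ := by rw [norm_sub_rev]
end

section
/- If u, u⁺ ∈ U and w ∈ H(u⁺) satisfy the implicit proximal point step 0 = w + τ⁻¹(u⁺ − u), then ((1 + 2γτ)/2)·‖u⁺ − u*‖² + (1/2)·‖u⁺ − u‖² ≤ (1/2)·‖u − u*‖². -/
open scoped RealInnerProductSpace

/-- A single implicit proximal-point step on a `γ`-strongly monotone (at `ustar` for `0`)
set-valued operator `H` satisfies the descent inequality. -/
theorem stmt1 {U : Type*} [NormedAddCommGroup U] [InnerProductSpace ℝ U]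
    (H : U → Set U) (γ τ : ℝ) (hγ : 0 ≤ γ) (hτ : 0 < τ) (ustar : U)
    (hmono : ∀ u : U, ∀ w ∈ H u, γ * ‖u - ustar‖ ^ 2 ≤ ⟪w, u - ustar⟫)
    (u uplus w : U) (hw : w ∈ H uplus)
    (hstep : (0 : U) = w + τ⁻¹ • (uplus - u)) :
    ((1 + 2 * γ * τ) / 2) * ‖uplus - ustar‖ ^ 2 + (1 / 2) * ‖uplus - u‖ ^ 2
      ≤ (1 / 2) * ‖u - ustar‖ ^ 2 := by
  have hweq : w = -(τ⁻¹ • (uplus - u)) := by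
    have := hstep
    rw [eq_comm, add_eq_zero_iff_eq_neg] at this
    exact this
  have hm := hmono uplus w hw
  rw [hweq] at hm
  have hin : ⟪-(τ⁻¹ • (uplus - u)), uplus - ustar⟫ = -(τ⁻¹ * ⟪uplus - u, uplus - ustar⟫) := by
    rw [inner_neg_left, real_inner_smul_left]
  rw [hin] at hm
  -- polarization identity
  have hpol : 2 * ⟪uplus - u, uplus - ustar⟫
      = ‖uplus - ustar‖ ^ 2 + ‖uplus - u‖ ^ 2 - ‖u - ustar‖ ^ 2 := by
    have h1 : u - ustar = (uplus - ustar) - (uplus - u) := by abel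
    rw [h1, norm_sub_sq_real (uplus - ustar) (uplus - u),
      real_inner_comm (uplus - u) (uplus - ustar)]
    ring
  have hτ' : (0:ℝ) < τ⁻¹ := inv_pos.mpr hτ
  -- from hm : γ * ‖uplus - ustar‖^2 ≤ -(τ⁻¹ * ip)
  have h2 : τ * (γ * ‖uplus - ustar‖ ^ 2) ≤ -⟪uplus - u, uplus - ustar⟫ := by
    have := mul_le_mul_of_nonneg_left hm hτ.le
    calc τ * (γ * ‖uplus - ustar‖ ^ 2) ≤ τ * -(τ⁻¹ * ⟪uplus - u, uplus - ustar⟫) := this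
      _ = -⟪uplus - u, uplus - ustar⟫ := by field_simp
  nlinarith [h2, hpol]
end

section
/- If (u^i)_{i∈ℕ} ⊆ U is a sequence such that for every i there exists w^{i+1} ∈ H(u^{i+1}) with 0 = w^{i+1} + τ⁻¹(u^{i+1} − u^i), then for every N ∈ ℕ one has ‖u^N − u*‖² ≤ (1 + 2γτ)^{−N}·‖u^0 − u*‖²; in particular, when γ > 0 the iterates converge to u* at a linear rate. -/
open scoped RealInnerProductSpace

/-- The proximal-point iterates of a `γ`-strongly monotone (at `ustar` for `0`) set-valued
operator `H` converge to `ustar` at the linear rate `O(1/(1+2γτ)^N)`. -/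
theorem stmt2 {U : Type*} [NormedAddCommGroup U] [InnerProductSpace ℝ U]
    (H : U → Set U) (γ τ : ℝ) (hγ : 0 ≤ γ) (hτ : 0 < τ) (ustar : U)
    (hmono : ∀ u : U, ∀ w ∈ H u, γ * ‖u - ustar‖ ^ 2 ≤ ⟪w, u - ustar⟫)
    (u : ℕ → U)
    (hstep : ∀ i : ℕ, ∃ w ∈ H (u (i + 1)), (0 : U) = w + τ⁻¹ • (u (i + 1) - u i)) :
    ∀ N : ℕ, ‖u N - ustar‖ ^ 2 ≤ ((1 + 2 * γ * τ) ^ N)⁻¹ * ‖u 0 - ustar‖ ^ 2 := by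
  have hpos : (0:ℝ) < 1 + 2 * γ * τ := by nlinarith
  have key : ∀ i : ℕ, (1 + 2 * γ * τ) * ‖u (i+1) - ustar‖ ^ 2 ≤ ‖u i - ustar‖ ^ 2 := by
    intro i
    obtain ⟨w, hw, heq⟩ := hstep i
    have hwe : w = -(τ⁻¹ • (u (i+1) - u i)) := by
      have h0 : w + τ⁻¹ • (u (i+1) - u i) = 0 := heq.symm
      rw [add_eq_zero_iff_eq_neg] at h0
      exact h0
    have hmw := hmono _ w hw
    rw [hwe, inner_neg_left, real_inner_smul_left] at hmw
    -- γ‖a‖² ≤ -(τ⁻¹ * ⟪b, a⟫)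
    set a := u (i+1) - ustar with ha
    set b := u (i+1) - u i with hb
    have hib : γ * τ * ‖a‖ ^ 2 ≤ -⟪b, a⟫ := by
      have hmw' : γ * ‖a‖ ^ 2 ≤ -⟪b, a⟫ / τ := by
        rw [neg_div, div_eq_inv_mul]; exact hmw
      have h4 := (le_div_iff₀ hτ).mp hmw'
      have h5 : γ * τ * ‖a‖ ^ 2 = γ * ‖a‖ ^ 2 * τ := by ring
      linarith
    have hexp : ‖u i - ustar‖ ^ 2 = ‖a‖ ^ 2 - 2 * ⟪a, b⟫ + ‖b‖ ^ 2 := by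
      have h3 : u i - ustar = a - b := by rw [ha, hb]; abel
      rw [h3, norm_sub_sq_real]
    rw [hexp]
    nlinarith [sq_nonneg (‖b‖), real_inner_comm a b, hib]
  intro N
  induction N with
  | zero => simp
  | succ n ih =>
    have h1 := key n
    have hp : (0:ℝ) < (1 + 2 * γ * τ) ^ n := pow_pos hpos n
    have h2 : ‖u (n+1) - ustar‖ ^ 2 ≤ (1 + 2 * γ * τ)⁻¹ * ‖u n - ustar‖ ^ 2 := by
      rw [le_inv_mul_iff₀ hpos]
      linarith
    calc ‖u (n+1) - ustar‖ ^ 2 ≤ (1 + 2 * γ * τ)⁻¹ * ‖u n - ustar‖ ^ 2 := h2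
      _ ≤ (1 + 2 * γ * τ)⁻¹ * (((1 + 2 * γ * τ) ^ n)⁻¹ * ‖u 0 - ustar‖ ^ 2) := by
          exact mul_le_mul_of_nonneg_left ih (by positivity)
      _ = ((1 + 2 * γ * τ) ^ (n+1))⁻¹ * ‖u 0 - ustar‖ ^ 2 := by
          rw [pow_succ (1 + 2 * γ * τ) n, mul_inv]; ring
end

section
/- If for every i = 0,…,N−1 the expected fundamental condition holds: ∫_Ω ⟨Z_{i+1}(ω)W_{i+1}(ω)h^{i+1}(ω), u^{i+1}(ω) − u*⟩ dμ(ω) ≥ ∫_Ω [ (1/2)⟨(C_{i+2}(ω) − C_{i+1}(ω))(u^{i+1}(ω) − u*), u^{i+1}(ω) − u*⟩ − (1/2)⟨C_{i+1}(ω)(u^{i+1}(ω) − u^i(ω)), u^{i+1}(ω) − u^i(ω)⟩ ] dμ(ω), then the expected descent inequality holds: ∫_Ω (1/2)⟨C_{N+1}(ω)(u^N(ω) − u*), u^N(ω) − u*⟩ dμ(ω) ≤ ∫_Ω (1/2)⟨C_1(ω)(u^0(ω) − u*), u^0(ω) − u*⟩ dμ(ω). -/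
open scoped RealInnerProductSpace
open MeasureTheory

/-- Stochastic testing theorem: if the expected fundamental condition holds on each of the
first `N` steps of the implicitly-defined algorithm, then the expected descent inequality
holds at iteration `N`. -/
theorem stmt3 {U : Type*} [NormedAddCommGroup U] [InnerProductSpace ℝ U]
    {Ω : Type*} [MeasurableSpace Ω] (μ : Measure Ω) [IsProbabilityMeasure μ]
    (N : ℕ) (hN : 1 ≤ N) (ustar : U)
    (u : ℕ → Ω → U) (hu : ∀ i ≤ N, StronglyMeasurable (u i))
    (C Z W M : ℕ → Ω → U →L[ℝ] U) (h : ℕ → Ω → U)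
    (hCsa : ∀ i ≤ N, ∀ᵐ ω ∂μ, ∀ v v' : U, ⟪C (i + 1) ω v, v'⟫ = ⟪v, C (i + 1) ω v'⟫)
    (hCZM : ∀ i < N, ∀ ω : Ω, C (i + 1) ω = (Z (i + 1) ω).comp (M (i + 1) ω))
    (hstep : ∀ i < N, ∀ᵐ ω ∂μ,
      (0 : U) = W (i + 1) ω (h (i + 1) ω) + M (i + 1) ω (u (i + 1) ω - u i ω))
    (hI1 : ∀ i ≤ N, Integrable (fun ω => ⟪C (i + 1) ω (u i ω - ustar), u i ω - ustar⟫) μ)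
    (hI2 : ∀ i < N,
      Integrable (fun ω => ⟪C (i + 1) ω (u (i + 1) ω - ustar), u (i + 1) ω - ustar⟫) μ)
    (hI3 : ∀ i < N,
      Integrable (fun ω => ⟪C (i + 1) ω (u (i + 1) ω - u i ω), u (i + 1) ω - u i ω⟫) μ)
    (hI4 : ∀ i < N,
      Integrable (fun ω => ⟪Z (i + 1) ω (W (i + 1) ω (h (i + 1) ω)), u (i + 1) ω - ustar⟫) μ)
    (hfund : ∀ i < N,
      ∫ ω, ⟪Z (i + 1) ω (W (i + 1) ω (h (i + 1) ω)), u (i + 1) ω - ustar⟫ ∂μ ≥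
        ∫ ω, ((1 / 2) * ⟪(C (i + 2) ω - C (i + 1) ω) (u (i + 1) ω - ustar),
                u (i + 1) ω - ustar⟫
              - (1 / 2) * ⟪C (i + 1) ω (u (i + 1) ω - u i ω), u (i + 1) ω - u i ω⟫) ∂μ) :
    ∫ ω, (1 / 2) * ⟪C (N + 1) ω (u N ω - ustar), u N ω - ustar⟫ ∂μ ≤
      ∫ ω, (1 / 2) * ⟪C 1 ω (u 0 ω - ustar), u 0 ω - ustar⟫ ∂μ := by
  have key : ∀ i < N,
      ∫ ω, (1 / 2 : ℝ) * ⟪C (i + 2) ω (u (i + 1) ω - ustar), u (i + 1) ω - ustar⟫ ∂μ ≤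
      ∫ ω, (1 / 2 : ℝ) * ⟪C (i + 1) ω (u i ω - ustar), u i ω - ustar⟫ ∂μ := by
    intro i hi
    have hiN : i ≤ N := hi.le
    have hi1N : i + 1 ≤ N := hi
    -- pointwise identity for the left-hand side of hfund
    have hptwise : ∀ᵐ ω ∂μ,
        ⟪Z (i + 1) ω (W (i + 1) ω (h (i + 1) ω)), u (i + 1) ω - ustar⟫ =
          (1 / 2 : ℝ) * ⟪C (i + 1) ω (u i ω - ustar), u i ω - ustar⟫
          - (1 / 2 : ℝ) * ⟪C (i + 1) ω (u (i + 1) ω - ustar), u (i + 1) ω - ustar⟫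
          - (1 / 2 : ℝ) * ⟪C (i + 1) ω (u (i + 1) ω - u i ω), u (i + 1) ω - u i ω⟫ := by
      filter_upwards [hCsa i hiN, hstep i hi] with ω hsa hst
      have hWh : W (i + 1) ω (h (i + 1) ω) = -(M (i + 1) ω (u (i + 1) ω - u i ω)) :=
        eq_neg_of_add_eq_zero_left hst.symm
      have hZ : Z (i + 1) ω (W (i + 1) ω (h (i + 1) ω)) =
          -(C (i + 1) ω (u (i + 1) ω - u i ω)) := by
        rw [hWh, map_neg, hCZM i hi ω]; rfl
      rw [hZ]
      have hx : u (i + 1) ω - u i ω = (u (i + 1) ω - ustar) - (u i ω - ustar) := by abel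
      rw [hx]
      set x := u (i + 1) ω - ustar with hxdef
      set y := u i ω - ustar with hydef
      have hsym : ⟪C (i + 1) ω x, y⟫ = ⟪C (i + 1) ω y, x⟫ := by
        rw [hsa x y, real_inner_comm]
      simp only [inner_neg_left, map_sub, inner_sub_left, inner_sub_right]
      linarith
    set A := ∫ ω, ⟪C (i + 2) ω (u (i + 1) ω - ustar), u (i + 1) ω - ustar⟫ ∂μ with hA
    set B := ∫ ω, ⟪C (i + 1) ω (u (i + 1) ω - ustar), u (i + 1) ω - ustar⟫ ∂μ with hB
    set Cc := ∫ ω, ⟪C (i + 1) ω (u (i + 1) ω - u i ω), u (i + 1) ω - u i ω⟫ ∂μ with hCc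
    set D := ∫ ω, ⟪C (i + 1) ω (u i ω - ustar), u i ω - ustar⟫ ∂μ with hD
    have hIa := hI1 (i + 1) hi1N
    have hIb := hI2 i hi
    have hIc := hI3 i hi
    have hId := hI1 i hiN
    have hL : ∫ ω, ⟪Z (i + 1) ω (W (i + 1) ω (h (i + 1) ω)), u (i + 1) ω - ustar⟫ ∂μ =
        (1 / 2) * D - (1 / 2) * B - (1 / 2) * Cc := by
      have h5 : Integrable (fun ω =>
          (1 / 2 : ℝ) * ⟪C (i + 1) ω (u i ω - ustar), u i ω - ustar⟫
          - (1 / 2) * ⟪C (i + 1) ω (u (i + 1) ω - ustar), u (i + 1) ω - ustar⟫) μ :=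
        (hId.const_mul ((1:ℝ)/2)).sub (hIb.const_mul ((1:ℝ)/2))
      rw [integral_congr_ae hptwise,
        integral_sub h5 (hIc.const_mul ((1:ℝ)/2)),
        integral_sub (hId.const_mul ((1:ℝ)/2)) (hIb.const_mul ((1:ℝ)/2)),
        integral_const_mul, integral_const_mul, integral_const_mul]
    have hRfun : (fun ω => (1 / 2 : ℝ) * ⟪(C (i + 2) ω - C (i + 1) ω) (u (i + 1) ω - ustar),
            u (i + 1) ω - ustar⟫
          - (1 / 2) * ⟪C (i + 1) ω (u (i + 1) ω - u i ω), u (i + 1) ω - u i ω⟫) =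
        fun ω => ((1 / 2 : ℝ) * ⟪C (i + 2) ω (u (i + 1) ω - ustar), u (i + 1) ω - ustar⟫
          - (1 / 2) * ⟪C (i + 1) ω (u (i + 1) ω - ustar), u (i + 1) ω - ustar⟫)
          - (1 / 2) * ⟪C (i + 1) ω (u (i + 1) ω - u i ω), u (i + 1) ω - u i ω⟫ := by
      funext ω
      simp only [ContinuousLinearMap.sub_apply, inner_sub_left]
      ring
    have hR : ∫ ω, ((1 / 2 : ℝ) * ⟪(C (i + 2) ω - C (i + 1) ω) (u (i + 1) ω - ustar),
            u (i + 1) ω - ustar⟫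
          - (1 / 2) * ⟪C (i + 1) ω (u (i + 1) ω - u i ω), u (i + 1) ω - u i ω⟫) ∂μ =
        (1 / 2) * A - (1 / 2) * B - (1 / 2) * Cc := by
      have h6 : Integrable (fun ω =>
          (1 / 2 : ℝ) * ⟪C (i + 2) ω (u (i + 1) ω - ustar), u (i + 1) ω - ustar⟫
          - (1 / 2) * ⟪C (i + 1) ω (u (i + 1) ω - ustar), u (i + 1) ω - ustar⟫) μ :=
        (hIa.const_mul ((1:ℝ)/2)).sub (hIb.const_mul ((1:ℝ)/2))
      rw [hRfun,
        integral_sub h6 (hIc.const_mul ((1:ℝ)/2)),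
        integral_sub (hIa.const_mul ((1:ℝ)/2)) (hIb.const_mul ((1:ℝ)/2)),
        integral_const_mul, integral_const_mul, integral_const_mul]
    have hf := hfund i hi
    rw [hL, hR] at hf
    rw [integral_const_mul, integral_const_mul]
    linarith
  -- telescoping
  have main : ∀ n, n ≤ N →
      ∫ ω, (1 / 2 : ℝ) * ⟪C (n + 1) ω (u n ω - ustar), u n ω - ustar⟫ ∂μ ≤
      ∫ ω, (1 / 2 : ℝ) * ⟪C 1 ω (u 0 ω - ustar), u 0 ω - ustar⟫ ∂μ := by
    intro n
    induction n with
    | zero => intro _; exact le_rfl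
    | succ n ih =>
      intro hn
      have hnN : n < N := hn
      exact le_trans (key n hnN) (ih hnN.le)
  exact main N le_rfl
end

section
/- Suppose that for every ℓ = 1,…,n, (1 − κ)·ψ_ℓ ≥ ‖Σ_{j=1}^m |λ_{ℓ,j}|·√(w_{j,ℓ}/φ_j)·Q_ℓ K' P_j‖² (operator norm). Then for all x ∈ X and y ∈ Y, ⟨Φx, x⟩ − 2⟨Λx, y⟩ + ⟨Ψy, y⟩ ≥ δ⟨Φx, x⟩ + ((κ − δ)/(1 − δ))·⟨Ψy, y⟩; that is, the block operator Z M = [[Φ, −Λ*],[−Λ, Ψ]] on X × Y is bounded below by diag(δΦ, ((κ−δ)/(1−δ))Ψ) in the positive-semidefinite order. -/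
open scoped RealInnerProductSpace Classical

private lemma aux_young {a b w1 w2 : ℝ} (hw2 : 0 < w2) (hmul : w1 * w2 = 1)
    (ha : 0 ≤ a) (hb : 0 ≤ b) : a * b ≤ w1 / 2 * a ^ 2 + w2 / 2 * b ^ 2 := by
  nlinarith [sq_nonneg (a - w2 * b)]

private lemma aux_amgm (A B d : ℝ) (hA : 0 ≤ A) (hB : 0 ≤ B) (hd : 0 < 1 - d) :
    2 * (Real.sqrt A * Real.sqrt B) ≤ (1 - d) * A + B / (1 - d) := by
  have hne : (1 - d) ≠ 0 := ne_of_gt hd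
  have h1 : Real.sqrt A * Real.sqrt B = Real.sqrt ((1 - d) * A) * Real.sqrt (B / (1 - d)) := by
    rw [← Real.sqrt_mul hA, ← Real.sqrt_mul (by positivity)]
    congr 1
    field_simp
  have h2 := Real.sq_sqrt (show (0:ℝ) ≤ (1 - d) * A by positivity)
  have h3 := Real.sq_sqrt (show (0:ℝ) ≤ B / (1 - d) by positivity)
  rw [h1]
  nlinarith [sq_nonneg (Real.sqrt ((1 - d) * A) - Real.sqrt (B / (1 - d)))]

/-- Blockwise step-length condition implies the lower bound
`Z M ≥ diag(δ Φ, ((κ-δ)/(1-δ)) Ψ)` on the local metric (Lemma 2.5). -/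
theorem stmt4 {X Y : Type*}
    [NormedAddCommGroup X] [InnerProductSpace ℝ X] [CompleteSpace X]
    [NormedAddCommGroup Y] [InnerProductSpace ℝ Y] [CompleteSpace Y]
    {m n : ℕ}
    (P : Fin m → X →L[ℝ] X) (Q : Fin n → Y →L[ℝ] Y)
    (hPsa : ∀ j, ∀ u v : X, ⟪P j u, v⟫ = ⟪u, P j v⟫)
    (hPidem : ∀ j, (P j).comp (P j) = P j)
    (hPorth : ∀ j j', j ≠ j' → (P j).comp (P j') = 0)
    (hQsa : ∀ ℓ, ∀ u v : Y, ⟪Q ℓ u, v⟫ = ⟪u, Q ℓ v⟫)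
    (hQidem : ∀ ℓ, (Q ℓ).comp (Q ℓ) = Q ℓ)
    (hQorth : ∀ ℓ ℓ', ℓ ≠ ℓ' → (Q ℓ).comp (Q ℓ') = 0)
    (K' : X →L[ℝ] Y)
    (φ : Fin m → ℝ) (ψ : Fin n → ℝ) (lam : Fin n → Fin m → ℝ)
    (hφ : ∀ j, 0 < φ j) (hψ : ∀ ℓ, 0 < ψ ℓ)
    (w : Fin m → Fin n → Fin n → ℝ)
    (hwpos : ∀ j ℓ k, 0 < w j ℓ k)
    (hwsym : ∀ j ℓ k, w j ℓ k = 1 / w j k ℓ)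
    (wtot : Fin m → Fin n → ℝ)
    (hwtot : ∀ j ℓ, wtot j ℓ =
      if (Q ℓ).comp (K'.comp (P j)) ≠ 0 then
        ∑ k : Fin n,
          (if ((Q ℓ).comp (K'.comp (P j))).comp
                ((ContinuousLinearMap.adjoint K').comp (Q k)) ≠ 0 ∧ lam k j ≠ 0
            then w j ℓ k else 0)
      else 0)
    (δ κ : ℝ) (hδ : 0 ≤ δ) (hδκ : δ ≤ κ) (hκ : κ < 1)
    (Φ : X →L[ℝ] X) (Ψ : Y →L[ℝ] Y) (Λ : X →L[ℝ] Y)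
    (hΦ : Φ = ∑ j : Fin m, φ j • P j)
    (hΨ : Ψ = ∑ ℓ : Fin n, ψ ℓ • Q ℓ)
    (hΛ : Λ = ∑ ℓ : Fin n, ∑ j : Fin m, lam ℓ j • ((Q ℓ).comp (K'.comp (P j))))
    (hcond : ∀ ℓ, (1 - κ) * ψ ℓ ≥
      ‖∑ j : Fin m, (|lam ℓ j| * Real.sqrt (wtot j ℓ / φ j)) •
          ((Q ℓ).comp (K'.comp (P j)))‖ ^ 2) :
    ∀ (x : X) (y : Y),
      ⟪Φ x, x⟫ - 2 * ⟪Λ x, y⟫ + ⟪Ψ y, y⟫ ≥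
        δ * ⟪Φ x, x⟫ + ((κ - δ) / (1 - δ)) * ⟪Ψ y, y⟫ := by
  intro x y
  classical
  have hd1 : (0:ℝ) < 1 - δ := by linarith
  have hk1 : (0:ℝ) ≤ 1 - κ := by linarith
  set Ka := ContinuousLinearMap.adjoint K' with hKa
  -- pointwise facts about the projections
  have hPP : ∀ j (u : X), P j (P j u) = P j u := by
    intro j u
    have h := congrArg (fun f : X →L[ℝ] X => f u) (hPidem j)
    simpa using h
  have hPO : ∀ j j', j ≠ j' → ∀ u : X, P j (P j' u) = 0 := by
    intro j j' h u
    have h2 := congrArg (fun f : X →L[ℝ] X => f u) (hPorth j j' h)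
    simpa using h2
  have hQQ : ∀ ℓ (u : Y), Q ℓ (Q ℓ u) = Q ℓ u := by
    intro ℓ u
    have h := congrArg (fun f : Y →L[ℝ] Y => f u) (hQidem ℓ)
    simpa using h
  -- the key vectors
  set v : Fin n → Fin m → X := fun ℓ j => P j (Ka (Q ℓ y)) with hv_def
  set g : Fin m → X := fun j => ∑ ℓ, lam ℓ j • v ℓ j with hg_def
  -- key inner product identity
  have key : ∀ (z : Y) (ℓ : Fin n) (j : Fin m) (u : X),
      ⟪P j (Ka (Q ℓ z)), u⟫ = ⟪Q ℓ z, Q ℓ (K' (P j u))⟫ := by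
    intro z ℓ j u
    calc ⟪P j (Ka (Q ℓ z)), u⟫ = ⟪Ka (Q ℓ z), P j u⟫ := hPsa j _ u
      _ = ⟪Q ℓ z, K' (P j u)⟫ := ContinuousLinearMap.adjoint_inner_left K' _ _
      _ = ⟪Q ℓ z, Q ℓ (K' (P j u))⟫ := by
          conv_lhs => rw [← hQQ ℓ z]
          exact hQsa ℓ (Q ℓ z) (K' (P j u))
  -- quadratic forms
  have hΦx : ⟪Φ x, x⟫ = ∑ j, φ j * ‖P j x‖ ^ 2 := by
    rw [hΦ]
    simp only [ContinuousLinearMap.sum_apply, ContinuousLinearMap.smul_apply, sum_inner,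
      real_inner_smul_left]
    refine Finset.sum_congr rfl fun j _ => ?_
    congr 1
    calc ⟪P j x, x⟫ = ⟪P j (P j x), x⟫ := by rw [hPP]
      _ = ⟪P j x, P j x⟫ := hPsa j (P j x) x
      _ = ‖P j x‖ ^ 2 := real_inner_self_eq_norm_sq _
  have hΨy : ⟪Ψ y, y⟫ = ∑ ℓ, ψ ℓ * ‖Q ℓ y‖ ^ 2 := by
    rw [hΨ]
    simp only [ContinuousLinearMap.sum_apply, ContinuousLinearMap.smul_apply, sum_inner,
      real_inner_smul_left]
    refine Finset.sum_congr rfl fun ℓ _ => ?_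
    congr 1
    calc ⟪Q ℓ y, y⟫ = ⟪Q ℓ (Q ℓ y), y⟫ := by rw [hQQ]
      _ = ⟪Q ℓ y, Q ℓ y⟫ := hQsa ℓ (Q ℓ y) y
      _ = ‖Q ℓ y‖ ^ 2 := real_inner_self_eq_norm_sq _
  have hΦnn : 0 ≤ ⟪Φ x, x⟫ := by
    rw [hΦx]
    exact Finset.sum_nonneg fun j _ => mul_nonneg (hφ j).le (by positivity)
  have hΨnn : 0 ≤ ⟪Ψ y, y⟫ := by
    rw [hΨy]
    exact Finset.sum_nonneg fun ℓ _ => mul_nonneg (hψ ℓ).le (by positivity)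
  have hwtot_nonneg : ∀ j ℓ, 0 ≤ wtot j ℓ := by
    intro j ℓ
    rw [hwtot]
    split
    · exact Finset.sum_nonneg fun k _ => by
        split
        · exact (hwpos j ℓ k).le
        · exact le_refl 0
    · exact le_refl 0
  -- expression of Λ
  have hterm : ∀ ℓ j, ⟪Q ℓ (K' (P j x)), y⟫ = ⟪v ℓ j, x⟫ := by
    intro ℓ j
    calc ⟪Q ℓ (K' (P j x)), y⟫ = ⟪y, Q ℓ (K' (P j x))⟫ := real_inner_comm _ _
      _ = ⟪y, Q ℓ (Q ℓ (K' (P j x)))⟫ := by rw [hQQ]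
      _ = ⟪Q ℓ y, Q ℓ (K' (P j x))⟫ := (hQsa ℓ y _).symm
      _ = ⟪v ℓ j, x⟫ := (key y ℓ j x).symm
  have hΛxy : ⟪Λ x, y⟫ = ∑ j, ⟪P j x, g j⟫ := by
    have h1 : ⟪Λ x, y⟫ = ∑ ℓ, ∑ j, lam ℓ j * ⟪Q ℓ (K' (P j x)), y⟫ := by
      rw [hΛ]
      simp only [ContinuousLinearMap.sum_apply, ContinuousLinearMap.smul_apply,
        ContinuousLinearMap.comp_apply, sum_inner, real_inner_smul_left]
    rw [h1, Finset.sum_comm]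
    refine Finset.sum_congr rfl fun j _ => ?_
    have h2 : ⟪P j x, g j⟫ = ∑ ℓ, lam ℓ j * ⟪P j x, v ℓ j⟫ := by
      rw [hg_def]
      simp only [inner_sum, real_inner_smul_right]
    rw [h2]
    refine Finset.sum_congr rfl fun ℓ _ => ?_
    rw [hterm ℓ j]
    congr 1
    calc ⟪v ℓ j, x⟫ = ⟪x, P j (Ka (Q ℓ y))⟫ := real_inner_comm _ _
      _ = ⟪P j x, Ka (Q ℓ y)⟫ := (hPsa j x _).symm
      _ = ⟪P j (P j x), Ka (Q ℓ y)⟫ := by rw [hPP]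
      _ = ⟪P j x, P j (Ka (Q ℓ y))⟫ := hPsa j _ _
  -- orthogonality of the v's across primal blocks
  have hvorth : ∀ (ℓ ℓ' : Fin n) (j j' : Fin m), j ≠ j' → ⟪v ℓ j, v ℓ' j'⟫ = 0 := by
    intro ℓ ℓ' j j' hne
    calc ⟪v ℓ j, v ℓ' j'⟫ = ⟪P j (Ka (Q ℓ y)), P j' (Ka (Q ℓ' y))⟫ := rfl
      _ = ⟪Ka (Q ℓ y), P j (P j' (Ka (Q ℓ' y)))⟫ := hPsa j _ _
      _ = 0 := by rw [hPO j j' hne]; simp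
  -- THE MAIN COMBINATORIAL BOUND
  have hG : ∀ j, ‖g j‖ ^ 2 ≤ ∑ ℓ, (lam ℓ j) ^ 2 * wtot j ℓ * ‖v ℓ j‖ ^ 2 := by
    intro j
    set M : Fin n → Fin n → Y →L[ℝ] Y := fun ℓ k =>
      ((Q ℓ).comp (K'.comp (P j))).comp (Ka.comp (Q k)) with hM_def
    have hMapp : ∀ ℓ k (z : Y), M ℓ k z = Q ℓ (K' (P j (Ka (Q k z)))) := by
      intro ℓ k z
      simp [hM_def, ContinuousLinearMap.comp_apply]
    have hvv : ∀ (z z' : Y) (ℓ k : Fin n),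
        ⟪P j (Ka (Q ℓ z)), P j (Ka (Q k z'))⟫ = ⟪Q ℓ z, M ℓ k z'⟫ := by
      intro z z' ℓ k
      rw [key z ℓ j (P j (Ka (Q k z'))), hPP, hMapp]
    have hMadj : ∀ (ℓ k : Fin n) (a b : Y), ⟪M ℓ k a, b⟫ = ⟪a, M k ℓ b⟫ := by
      intro ℓ k a b
      rw [hMapp, hMapp]
      calc ⟪Q ℓ (K' (P j (Ka (Q k a)))), b⟫
          = ⟪K' (P j (Ka (Q k a))), Q ℓ b⟫ := hQsa ℓ _ b
        _ = ⟪P j (Ka (Q k a)), Ka (Q ℓ b)⟫ :=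
            (ContinuousLinearMap.adjoint_inner_right K' _ _).symm
        _ = ⟪Ka (Q k a), P j (Ka (Q ℓ b))⟫ := hPsa j _ _
        _ = ⟪Q k a, K' (P j (Ka (Q ℓ b)))⟫ := ContinuousLinearMap.adjoint_inner_left K' _ _
        _ = ⟪a, Q k (K' (P j (Ka (Q ℓ b))))⟫ := hQsa k _ _
    have hMsw : ∀ ℓ k, M ℓ k = 0 → M k ℓ = 0 := by
      intro ℓ k h
      ext b
      have h2 : ⟪M k ℓ b, M k ℓ b⟫ = 0 := by
        have h3 := hMadj ℓ k (M k ℓ b) b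
        rw [h] at h3
        simp only [ContinuousLinearMap.zero_apply, inner_zero_left] at h3
        rw [real_inner_comm]
        exact h3.symm
      simpa using inner_self_eq_zero.mp h2
    have hMne : ∀ ℓ k, M ℓ k ≠ 0 ↔ M k ℓ ≠ 0 :=
      fun ℓ k => ⟨fun h h2 => h (hMsw k ℓ h2), fun h h2 => h (hMsw ℓ k h2)⟩
    have hS0 : ∀ ℓ k, (Q ℓ).comp (K'.comp (P j)) = 0 → M ℓ k = 0 := by
      intro ℓ k h
      rw [hM_def]
      simp only [h, ContinuousLinearMap.zero_comp]
    have hrefl : ∀ ℓ, (Q ℓ).comp (K'.comp (P j)) ≠ 0 → M ℓ ℓ ≠ 0 := by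
      intro ℓ hne h0
      apply hne
      have hz : ∀ z : Y, P j (Ka (Q ℓ z)) = 0 := by
        intro z
        have h1 := hvv z z ℓ ℓ
        rw [h0] at h1
        simp only [ContinuousLinearMap.zero_apply, inner_zero_right] at h1
        exact inner_self_eq_zero.mp h1
      ext u
      simp only [ContinuousLinearMap.comp_apply, ContinuousLinearMap.zero_apply]
      have h4 : ⟪Q ℓ (K' (P j u)), Q ℓ (K' (P j u))⟫ = 0 := by
        calc ⟪Q ℓ (K' (P j u)), Q ℓ (K' (P j u))⟫
            = ⟪K' (P j u), Q ℓ (Q ℓ (K' (P j u)))⟫ := hQsa ℓ _ _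
          _ = ⟪K' (P j u), Q ℓ (K' (P j u))⟫ := by rw [hQQ]
          _ = ⟪P j u, Ka (Q ℓ (K' (P j u)))⟫ :=
              (ContinuousLinearMap.adjoint_inner_right K' _ _).symm
          _ = ⟪u, P j (Ka (Q ℓ (K' (P j u))))⟫ := hPsa j _ _
          _ = 0 := by rw [hz (K' (P j u))]; simp
      exact inner_self_eq_zero.mp h4
    -- expansion of ‖g j‖²
    have hgj : ‖g j‖ ^ 2 = ∑ ℓ, ∑ k, lam ℓ j * (lam k j * ⟪v ℓ j, v k j⟫) := by
      rw [← real_inner_self_eq_norm_sq, hg_def]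
      simp only [sum_inner, inner_sum, real_inner_smul_left, real_inner_smul_right,
        Finset.mul_sum]
      refine Finset.sum_congr rfl fun ℓ _ => Finset.sum_congr rfl fun k _ => ?_
      rw [real_inner_comm (v k j) (v ℓ j)]
    -- termwise Young bound
    have hbnd : ∀ ℓ k, lam ℓ j * (lam k j * ⟪v ℓ j, v k j⟫) ≤
        (if M ℓ k ≠ 0 ∧ lam ℓ j ≠ 0 ∧ lam k j ≠ 0 then
          w j ℓ k / 2 * ((lam ℓ j) ^ 2 * ‖v ℓ j‖ ^ 2) else 0) +
        (if M ℓ k ≠ 0 ∧ lam ℓ j ≠ 0 ∧ lam k j ≠ 0 then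
          w j k ℓ / 2 * ((lam k j) ^ 2 * ‖v k j‖ ^ 2) else 0) := by
      intro ℓ k
      by_cases hc : M ℓ k ≠ 0 ∧ lam ℓ j ≠ 0 ∧ lam k j ≠ 0
      · rw [if_pos hc, if_pos hc]
        have habs : lam ℓ j * (lam k j * ⟪v ℓ j, v k j⟫) ≤
            (|lam ℓ j| * ‖v ℓ j‖) * (|lam k j| * ‖v k j‖) := by
          calc lam ℓ j * (lam k j * ⟪v ℓ j, v k j⟫)
              ≤ |lam ℓ j * (lam k j * ⟪v ℓ j, v k j⟫)| := le_abs_self _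
            _ = |lam ℓ j| * (|lam k j| * |⟪v ℓ j, v k j⟫|) := by rw [abs_mul, abs_mul]
            _ ≤ |lam ℓ j| * (|lam k j| * (‖v ℓ j‖ * ‖v k j‖)) :=
                mul_le_mul_of_nonneg_left
                  (mul_le_mul_of_nonneg_left (abs_real_inner_le_norm (v ℓ j) (v k j))
                    (abs_nonneg (lam k j)))
                  (abs_nonneg (lam ℓ j))
            _ = (|lam ℓ j| * ‖v ℓ j‖) * (|lam k j| * ‖v k j‖) := by ring
        have hmul : w j ℓ k * w j k ℓ = 1 := by
          rw [hwsym j ℓ k, one_div, inv_mul_cancel₀ (hwpos j k ℓ).ne']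
        have hy := aux_young (a := |lam ℓ j| * ‖v ℓ j‖) (b := |lam k j| * ‖v k j‖)
          (hwpos j k ℓ) hmul (by positivity) (by positivity)
        have ha2 : (|lam ℓ j| * ‖v ℓ j‖) ^ 2 = (lam ℓ j) ^ 2 * ‖v ℓ j‖ ^ 2 := by
          rw [mul_pow, sq_abs]
        have hb2 : (|lam k j| * ‖v k j‖) ^ 2 = (lam k j) ^ 2 * ‖v k j‖ ^ 2 := by
          rw [mul_pow, sq_abs]
        rw [ha2, hb2] at hy
        exact le_trans habs hy
      · rw [if_neg hc, if_neg hc]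
        by_cases hM0 : M ℓ k = 0
        · have h0 : ⟪v ℓ j, v k j⟫ = 0 := by
            have := hvv y y ℓ k
            rw [hM0] at this
            simp only [ContinuousLinearMap.zero_apply, inner_zero_right] at this
            exact this
          rw [h0]
          simp
        · have : lam ℓ j = 0 ∨ lam k j = 0 := by tauto
          rcases this with h | h <;> rw [h] <;> simp
    -- sum the bound
    have hsum1 : ‖g j‖ ^ 2 ≤
        ∑ ℓ, ∑ k, ((if M ℓ k ≠ 0 ∧ lam ℓ j ≠ 0 ∧ lam k j ≠ 0 then
          w j ℓ k / 2 * ((lam ℓ j) ^ 2 * ‖v ℓ j‖ ^ 2) else 0) +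
        (if M ℓ k ≠ 0 ∧ lam ℓ j ≠ 0 ∧ lam k j ≠ 0 then
          w j k ℓ / 2 * ((lam k j) ^ 2 * ‖v k j‖ ^ 2) else 0)) := by
      rw [hgj]
      exact Finset.sum_le_sum fun ℓ _ => Finset.sum_le_sum fun k _ => hbnd ℓ k
    have hcondsym : ∀ ℓ k, (M ℓ k ≠ 0 ∧ lam ℓ j ≠ 0 ∧ lam k j ≠ 0) ↔
        (M k ℓ ≠ 0 ∧ lam k j ≠ 0 ∧ lam ℓ j ≠ 0) := by
      intro ℓ k
      rw [hMne ℓ k]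
      tauto
    have hsum2 : (∑ ℓ, ∑ k, ((if M ℓ k ≠ 0 ∧ lam ℓ j ≠ 0 ∧ lam k j ≠ 0 then
          w j ℓ k / 2 * ((lam ℓ j) ^ 2 * ‖v ℓ j‖ ^ 2) else 0) +
        (if M ℓ k ≠ 0 ∧ lam ℓ j ≠ 0 ∧ lam k j ≠ 0 then
          w j k ℓ / 2 * ((lam k j) ^ 2 * ‖v k j‖ ^ 2) else 0))) =
        ∑ ℓ, ∑ k, (if M ℓ k ≠ 0 ∧ lam ℓ j ≠ 0 ∧ lam k j ≠ 0 then
          w j ℓ k * ((lam ℓ j) ^ 2 * ‖v ℓ j‖ ^ 2) else 0) := by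
      simp only [Finset.sum_add_distrib]
      have hswap : (∑ ℓ, ∑ k, (if M ℓ k ≠ 0 ∧ lam ℓ j ≠ 0 ∧ lam k j ≠ 0 then
          w j k ℓ / 2 * ((lam k j) ^ 2 * ‖v k j‖ ^ 2) else 0)) =
          ∑ ℓ, ∑ k, (if M ℓ k ≠ 0 ∧ lam ℓ j ≠ 0 ∧ lam k j ≠ 0 then
          w j ℓ k / 2 * ((lam ℓ j) ^ 2 * ‖v ℓ j‖ ^ 2) else 0) := by
        rw [Finset.sum_comm]
        refine Finset.sum_congr rfl fun ℓ _ => Finset.sum_congr rfl fun k _ => ?_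
        exact if_congr (hcondsym k ℓ) rfl rfl
      rw [hswap, ← Finset.sum_add_distrib]
      refine Finset.sum_congr rfl fun ℓ _ => ?_
      rw [← Finset.sum_add_distrib]
      refine Finset.sum_congr rfl fun k _ => ?_
      by_cases hc : M ℓ k ≠ 0 ∧ lam ℓ j ≠ 0 ∧ lam k j ≠ 0
      · simp only [if_pos hc]; ring
      · simp only [if_neg hc]; ring
    -- identify with wtot
    have hfinal : ∀ ℓ, (∑ k, (if M ℓ k ≠ 0 ∧ lam ℓ j ≠ 0 ∧ lam k j ≠ 0 then
          w j ℓ k * ((lam ℓ j) ^ 2 * ‖v ℓ j‖ ^ 2) else 0)) ≤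
        (lam ℓ j) ^ 2 * wtot j ℓ * ‖v ℓ j‖ ^ 2 := by
      intro ℓ
      by_cases hl : lam ℓ j = 0
      · simp [hl]
      by_cases hs : (Q ℓ).comp (K'.comp (P j)) = 0
      · have hz : ∀ k, ¬(M ℓ k ≠ 0 ∧ lam ℓ j ≠ 0 ∧ lam k j ≠ 0) := by
          intro k hc
          exact hc.1 (hS0 ℓ k hs)
        have hzero : (∑ k, (if M ℓ k ≠ 0 ∧ lam ℓ j ≠ 0 ∧ lam k j ≠ 0 then
            w j ℓ k * ((lam ℓ j) ^ 2 * ‖v ℓ j‖ ^ 2) else 0)) = 0 :=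
          Finset.sum_eq_zero fun k _ => if_neg (hz k)
        rw [hzero]
        have := hwtot_nonneg j ℓ
        positivity
      · have heq : (∑ k, (if M ℓ k ≠ 0 ∧ lam ℓ j ≠ 0 ∧ lam k j ≠ 0 then
            w j ℓ k * ((lam ℓ j) ^ 2 * ‖v ℓ j‖ ^ 2) else 0)) =
            (∑ k, (if M ℓ k ≠ 0 ∧ lam k j ≠ 0 then w j ℓ k else 0)) *
              ((lam ℓ j) ^ 2 * ‖v ℓ j‖ ^ 2) := by
          rw [Finset.sum_mul]
          refine Finset.sum_congr rfl fun k _ => ?_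
          by_cases hc : M ℓ k ≠ 0 ∧ lam k j ≠ 0
          · rw [if_pos hc, if_pos ⟨hc.1, hl, hc.2⟩]
          · rw [if_neg hc, if_neg (by tauto), zero_mul]
        rw [heq]
        have hw : wtot j ℓ = ∑ k, (if M ℓ k ≠ 0 ∧ lam k j ≠ 0 then w j ℓ k else 0) := by
          rw [hwtot j ℓ, if_pos hs]
        rw [hw]
        apply le_of_eq
        ring
    calc ‖g j‖ ^ 2 ≤ _ := hsum1
      _ = _ := hsum2
      _ ≤ ∑ ℓ, (lam ℓ j) ^ 2 * wtot j ℓ * ‖v ℓ j‖ ^ 2 :=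
          Finset.sum_le_sum fun ℓ _ => hfinal ℓ
  -- the per-dual-block operator bound
  have hU : ∀ ℓ, (∑ j, (lam ℓ j) ^ 2 * (wtot j ℓ / φ j) * ‖v ℓ j‖ ^ 2) ≤
      (1 - κ) * ψ ℓ * ‖Q ℓ y‖ ^ 2 := by
    intro ℓ
    have hcondl := ge_iff_le.mp (hcond ℓ)
    set T : X →L[ℝ] Y := ∑ j : Fin m, (|lam ℓ j| * Real.sqrt (wtot j ℓ / φ j)) •
        ((Q ℓ).comp (K'.comp (P j))) with hT_def
    set u : X := ∑ j, (|lam ℓ j| * Real.sqrt (wtot j ℓ / φ j)) • v ℓ j with hu_def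
    have hc2 : ∀ j, (|lam ℓ j| * Real.sqrt (wtot j ℓ / φ j)) ^ 2 =
        (lam ℓ j) ^ 2 * (wtot j ℓ / φ j) := by
      intro j
      rw [mul_pow, sq_abs, Real.sq_sqrt (div_nonneg (hwtot_nonneg j ℓ) (hφ j).le)]
    have husq : ‖u‖ ^ 2 = ∑ j, (|lam ℓ j| * Real.sqrt (wtot j ℓ / φ j)) ^ 2 * ‖v ℓ j‖ ^ 2 := by
      rw [← real_inner_self_eq_norm_sq, hu_def]
      rw [sum_inner]
      refine Finset.sum_congr rfl fun j _ => ?_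
      rw [real_inner_smul_left, inner_sum]
      have hsingle : (∑ k, ⟪v ℓ j, (|lam ℓ k| * Real.sqrt (wtot k ℓ / φ k)) • v ℓ k⟫) =
          (|lam ℓ j| * Real.sqrt (wtot j ℓ / φ j)) * ⟪v ℓ j, v ℓ j⟫ := by
        rw [Finset.sum_eq_single_of_mem j (Finset.mem_univ j)]
        · rw [real_inner_smul_right]
        · intro k _ hk
          rw [real_inner_smul_right, hvorth ℓ ℓ j k (Ne.symm hk), mul_zero]
      rw [hsingle, real_inner_self_eq_norm_sq]
      ring
    have hTu : ⟪u, u⟫ = ⟪Q ℓ y, T u⟫ := by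
      conv_lhs => rw [hu_def]
      rw [sum_inner]
      have hT : T u = ∑ j, (|lam ℓ j| * Real.sqrt (wtot j ℓ / φ j)) • (Q ℓ (K' (P j u))) := by
        rw [hT_def]
        simp only [ContinuousLinearMap.sum_apply, ContinuousLinearMap.smul_apply,
          ContinuousLinearMap.comp_apply]
      rw [hT, inner_sum]
      refine Finset.sum_congr rfl fun j _ => ?_
      rw [real_inner_smul_left, real_inner_smul_right]
      congr 1
      exact key y ℓ j u
    have hunorm : ‖u‖ ≤ ‖T‖ * ‖Q ℓ y‖ := by
      by_cases hu0 : ‖u‖ = 0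
      · rw [hu0]; positivity
      · have h1 : ‖u‖ * ‖u‖ ≤ (‖T‖ * ‖Q ℓ y‖) * ‖u‖ := by
          calc ‖u‖ * ‖u‖ = ⟪u, u⟫ := (real_inner_self_eq_norm_mul_norm u).symm
            _ = ⟪Q ℓ y, T u⟫ := hTu
            _ ≤ ‖Q ℓ y‖ * ‖T u‖ := real_inner_le_norm _ _
            _ ≤ ‖Q ℓ y‖ * (‖T‖ * ‖u‖) :=
                mul_le_mul_of_nonneg_left (T.le_opNorm u) (norm_nonneg _)
            _ = (‖T‖ * ‖Q ℓ y‖) * ‖u‖ := by ring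
        exact le_of_mul_le_mul_right h1 (lt_of_le_of_ne (norm_nonneg u) (Ne.symm hu0))
    have hT2 : ‖T‖ ^ 2 ≤ (1 - κ) * ψ ℓ := hcondl
    have husq2 : ‖u‖ ^ 2 ≤ (1 - κ) * ψ ℓ * ‖Q ℓ y‖ ^ 2 := by
      have h2 : ‖u‖ ^ 2 ≤ (‖T‖ * ‖Q ℓ y‖) ^ 2 := pow_le_pow_left₀ (norm_nonneg u) hunorm 2
      calc ‖u‖ ^ 2 ≤ (‖T‖ * ‖Q ℓ y‖) ^ 2 := h2
        _ = ‖T‖ ^ 2 * ‖Q ℓ y‖ ^ 2 := by ring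
        _ ≤ (1 - κ) * ψ ℓ * ‖Q ℓ y‖ ^ 2 := mul_le_mul_of_nonneg_right hT2 (sq_nonneg _)
    calc (∑ j, (lam ℓ j) ^ 2 * (wtot j ℓ / φ j) * ‖v ℓ j‖ ^ 2)
        = ∑ j, (|lam ℓ j| * Real.sqrt (wtot j ℓ / φ j)) ^ 2 * ‖v ℓ j‖ ^ 2 := by
          refine Finset.sum_congr rfl fun j _ => ?_
          rw [hc2 j]
      _ = ‖u‖ ^ 2 := husq.symm
      _ ≤ (1 - κ) * ψ ℓ * ‖Q ℓ y‖ ^ 2 := husq2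
  -- summing up: the Ψ-side bound
  have hGsum : (∑ j, ‖g j‖ ^ 2 / φ j) ≤ (1 - κ) * ⟪Ψ y, y⟫ := by
    have h1 : (∑ j, ‖g j‖ ^ 2 / φ j) ≤
        ∑ j, ∑ ℓ, (lam ℓ j) ^ 2 * (wtot j ℓ / φ j) * ‖v ℓ j‖ ^ 2 := by
      refine Finset.sum_le_sum fun j _ => ?_
      have h2 : ‖g j‖ ^ 2 / φ j ≤ (∑ ℓ, (lam ℓ j) ^ 2 * wtot j ℓ * ‖v ℓ j‖ ^ 2) / φ j := by
        gcongr
        · exact (hφ j).le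
        · exact hG j
      have h3 : (∑ ℓ, (lam ℓ j) ^ 2 * wtot j ℓ * ‖v ℓ j‖ ^ 2) / φ j =
          ∑ ℓ, (lam ℓ j) ^ 2 * (wtot j ℓ / φ j) * ‖v ℓ j‖ ^ 2 := by
        rw [Finset.sum_div]
        exact Finset.sum_congr rfl fun ℓ _ => by ring
      rw [← h3]
      exact h2
    have h4 : (∑ j, ∑ ℓ, (lam ℓ j) ^ 2 * (wtot j ℓ / φ j) * ‖v ℓ j‖ ^ 2) ≤
        ∑ ℓ, (1 - κ) * ψ ℓ * ‖Q ℓ y‖ ^ 2 := by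
      rw [Finset.sum_comm]
      exact Finset.sum_le_sum fun ℓ _ => hU ℓ
    have h5 : (∑ ℓ, (1 - κ) * ψ ℓ * ‖Q ℓ y‖ ^ 2) = (1 - κ) * ⟪Ψ y, y⟫ := by
      rw [hΨy, Finset.mul_sum]
      exact Finset.sum_congr rfl fun ℓ _ => by ring
    linarith
  -- Cauchy-Schwarz over primal blocks
  have hCS : ⟪Λ x, y⟫ ≤ Real.sqrt ⟪Φ x, x⟫ * Real.sqrt ((1 - κ) * ⟪Ψ y, y⟫) := by
    have hstep1 : ⟪Λ x, y⟫ ≤ ∑ j, (Real.sqrt (φ j) * ‖P j x‖) * (‖g j‖ / Real.sqrt (φ j)) := by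
      rw [hΛxy]
      refine Finset.sum_le_sum fun j _ => ?_
      have h0 : Real.sqrt (φ j) ≠ 0 := (Real.sqrt_pos.mpr (hφ j)).ne'
      have heq : (Real.sqrt (φ j) * ‖P j x‖) * (‖g j‖ / Real.sqrt (φ j)) =
          ‖P j x‖ * ‖g j‖ := by
        field_simp
      rw [heq]
      exact real_inner_le_norm _ _
    have hcs := Real.sum_mul_le_sqrt_mul_sqrt Finset.univ
      (fun j => Real.sqrt (φ j) * ‖P j x‖) (fun j => ‖g j‖ / Real.sqrt (φ j))
    have hF2 : (∑ j, (Real.sqrt (φ j) * ‖P j x‖) ^ 2) = ⟪Φ x, x⟫ := by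
      rw [hΦx]
      refine Finset.sum_congr rfl fun j _ => ?_
      rw [mul_pow, Real.sq_sqrt (hφ j).le]
    have hG2 : (∑ j, (‖g j‖ / Real.sqrt (φ j)) ^ 2) = ∑ j, ‖g j‖ ^ 2 / φ j := by
      refine Finset.sum_congr rfl fun j _ => ?_
      rw [div_pow, Real.sq_sqrt (hφ j).le]
    rw [hF2, hG2] at hcs
    have hmono : Real.sqrt (∑ j, ‖g j‖ ^ 2 / φ j) ≤ Real.sqrt ((1 - κ) * ⟪Ψ y, y⟫) :=
      Real.sqrt_le_sqrt hGsum
    calc ⟪Λ x, y⟫ ≤ _ := hstep1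
      _ ≤ Real.sqrt ⟪Φ x, x⟫ * Real.sqrt (∑ j, ‖g j‖ ^ 2 / φ j) := hcs
      _ ≤ Real.sqrt ⟪Φ x, x⟫ * Real.sqrt ((1 - κ) * ⟪Ψ y, y⟫) :=
          mul_le_mul_of_nonneg_left hmono (Real.sqrt_nonneg _)
  -- final assembly
  have hAM := aux_amgm ⟪Φ x, x⟫ ((1 - κ) * ⟪Ψ y, y⟫) δ hΦnn (mul_nonneg hk1 hΨnn) hd1
  have h2L : 2 * ⟪Λ x, y⟫ ≤ (1 - δ) * ⟪Φ x, x⟫ + ((1 - κ) * ⟪Ψ y, y⟫) / (1 - δ) := by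
    linarith
  have hsplit : ((κ - δ) / (1 - δ)) * ⟪Ψ y, y⟫ + ((1 - κ) * ⟪Ψ y, y⟫) / (1 - δ) = ⟪Ψ y, y⟫ := by
    field_simp
    ring
  linarith
end

section
/- For all real numbers p ∈ [1,2], ζ > 0 and s, r ≥ 0, one has s·r ≤ (p − 1)·ζ·s² + s^{2−p}·r^p/(p^p·ζ^{p−1}). -/
/-- Young-type inequality with exponent `p ∈ [1,2]`:
`s·r ≤ (p-1)·ζ·s² + s^(2-p)·r^p/(p^p·ζ^(p-1))` (real powers). -/
theorem stmt6 (p ζ s r : ℝ) (hp1 : 1 ≤ p) (hp2 : p ≤ 2) (hζ : 0 < ζ)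
    (hs : 0 ≤ s) (hr : 0 ≤ r) :
    s * r ≤ (p - 1) * ζ * s ^ 2 + s ^ (2 - p) * r ^ p / (p ^ p * ζ ^ (p - 1)) := by
  rcases eq_or_lt_of_le hp1 with h1 | h1
  · -- p = 1
    subst h1
    norm_num [Real.rpow_one, Real.one_rpow, Real.rpow_zero]
  · -- 1 < p
    have hp0 : (0:ℝ) < p := lt_trans one_pos h1
    have hp0' : p ≠ 0 := hp0.ne'
    have hp1' : p - 1 ≠ 0 := sub_ne_zero.2 h1.ne'
    set q : ℝ := p / (p - 1) with hq
    have hpq : p.HolderConjugate q := (Real.holderConjugate_iff_eq_conjExponent h1).2 hq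
    have hpζ : (0:ℝ) < p * ζ := mul_pos hp0 hζ
    set c : ℝ := (p * ζ) ^ ((p - 1) / p) with hc
    have hcpos : 0 < c := Real.rpow_pos_of_pos hpζ _
    set a : ℝ := s ^ ((2 - p) / p) * r / c with ha
    set b : ℝ := s ^ (2 * (p - 1) / p) * c with hb
    have ha0 : 0 ≤ a := by positivity
    have hb0 : 0 ≤ b := by positivity
    have key := Real.young_inequality_of_nonneg ha0 hb0 hpq
    have hsum : (2 - p) / p + 2 * (p - 1) / p = 1 := by field_simp; ring
    have hab : a * b = s * r := by
      have h0 : s ^ ((2 - p) / p) * s ^ (2 * (p - 1) / p) = s := by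
        rw [← Real.rpow_add' hs (by rw [hsum]; norm_num), hsum, Real.rpow_one]
      rw [ha, hb]
      field_simp
      linear_combination r * h0
    have hap : a ^ p / p = s ^ (2 - p) * r ^ p / (p ^ p * ζ ^ (p - 1)) := by
      have h1p : (s ^ ((2 - p) / p)) ^ p = s ^ (2 - p) := by
        rw [← Real.rpow_mul hs, div_mul_cancel₀ _ hp0']
      have h2p : c ^ p = p ^ (p - 1) * ζ ^ (p - 1) := by
        rw [hc, ← Real.rpow_mul hpζ.le, div_mul_cancel₀ _ hp0',
          Real.mul_rpow hp0.le hζ.le]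
      have hpp : p ^ p = p ^ (p - 1) * p := by
        have h := Real.rpow_add hp0 (p - 1) 1
        simpa using h
      rw [ha, Real.div_rpow (by positivity) hcpos.le,
        Real.mul_rpow (Real.rpow_nonneg hs _) hr, h1p, h2p, hpp]
      rw [div_div]
      ring_nf
    have hbq : b ^ q / q = (p - 1) * ζ * s ^ 2 := by
      have h1q : (s ^ (2 * (p - 1) / p)) ^ q = s ^ 2 := by
        rw [← Real.rpow_mul hs, show 2 * (p - 1) / p * q = ((2:ℕ):ℝ) by
          rw [hq]; field_simp; norm_num, Real.rpow_natCast]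
      have h2q : c ^ q = p * ζ := by
        rw [hc, ← Real.rpow_mul hpζ.le, show (p - 1) / p * q = 1 by
          rw [hq]; field_simp, Real.rpow_one]
      rw [hb, Real.mul_rpow (Real.rpow_nonneg hs _) hcpos.le, h1q, h2q, hq]
      field_simp
    rw [hab, hap, hbq] at key
    linarith
end

section
/- For every ν ∈ A(x^{i+1}) and ξ ∈ B(y^{i+1}), writing Δx := x^{i+1} − x^i, Δy := y^{i+1} − y^i, dx := x^{i+1} − x*, dy := y^{i+1} − y*, one has (1/2)·q(Δx,Δy) + (1/2)·[q(dx,dy) − q'(dx,dy)] + ⟨ΦT(ν + ∇K(x^i)* y^{i+1}), dx⟩ + ⟨ΨΣ̂(ξ − K(x̄) + ∇K(x^i)Ω Δx), dy⟩ ≥ (δ/2)·⟨ΦΔx, Δx⟩ − (L/2)·‖Ω + id_X‖²·‖P(ΨΣ̂ dy)‖·‖Δx‖² + ((κ−δ)/(2(1−δ)))·⟨ΨΔy, Δy⟩ + (1/2)·Σ_j [φ_j − φ'_j + 2·χ_S(j)·φ_j τ_j (γ_{G,j} + γ_{K,j})]·‖P_j dx‖² + (1/2)·Σ_ℓ [ψ_ℓ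 − ψ'_ℓ + 2·χ_V(ℓ)·ψ_ℓ σ_ℓ γ_{F,ℓ}]·‖Q_ℓ dy‖² + D^K + D^Λ, where χ_S, χ_V denote the indicator functions of S and V, D^Λ := ⟨(Λ' − Λ)dx, dy⟩ + ⟨ΦT ∇K(x^i)* dy, dx⟩ − ⟨ΨΣ̂ ∇K(x^i) dx, dy⟩, and D^K := ⟨ΦT [∇K(x^i) − ∇K(x*)]* y*, dx⟩ − ⟨ΦT Γ_K dx, dx⟩ + ⟨ΨΣ̂ (K(x*) − K(x^i) − ∇K(x^i)(x* − x^i)), dy⟩. -/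
open scoped RealInnerProductSpace
set_option linter.unusedSectionVars false
set_option maxHeartbeats 1000000
open ContinuousLinearMap Finset Set

section aux
variable {H : Type*} [NormedAddCommGroup H] [InnerProductSpace ℝ H]
variable {ι : Type*} [DecidableEq ι]

lemma aux_comp_sum (P : ι → H →L[ℝ] H)
    (hmul : ∀ j k, (P j).comp (P k) = if j = k then P j else 0)
    (s t : Finset ι) (c d : ι → ℝ) :
    (∑ j ∈ s, c j • P j).comp (∑ k ∈ t, d k • P k) = ∑ j ∈ s ∩ t, (c j * d j) • P j := by
  rw [ContinuousLinearMap.finset_sum_comp]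
  calc ∑ j ∈ s, (c j • P j).comp (∑ k ∈ t, d k • P k)
      = ∑ j ∈ s, ∑ k ∈ t, (c j * d k) • ((P j).comp (P k)) := by
        refine Finset.sum_congr rfl fun j _ => ?_
        rw [ContinuousLinearMap.comp_finset_sum]
        refine Finset.sum_congr rfl fun k _ => ?_
        rw [ContinuousLinearMap.smul_comp, ContinuousLinearMap.comp_smul, smul_smul]
    _ = ∑ j ∈ s, if j ∈ t then (c j * d j) • P j else 0 := by
        refine Finset.sum_congr rfl fun j _ => ?_
        rw [← Finset.sum_ite_eq t j (fun k => (c j * d k) • P j)]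
        refine Finset.sum_congr rfl fun k _ => ?_
        rw [hmul]
        split_ifs with h
        · subst h; rfl
        · simp
    _ = ∑ j ∈ s ∩ t, (c j * d j) • P j := by
        rw [Finset.sum_ite_mem]

lemma aux_inner_sum (P : ι → H →L[ℝ] H)
    (hsa : ∀ j, ∀ u v : H, ⟪P j u, v⟫ = ⟪u, P j v⟫)
    (hidem : ∀ j, (P j).comp (P j) = P j)
    (s : Finset ι) (c : ι → ℝ) (u v : H) :
    ⟪(∑ j ∈ s, c j • P j) u, v⟫ = ∑ j ∈ s, c j * ⟪P j u, P j v⟫ := by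
  rw [ContinuousLinearMap.sum_apply, sum_inner]
  refine Finset.sum_congr rfl fun j _ => ?_
  rw [ContinuousLinearMap.smul_apply, real_inner_smul_left]
  congr 1
  have h1 : P j u = P j (P j u) := by
    conv_lhs => rw [← hidem j]
    rfl
  have h2 : (⟪P j u, v⟫ : ℝ) = ⟪P j (P j u), v⟫ := by rw [← h1]
  rw [h2, hsa j]

lemma aux_inner_self_sum (P : ι → H →L[ℝ] H)
    (hsa : ∀ j, ∀ u v : H, ⟪P j u, v⟫ = ⟪u, P j v⟫)
    (hidem : ∀ j, (P j).comp (P j) = P j)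
    (s : Finset ι) (c : ι → ℝ) (u : H) :
    ⟪(∑ j ∈ s, c j • P j) u, u⟫ = ∑ j ∈ s, c j * ‖P j u‖ ^ 2 := by
  rw [aux_inner_sum P hsa hidem]
  exact Finset.sum_congr rfl fun j _ => by rw [real_inner_self_eq_norm_sq]

lemma aux_sa (P : ι → H →L[ℝ] H)
    (hsa : ∀ j, ∀ u v : H, ⟪P j u, v⟫ = ⟪u, P j v⟫)
    (hidem : ∀ j, (P j).comp (P j) = P j)
    (s : Finset ι) (c : ι → ℝ) (u v : H) :
    ⟪(∑ j ∈ s, c j • P j) u, v⟫ = ⟪u, (∑ j ∈ s, c j • P j) v⟫ := by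
  rw [aux_inner_sum P hsa hidem, real_inner_comm ((∑ j ∈ s, c j • P j) v) u,
    aux_inner_sum P hsa hidem]
  exact Finset.sum_congr rfl fun j _ => by rw [real_inner_comm]

end aux
open Set

section taylor
variable {X Y : Type*} [NormedAddCommGroup X] [NormedSpace ℝ X]
  [NormedAddCommGroup Y] [NormedSpace ℝ Y]

lemma aux_line_deriv (𝒳 : Set X) (hconv : Convex ℝ 𝒳) (K : X → Y) (DK : X → X →L[ℝ] Y)
    (hdiff : ∀ x ∈ 𝒳, HasFDerivWithinAt K (DK x) 𝒳 x)
    {a b : X} (ha : a ∈ 𝒳) (hb : b ∈ 𝒳) {t : ℝ} (ht : t ∈ Icc (0:ℝ) 1) :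
    HasDerivWithinAt (fun s : ℝ => K (a + s • (b - a))) (DK (a + t • (b - a)) (b - a))
      (Icc (0:ℝ) 1) t := by
  have hmaps : MapsTo (fun s : ℝ => a + s • (b - a)) (Icc (0:ℝ) 1) 𝒳 := by
    intro s hs
    have := hconv ha hb (by linarith [hs.2] : (0:ℝ) ≤ 1 - s) hs.1 (by ring)
    convert this using 1
    simp only [smul_sub]
    module
  have hc : HasDerivWithinAt (fun s : ℝ => a + s • (b - a)) (b - a) (Icc (0:ℝ) 1) t := by
    simpa using ((hasDerivAt_id t).smul_const (b - a)).hasDerivWithinAt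
  exact (hdiff _ (hmaps ht)).comp_hasDerivWithinAt t hc hmaps

lemma taylor_quad (𝒳 : Set X) (hconv : Convex ℝ 𝒳) (K : X → Y) (DK : X → X →L[ℝ] Y)
    (hdiff : ∀ x ∈ 𝒳, HasFDerivWithinAt K (DK x) 𝒳 x) (L : ℝ)
    (hLip : ∀ x ∈ 𝒳, ∀ x' ∈ 𝒳, ‖DK x - DK x'‖ ≤ L * ‖x - x'‖)
    {a b : X} (ha : a ∈ 𝒳) (hb : b ∈ 𝒳) :
    ‖K b - K a - DK a (b - a)‖ ≤ L / 2 * ‖b - a‖ ^ 2 := by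
  set v := b - a with hv
  set g : ℝ → Y := fun t => K (a + t • v) - K a - t • (DK a v) with hg
  have hg' : ∀ t ∈ Icc (0:ℝ) 1,
      HasDerivWithinAt g (DK (a + t • v) v - DK a v) (Icc (0:ℝ) 1) t := by
    intro t ht
    have h1 := aux_line_deriv 𝒳 hconv K DK hdiff ha hb ht
    have h2 : HasDerivWithinAt (fun s : ℝ => K a + s • (DK a v)) (DK a v) (Icc (0:ℝ) 1) t := by
      simpa using ((hasDerivAt_id t).smul_const (DK a v)).hasDerivWithinAt
    have := h1.sub h2
    convert this using 1
    ext s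
    simp [hg]
    abel
  have hmaps : ∀ t ∈ Icc (0:ℝ) 1, a + t • v ∈ 𝒳 := by
    intro s hs
    have := hconv ha hb (by linarith [hs.2] : (0:ℝ) ≤ 1 - s) hs.1 (by ring)
    convert this using 1
    simp only [hv, smul_sub]
    module
  -- fencing
  have hcont : ContinuousOn g (Icc (0:ℝ) 1) := fun t ht => (hg' t ht).continuousWithinAt
  have hf' : ∀ t ∈ Ico (0:ℝ) 1,
      HasDerivWithinAt g (DK (a + t • v) v - DK a v) (Ici t) t := fun t ht =>
    ((hg' t (Ico_subset_Icc_self ht)).mono_of_mem_nhdsWithin (Icc_mem_nhdsGE_of_mem ht))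
  have hB : ∀ t : ℝ, HasDerivAt (fun t : ℝ => L / 2 * ‖v‖ ^ 2 * t ^ 2)
      (L * ‖v‖ ^ 2 * t) t := by
    intro t
    have := (hasDerivAt_pow 2 t).const_mul (L / 2 * ‖v‖ ^ 2)
    exact this.congr_deriv (by ring)
  have bound : ∀ t ∈ Ico (0:ℝ) 1, ‖DK (a + t • v) v - DK a v‖ ≤ L * ‖v‖ ^ 2 * t := by
    intro t ht
    have h1 : DK (a + t • v) v - DK a v = (DK (a + t • v) - DK a) v := by
      simp [ContinuousLinearMap.sub_apply]
    rw [h1]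
    calc ‖(DK (a + t • v) - DK a) v‖ ≤ ‖DK (a + t • v) - DK a‖ * ‖v‖ :=
          (DK (a + t • v) - DK a).le_opNorm v
      _ ≤ (L * ‖a + t • v - a‖) * ‖v‖ := by
          apply mul_le_mul_of_nonneg_right _ (norm_nonneg v)
          exact hLip _ (hmaps t (Ico_subset_Icc_self ht)) a ha
      _ = L * ‖v‖ ^ 2 * t := by
          have : a + t • v - a = t • v := by abel
          rw [this, norm_smul, Real.norm_eq_abs, abs_of_nonneg ht.1]
          ring
  have key := image_norm_le_of_norm_deriv_right_le_deriv_boundary hcont hf'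
    (by simp [hg] : ‖g 0‖ ≤ L / 2 * ‖v‖ ^ 2 * (0:ℝ) ^ 2) hB bound
    (right_mem_Icc.2 zero_le_one)
  have hg1 : g 1 = K b - K a - DK a v := by simp [hg, hv]
  calc ‖K b - K a - DK a v‖ = ‖g 1‖ := by rw [hg1]
    _ ≤ L / 2 * ‖v‖ ^ 2 * (1:ℝ) ^ 2 := key
    _ = L / 2 * ‖v‖ ^ 2 := by ring

lemma affine_part (𝒳 : Set X) (hconv : Convex ℝ 𝒳) (K : X → Y) (DK : X → X →L[ℝ] Y)
    (hdiff : ∀ x ∈ 𝒳, HasFDerivWithinAt K (DK x) 𝒳 x) (R : Y →L[ℝ] Y)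
    (hconst : ∀ x ∈ 𝒳, ∀ x' ∈ 𝒳, R.comp (DK x) = R.comp (DK x'))
    {a b : X} (ha : a ∈ 𝒳) (hb : b ∈ 𝒳) :
    R (K b - K a - DK a (b - a)) = 0 := by
  set v := b - a with hv
  set h : ℝ → Y := fun t => R (K (a + t • v)) - t • (R (DK a v)) with hh
  have hh' : ∀ t ∈ Icc (0:ℝ) 1, HasDerivWithinAt h 0 (Icc (0:ℝ) 1) t := by
    intro t ht
    have hmaps : a + t • v ∈ 𝒳 := by
      have := hconv ha hb (by linarith [ht.2] : (0:ℝ) ≤ 1 - t) ht.1 (by ring)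
      convert this using 1
      simp only [hv, smul_sub]
      module
    have h1 := (aux_line_deriv 𝒳 hconv K DK hdiff ha hb ht)
    have h2 : HasDerivWithinAt (fun s : ℝ => R (K (a + s • v)))
        (R (DK (a + t • v) v)) (Icc (0:ℝ) 1) t := (R.hasFDerivAt.comp_hasDerivWithinAt t h1)
    have h3 : HasDerivWithinAt (fun s : ℝ => s • (R (DK a v))) (R (DK a v)) (Icc (0:ℝ) 1) t := by
      simpa using ((hasDerivAt_id t).smul_const (R (DK a v))).hasDerivWithinAt
    have h4 := h2.sub h3
    have h5 : R (DK (a + t • v) v) - R (DK a v) = 0 := by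
      have := hconst _ hmaps a ha
      have h6 : R (DK (a + t • v) v) = (R.comp (DK (a + t • v))) v := rfl
      have h7 : R (DK a v) = (R.comp (DK a)) v := rfl
      rw [h6, h7, this, sub_self]
    rwa [h5] at h4
  have hzero : ∀ t ∈ Icc (0:ℝ) 1, ‖h t - h 0‖ ≤ 0 * (t - 0) :=
    norm_image_sub_le_of_norm_deriv_le_segment' hh' (fun t _ => by simp)
  have := hzero 1 (right_mem_Icc.2 zero_le_one)
  simp only [zero_mul, norm_le_zero_iff, sub_eq_zero] at this
  have h1 : h 1 = R (K b) - R (DK a v) := by simp [hh, hv]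
  have h0 : h 0 = R (K a) := by simp [hh]
  rw [h1, h0] at this
  have : R (K b) - R (DK a v) - R (K a) = 0 := by rw [this]; abel
  calc R (K b - K a - DK a v) = R (K b) - R (K a) - R (DK a v) := by
        simp [map_sub]
    _ = 0 := by rw [← this]; abel

end taylor
/-- The fundamental estimate (Lemma 3.2): lower bound on
`½‖Δu‖²_{ZM} + ½(‖du‖²_{ZM} - ‖du‖²_{Z'M'}) + ⟨W H̃(u⁺), du⟩_{ZW}`. -/
theorem stmt7 {X Y : Type*}
    [NormedAddCommGroup X] [InnerProductSpace ℝ X] [CompleteSpace X]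
    [NormedAddCommGroup Y] [InnerProductSpace ℝ Y] [CompleteSpace Y]
    {m n : ℕ}
    (P : Fin m → X →L[ℝ] X) (Q : Fin n → Y →L[ℝ] Y)
    (hPsa : ∀ j, ∀ u v : X, ⟪P j u, v⟫ = ⟪u, P j v⟫)
    (hPidem : ∀ j, (P j).comp (P j) = P j)
    (hPorth : ∀ j j', j ≠ j' → (P j).comp (P j') = 0)
    (hQsa : ∀ ℓ, ∀ u v : Y, ⟪Q ℓ u, v⟫ = ⟪u, Q ℓ v⟫)
    (hQidem : ∀ ℓ, (Q ℓ).comp (Q ℓ) = Q ℓ)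
    (hQorth : ∀ ℓ ℓ', ℓ ≠ ℓ' → (Q ℓ).comp (Q ℓ') = 0)
    -- points and over-relaxation
    (xstar xi xip1 : X) (ystar yi yip1 : Y) (Ω : X →L[ℝ] X)
    (xbar : X) (hxbar : xbar = xip1 + Ω (xip1 - xi))
    -- the nonlinear operator K
    (𝒳 : Set X) (hconv : Convex ℝ 𝒳)
    (hxstar : xstar ∈ 𝒳) (hxi : xi ∈ 𝒳) (hxip1 : xip1 ∈ 𝒳) (hxbar𝒳 : xbar ∈ 𝒳)
    (K : X → Y) (DK : X → X →L[ℝ] Y)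
    (hdiff : ∀ x ∈ 𝒳, HasFDerivWithinAt K (DK x) 𝒳 x)
    (L : ℝ) (hL : 0 ≤ L)
    (hLip : ∀ x ∈ 𝒳, ∀ x' ∈ 𝒳, ‖DK x - DK x'‖ ≤ L * ‖x - x'‖)
    (PNL : Y →L[ℝ] Y)
    (hPNLsa : ∀ u v : Y, ⟪PNL u, v⟫ = ⟪u, PNL v⟫)
    (hPNLidem : PNL.comp PNL = PNL)
    (hPNLconst : ∀ x ∈ 𝒳, ∀ x' ∈ 𝒳,
      (ContinuousLinearMap.id ℝ Y - PNL).comp (DK x)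
        = (ContinuousLinearMap.id ℝ Y - PNL).comp (DK x'))
    -- the set-valued maps and their blockwise strong monotonicity at the iterates
    (A : X → Set X) (B : Y → Set Y)
    (γG : Fin m → ℝ) (γF : Fin n → ℝ) (hγG : ∀ j, 0 ≤ γG j) (hγF : ∀ ℓ, 0 ≤ γF ℓ)
    (hA : ∀ ν ∈ A xip1, ∀ j,
      ⟪P j (ν + ContinuousLinearMap.adjoint (DK xstar) ystar), P j (xip1 - xstar)⟫ ≥
        γG j * ‖P j (xip1 - xstar)‖ ^ 2)
    (hB : ∀ ξ ∈ B yip1, ∀ ℓ,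
      ⟪Q ℓ (ξ - K xstar), Q ℓ (yip1 - ystar)⟫ ≥ γF ℓ * ‖Q ℓ (yip1 - ystar)‖ ^ 2)
    -- step lengths and tests
    (S : Finset (Fin m)) (V : Finset (Fin n))
    (τ : Fin m → ℝ) (σ : Fin n → ℝ)
    (hτ : ∀ j ∈ S, 0 < τ j) (hσ : ∀ ℓ ∈ V, 0 < σ ℓ)
    (φ φ' : Fin m → ℝ) (ψ ψ' : Fin n → ℝ)
    (hφ : ∀ j, 0 < φ j) (hφ' : ∀ j, 0 < φ' j)
    (hψ : ∀ ℓ, 0 < ψ ℓ) (hψ' : ∀ ℓ, 0 < ψ' ℓ)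
    (T : X →L[ℝ] X) (hT : T = ∑ j ∈ S, τ j • P j)
    (Sg : Y →L[ℝ] Y) (hSg : Sg = ∑ ℓ ∈ V, σ ℓ • Q ℓ)
    (Φ Φ'op : X →L[ℝ] X) (Ψ Ψ'op : Y →L[ℝ] Y)
    (hΦ : Φ = ∑ j : Fin m, φ j • P j) (hΦ' : Φ'op = ∑ j : Fin m, φ' j • P j)
    (hΨ : Ψ = ∑ ℓ : Fin n, ψ ℓ • Q ℓ) (hΨ' : Ψ'op = ∑ ℓ : Fin n, ψ' ℓ • Q ℓ)
    (Λ Λ' : X →L[ℝ] Y)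
    (γK : Fin m → ℝ) (ΓK : X →L[ℝ] X) (hΓK : ΓK = ∑ j : Fin m, γK j • P j)
    -- the quadratic forms
    (q q' : X → Y → ℝ)
    (hq : ∀ (x : X) (y : Y), q x y = ⟪Φ x, x⟫ - 2 * ⟪Λ x, y⟫ + ⟪Ψ y, y⟫)
    (hq' : ∀ (x : X) (y : Y), q' x y = ⟪Φ'op x, x⟫ - 2 * ⟪Λ' x, y⟫ + ⟪Ψ'op y, y⟫)
    (δ κ : ℝ) (hδ : 0 ≤ δ) (hδκ : δ ≤ κ) (hκ : κ < 1)
    (hmetric : ∀ (x : X) (y : Y),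
      q x y ≥ δ * ⟪Φ x, x⟫ + ((κ - δ) / (1 - δ)) * ⟪Ψ y, y⟫) :
    ∀ ν ∈ A xip1, ∀ ξ ∈ B yip1,
      (1 / 2) * q (xip1 - xi) (yip1 - yi)
        + (1 / 2) * (q (xip1 - xstar) (yip1 - ystar) - q' (xip1 - xstar) (yip1 - ystar))
        + ⟪(Φ.comp T) (ν + ContinuousLinearMap.adjoint (DK xi) yip1), xip1 - xstar⟫
        + ⟪(Ψ.comp Sg) (ξ - K xbar + DK xi (Ω (xip1 - xi))), yip1 - ystar⟫
      ≥ (δ / 2) * ⟪Φ (xip1 - xi), xip1 - xi⟫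
        - (L / 2) * ‖Ω + ContinuousLinearMap.id ℝ X‖ ^ 2
            * ‖PNL ((Ψ.comp Sg) (yip1 - ystar))‖ * ‖xip1 - xi‖ ^ 2
        + ((κ - δ) / (2 * (1 - δ))) * ⟪Ψ (yip1 - yi), yip1 - yi⟫
        + (1 / 2) * ∑ j : Fin m,
            (φ j - φ' j + 2 * (if j ∈ S then (1 : ℝ) else 0) * φ j * τ j * (γG j + γK j))
              * ‖P j (xip1 - xstar)‖ ^ 2
        + (1 / 2) * ∑ ℓ : Fin n,
            (ψ ℓ - ψ' ℓ + 2 * (if ℓ ∈ V then (1 : ℝ) else 0) * ψ ℓ * σ ℓ * γF ℓ)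
              * ‖Q ℓ (yip1 - ystar)‖ ^ 2
        + (⟪(Φ.comp T) (ContinuousLinearMap.adjoint (DK xi - DK xstar) ystar),
              xip1 - xstar⟫
            - ⟪((Φ.comp T).comp ΓK) (xip1 - xstar), xip1 - xstar⟫
            + ⟪(Ψ.comp Sg) (K xstar - K xi - DK xi (xstar - xi)), yip1 - ystar⟫)
        + (⟪(Λ' - Λ) (xip1 - xstar), yip1 - ystar⟫
            + ⟪(Φ.comp T) (ContinuousLinearMap.adjoint (DK xi) (yip1 - ystar)),
                xip1 - xstar⟫
            - ⟪(Ψ.comp Sg) (DK xi (xip1 - xstar)), yip1 - ystar⟫) := by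
  intro ν hν ξ hξ
  have hPmul : ∀ j k, (P j).comp (P k) = if j = k then P j else 0 := by
    intro j k
    by_cases h : j = k
    · subst h; simp [hPidem j]
    · simp [h, hPorth j k h]
  have hQmul : ∀ j k, (Q j).comp (Q k) = if j = k then Q j else 0 := by
    intro j k
    by_cases h : j = k
    · subst h; simp [hQidem j]
    · simp [h, hQorth j k h]
  -- operator composition identities
  have hΦT : Φ.comp T = ∑ j ∈ S, (φ j * τ j) • P j := by
    rw [hΦ, hT, aux_comp_sum P hPmul, Finset.univ_inter]
  have hΦTΓ : (Φ.comp T).comp ΓK = ∑ j ∈ S, (φ j * τ j * γK j) • P j := by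
    rw [hΦT, hΓK, aux_comp_sum P hPmul, Finset.inter_univ]
  have hΨS : Ψ.comp Sg = ∑ ℓ ∈ V, (ψ ℓ * σ ℓ) • Q ℓ := by
    rw [hΨ, hSg, aux_comp_sum Q hQmul, Finset.univ_inter]
  -- monotonicity bounds
  have H3 : ⟪(Φ.comp T) (ν + ContinuousLinearMap.adjoint (DK xstar) ystar), xip1 - xstar⟫
      ≥ ∑ j ∈ S, (φ j * τ j * γG j) * ‖P j (xip1 - xstar)‖ ^ 2 := by
    rw [hΦT, aux_inner_sum P hPsa hPidem]
    refine Finset.sum_le_sum fun j hj => ?_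
    have hmono := hA ν hν j
    have hpos : (0:ℝ) ≤ φ j * τ j := le_of_lt (mul_pos (hφ j) (hτ j hj))
    calc (φ j * τ j * γG j) * ‖P j (xip1 - xstar)‖ ^ 2
        = (φ j * τ j) * (γG j * ‖P j (xip1 - xstar)‖ ^ 2) := by ring
      _ ≤ (φ j * τ j) * ⟪P j (ν + ContinuousLinearMap.adjoint (DK xstar) ystar),
            P j (xip1 - xstar)⟫ := mul_le_mul_of_nonneg_left hmono hpos
  have H4 : ⟪(Ψ.comp Sg) (ξ - K xstar), yip1 - ystar⟫
      ≥ ∑ ℓ ∈ V, (ψ ℓ * σ ℓ * γF ℓ) * ‖Q ℓ (yip1 - ystar)‖ ^ 2 := by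
    rw [hΨS, aux_inner_sum Q hQsa hQidem]
    refine Finset.sum_le_sum fun ℓ hℓ => ?_
    have hmono := hB ξ hξ ℓ
    have hpos : (0:ℝ) ≤ ψ ℓ * σ ℓ := le_of_lt (mul_pos (hψ ℓ) (hσ ℓ hℓ))
    calc (ψ ℓ * σ ℓ * γF ℓ) * ‖Q ℓ (yip1 - ystar)‖ ^ 2
        = (ψ ℓ * σ ℓ) * (γF ℓ * ‖Q ℓ (yip1 - ystar)‖ ^ 2) := by ring
      _ ≤ (ψ ℓ * σ ℓ) * ⟪Q ℓ (ξ - K xstar), Q ℓ (yip1 - ystar)⟫ :=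
          mul_le_mul_of_nonneg_left hmono hpos
  have H5 : ⟪((Φ.comp T).comp ΓK) (xip1 - xstar), xip1 - xstar⟫
      = ∑ j ∈ S, (φ j * τ j * γK j) * ‖P j (xip1 - xstar)‖ ^ 2 := by
    rw [hΦTΓ, aux_inner_self_sum P hPsa hPidem]
  -- sum splitting identities
  have HX : ∑ j : Fin m,
        (φ j - φ' j + 2 * (if j ∈ S then (1 : ℝ) else 0) * φ j * τ j * (γG j + γK j))
          * ‖P j (xip1 - xstar)‖ ^ 2
      = (∑ j : Fin m, (φ j - φ' j) * ‖P j (xip1 - xstar)‖ ^ 2)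
        + 2 * ∑ j ∈ S, (φ j * τ j * γG j) * ‖P j (xip1 - xstar)‖ ^ 2
        + 2 * ∑ j ∈ S, (φ j * τ j * γK j) * ‖P j (xip1 - xstar)‖ ^ 2 := by
    have h1 : ∀ j : Fin m,
        (φ j - φ' j + 2 * (if j ∈ S then (1 : ℝ) else 0) * φ j * τ j * (γG j + γK j))
          * ‖P j (xip1 - xstar)‖ ^ 2
        = (φ j - φ' j) * ‖P j (xip1 - xstar)‖ ^ 2
          + (if j ∈ S then
              2 * ((φ j * τ j * γG j) * ‖P j (xip1 - xstar)‖ ^ 2)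
              + 2 * ((φ j * τ j * γK j) * ‖P j (xip1 - xstar)‖ ^ 2) else 0) := by
      intro j; split_ifs <;> ring
    rw [Finset.sum_congr rfl (fun j _ => h1 j), Finset.sum_add_distrib,
      Finset.sum_ite_mem, Finset.univ_inter, Finset.sum_add_distrib,
      Finset.mul_sum, Finset.mul_sum]
    ring
  have HY : ∑ ℓ : Fin n,
        (ψ ℓ - ψ' ℓ + 2 * (if ℓ ∈ V then (1 : ℝ) else 0) * ψ ℓ * σ ℓ * γF ℓ)
          * ‖Q ℓ (yip1 - ystar)‖ ^ 2
      = (∑ ℓ : Fin n, (ψ ℓ - ψ' ℓ) * ‖Q ℓ (yip1 - ystar)‖ ^ 2)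
        + 2 * ∑ ℓ ∈ V, (ψ ℓ * σ ℓ * γF ℓ) * ‖Q ℓ (yip1 - ystar)‖ ^ 2 := by
    have h1 : ∀ ℓ : Fin n,
        (ψ ℓ - ψ' ℓ + 2 * (if ℓ ∈ V then (1 : ℝ) else 0) * ψ ℓ * σ ℓ * γF ℓ)
          * ‖Q ℓ (yip1 - ystar)‖ ^ 2
        = (ψ ℓ - ψ' ℓ) * ‖Q ℓ (yip1 - ystar)‖ ^ 2
          + (if ℓ ∈ V then 2 * ((ψ ℓ * σ ℓ * γF ℓ) * ‖Q ℓ (yip1 - ystar)‖ ^ 2) else 0) := by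
      intro ℓ; split_ifs <;> ring
    rw [Finset.sum_congr rfl (fun ℓ _ => h1 ℓ), Finset.sum_add_distrib,
      Finset.sum_ite_mem, Finset.univ_inter, Finset.mul_sum]
  -- quadratic form difference
  have H2 : q (xip1 - xstar) (yip1 - ystar) - q' (xip1 - xstar) (yip1 - ystar)
      = (∑ j : Fin m, (φ j - φ' j) * ‖P j (xip1 - xstar)‖ ^ 2)
        + (∑ ℓ : Fin n, (ψ ℓ - ψ' ℓ) * ‖Q ℓ (yip1 - ystar)‖ ^ 2)
        + 2 * ⟪(Λ' - Λ) (xip1 - xstar), yip1 - ystar⟫ := by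
    have e1 : ⟪Φ (xip1 - xstar), xip1 - xstar⟫
        = ∑ j : Fin m, φ j * ‖P j (xip1 - xstar)‖ ^ 2 := by
      rw [hΦ, aux_inner_self_sum P hPsa hPidem]
    have e2 : ⟪Φ'op (xip1 - xstar), xip1 - xstar⟫
        = ∑ j : Fin m, φ' j * ‖P j (xip1 - xstar)‖ ^ 2 := by
      rw [hΦ', aux_inner_self_sum P hPsa hPidem]
    have e3 : ⟪Ψ (yip1 - ystar), yip1 - ystar⟫
        = ∑ ℓ : Fin n, ψ ℓ * ‖Q ℓ (yip1 - ystar)‖ ^ 2 := by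
      rw [hΨ, aux_inner_self_sum Q hQsa hQidem]
    have e4 : ⟪Ψ'op (yip1 - ystar), yip1 - ystar⟫
        = ∑ ℓ : Fin n, ψ' ℓ * ‖Q ℓ (yip1 - ystar)‖ ^ 2 := by
      rw [hΨ', aux_inner_self_sum Q hQsa hQidem]
    have e5 : ⟪(Λ' - Λ) (xip1 - xstar), yip1 - ystar⟫
        = ⟪Λ' (xip1 - xstar), yip1 - ystar⟫ - ⟪Λ (xip1 - xstar), yip1 - ystar⟫ := by
      rw [ContinuousLinearMap.sub_apply, inner_sub_left]
    have e6 : ∑ j : Fin m, (φ j - φ' j) * ‖P j (xip1 - xstar)‖ ^ 2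
        = (∑ j : Fin m, φ j * ‖P j (xip1 - xstar)‖ ^ 2)
          - ∑ j : Fin m, φ' j * ‖P j (xip1 - xstar)‖ ^ 2 := by
      rw [← Finset.sum_sub_distrib]
      exact Finset.sum_congr rfl fun j _ => by ring
    have e7 : ∑ ℓ : Fin n, (ψ ℓ - ψ' ℓ) * ‖Q ℓ (yip1 - ystar)‖ ^ 2
        = (∑ ℓ : Fin n, ψ ℓ * ‖Q ℓ (yip1 - ystar)‖ ^ 2)
          - ∑ ℓ : Fin n, ψ' ℓ * ‖Q ℓ (yip1 - ystar)‖ ^ 2 := by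
      rw [← Finset.sum_sub_distrib]
      exact Finset.sum_congr rfl fun ℓ _ => by ring
    rw [hq, hq', e1, e2, e3, e4, e5, e6, e7]
    ring
  -- metric bound
  have H1 : (1 / 2) * q (xip1 - xi) (yip1 - yi)
      ≥ (δ / 2) * ⟪Φ (xip1 - xi), xip1 - xi⟫
        + ((κ - δ) / (2 * (1 - δ))) * ⟪Ψ (yip1 - yi), yip1 - yi⟫ := by
    have hm := hmetric (xip1 - xi) (yip1 - yi)
    have hcoef : ((κ - δ) / (2 * (1 - δ))) * ⟪Ψ (yip1 - yi), yip1 - yi⟫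
        = (1 / 2) * (((κ - δ) / (1 - δ)) * ⟪Ψ (yip1 - yi), yip1 - yi⟫) := by
      have h1δ : (1:ℝ) - δ ≠ 0 := by linarith
      field_simp
    rw [hcoef]
    nlinarith [hm]
  -- decomposition of the K-side inner products
  have KeyX : ⟪(Φ.comp T) (ν + ContinuousLinearMap.adjoint (DK xi) yip1), xip1 - xstar⟫
      = ⟪(Φ.comp T) (ν + ContinuousLinearMap.adjoint (DK xstar) ystar), xip1 - xstar⟫
        + ⟪(Φ.comp T) (ContinuousLinearMap.adjoint (DK xi - DK xstar) ystar),
            xip1 - xstar⟫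
        + ⟪(Φ.comp T) (ContinuousLinearMap.adjoint (DK xi) (yip1 - ystar)),
            xip1 - xstar⟫ := by
    rw [← inner_add_left, ← inner_add_left, ← map_add, ← map_add]
    congr 2
    have hadj : ContinuousLinearMap.adjoint (DK xi - DK xstar)
        = ContinuousLinearMap.adjoint (DK xi) - ContinuousLinearMap.adjoint (DK xstar) :=
      map_sub (ContinuousLinearMap.adjoint : (X →L[ℝ] Y) ≃ₗᵢ⋆[ℝ] (Y →L[ℝ] X)) _ _
    rw [hadj]
    simp only [ContinuousLinearMap.sub_apply, map_sub]
    abel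
  have KeyY : ⟪(Ψ.comp Sg) (ξ - K xbar + DK xi (Ω (xip1 - xi))), yip1 - ystar⟫
      = ⟪(Ψ.comp Sg) (ξ - K xstar), yip1 - ystar⟫
        + ⟪(Ψ.comp Sg) (K xstar - K xi - DK xi (xstar - xi)), yip1 - ystar⟫
        - ⟪(Ψ.comp Sg) (DK xi (xip1 - xstar)), yip1 - ystar⟫
        - ⟪(Ψ.comp Sg) (K xbar - K xi - DK xi (xbar - xi)), yip1 - ystar⟫ := by
    rw [← inner_add_left, ← map_add, ← inner_sub_left, ← map_sub, ← inner_sub_left,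
      ← map_sub]
    congr 2
    rw [hxbar]
    simp only [map_sub, map_add]
    abel
  -- the curvature bound
  have hsaΨS : ∀ u w : Y, ⟪(Ψ.comp Sg) u, w⟫ = ⟪u, (Ψ.comp Sg) w⟫ := by
    intro u w
    rw [hΨS]
    exact aux_sa Q hQsa hQidem V _ u w
  have hPe : PNL (K xbar - K xi - DK xi (xbar - xi))
      = K xbar - K xi - DK xi (xbar - xi) := by
    have h0 := affine_part 𝒳 hconv K DK hdiff (ContinuousLinearMap.id ℝ Y - PNL)
      hPNLconst hxi hxbar𝒳
    have h1 : (ContinuousLinearMap.id ℝ Y - PNL) (K xbar - K xi - DK xi (xbar - xi))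
        = (K xbar - K xi - DK xi (xbar - xi))
          - PNL (K xbar - K xi - DK xi (xbar - xi)) := by
      simp [ContinuousLinearMap.sub_apply]
    rw [h1] at h0
    exact (sub_eq_zero.mp h0).symm
  have hTay : ‖K xbar - K xi - DK xi (xbar - xi)‖ ≤ L / 2 * ‖xbar - xi‖ ^ 2 :=
    taylor_quad 𝒳 hconv K DK hdiff L hLip hxi hxbar𝒳
  have hxbarxi : ‖xbar - xi‖ ≤ ‖Ω + ContinuousLinearMap.id ℝ X‖ * ‖xip1 - xi‖ := by
    have h1 : xbar - xi = (Ω + ContinuousLinearMap.id ℝ X) (xip1 - xi) := by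
      rw [hxbar]
      simp only [ContinuousLinearMap.add_apply, ContinuousLinearMap.id_apply]
      abel
    rw [h1]
    exact (Ω + ContinuousLinearMap.id ℝ X).le_opNorm _
  have H6 : ⟪(Ψ.comp Sg) (K xbar - K xi - DK xi (xbar - xi)), yip1 - ystar⟫
      ≤ (L / 2) * ‖Ω + ContinuousLinearMap.id ℝ X‖ ^ 2
          * ‖PNL ((Ψ.comp Sg) (yip1 - ystar))‖ * ‖xip1 - xi‖ ^ 2 := by
    have step1 : ⟪(Ψ.comp Sg) (K xbar - K xi - DK xi (xbar - xi)), yip1 - ystar⟫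
        = ⟪K xbar - K xi - DK xi (xbar - xi), PNL ((Ψ.comp Sg) (yip1 - ystar))⟫ := by
      calc ⟪(Ψ.comp Sg) (K xbar - K xi - DK xi (xbar - xi)), yip1 - ystar⟫
          = ⟪K xbar - K xi - DK xi (xbar - xi), (Ψ.comp Sg) (yip1 - ystar)⟫ :=
            hsaΨS _ _
        _ = ⟪PNL (K xbar - K xi - DK xi (xbar - xi)), (Ψ.comp Sg) (yip1 - ystar)⟫ := by
            rw [hPe]
        _ = ⟪K xbar - K xi - DK xi (xbar - xi), PNL ((Ψ.comp Sg) (yip1 - ystar))⟫ :=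
            hPNLsa _ _
    rw [step1]
    calc ⟪K xbar - K xi - DK xi (xbar - xi), PNL ((Ψ.comp Sg) (yip1 - ystar))⟫
        ≤ ‖K xbar - K xi - DK xi (xbar - xi)‖ * ‖PNL ((Ψ.comp Sg) (yip1 - ystar))‖ :=
          real_inner_le_norm _ _
      _ ≤ (L / 2 * (‖Ω + ContinuousLinearMap.id ℝ X‖ * ‖xip1 - xi‖) ^ 2)
            * ‖PNL ((Ψ.comp Sg) (yip1 - ystar))‖ := by
          apply mul_le_mul_of_nonneg_right _ (norm_nonneg _)
          refine hTay.trans ?_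
          apply mul_le_mul_of_nonneg_left _ (by positivity : (0:ℝ) ≤ L / 2)
          exact pow_le_pow_left₀ (norm_nonneg _) hxbarxi 2
      _ = (L / 2) * ‖Ω + ContinuousLinearMap.id ℝ X‖ ^ 2
            * ‖PNL ((Ψ.comp Sg) (yip1 - ystar))‖ * ‖xip1 - xi‖ ^ 2 := by
          ring
  rw [KeyX, KeyY, H2, HX, HY, H5]
  linarith [H1, H3, H4, H6]
end

section
/- Assume ω̄·σ_ℓ·τ_j ≤ σ⁰_ℓ·τ⁰_j for all ℓ, j, and that for every ℓ = 1,…,n, 1 − κ ≥ ‖Σ_{j∈S} √(w_{j,ℓ}·σ⁰_ℓ·τ⁰_j/π_j)·Q_ℓ K' P_j‖² (operator norm). Then for all x ∈ X and y ∈ Y, ⟨Φx,x⟩ − 2⟨Λx,y⟩ + ⟨Ψy,y⟩ ≥ δ⟨Φx,x⟩ + ((κ−δ)/(1−δ))·⟨Ψy,y⟩. -/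
open scoped RealInnerProductSpace Classical

set_option maxHeartbeats 1000000 in
/-- Step-length condition for the full-dual-update method (Lemma 4.1) implies the
lower bound on the local metric. -/
theorem stmt8 {X Y : Type*}
    [NormedAddCommGroup X] [InnerProductSpace ℝ X] [CompleteSpace X]
    [NormedAddCommGroup Y] [InnerProductSpace ℝ Y] [CompleteSpace Y]
    {m n : ℕ}
    (P : Fin m → X →L[ℝ] X) (Q : Fin n → Y →L[ℝ] Y)
    (hPsa : ∀ j, ∀ u v : X, ⟪P j u, v⟫ = ⟪u, P j v⟫)
    (hPidem : ∀ j, (P j).comp (P j) = P j)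
    (hPorth : ∀ j j', j ≠ j' → (P j).comp (P j') = 0)
    (hQsa : ∀ ℓ, ∀ u v : Y, ⟪Q ℓ u, v⟫ = ⟪u, Q ℓ v⟫)
    (hQidem : ∀ ℓ, (Q ℓ).comp (Q ℓ) = Q ℓ)
    (hQorth : ∀ ℓ ℓ', ℓ ≠ ℓ' → (Q ℓ).comp (Q ℓ') = 0)
    (K' : X →L[ℝ] Y)
    (S : Finset (Fin m))
    (π : Fin m → ℝ) (hπ : ∀ j, 0 < π j) (hπ1 : ∀ j, π j ≤ 1)
    (φ τ : Fin m → ℝ) (hφ : ∀ j, 0 < φ j) (hτ : ∀ j, 0 < τ j)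
    (ψ σ : Fin n → ℝ) (hψ : ∀ ℓ, 0 < ψ ℓ) (hσ : ∀ ℓ, 0 < σ ℓ)
    (η η' : ℝ) (hη : 0 < η) (hη' : 0 < η')
    (hcoupleP : ∀ j, π j * φ j * τ j = η)
    (hcoupleD : ∀ ℓ, ψ ℓ * σ ℓ = η')
    (hω : η / η' ≤ 1)
    (τ0 : Fin m → ℝ) (σ0 : Fin n → ℝ)
    (hτ0 : ∀ j, 0 < τ0 j) (hσ0 : ∀ ℓ, 0 < σ0 ℓ)
    (w : Fin m → Fin n → Fin n → ℝ)
    (hwpos : ∀ j ℓ k, 0 < w j ℓ k)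
    (hwsym : ∀ j ℓ k, w j ℓ k = 1 / w j k ℓ)
    (wtot : Fin m → Fin n → ℝ)
    (hwtot : ∀ j ℓ, wtot j ℓ =
      if (Q ℓ).comp (K'.comp (P j)) ≠ 0 then
        ∑ k : Fin n,
          (if ((Q ℓ).comp (K'.comp (P j))).comp
                ((ContinuousLinearMap.adjoint K').comp (Q k)) ≠ 0 ∧ j ∈ S
            then w j ℓ k else 0)
      else 0)
    (δ κ : ℝ) (hδ : 0 ≤ δ) (hδκ : δ ≤ κ) (hκ : κ < 1)
    (Φ : X →L[ℝ] X) (Ψ : Y →L[ℝ] Y) (Λ : X →L[ℝ] Y)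
    (hΦ : Φ = ∑ j : Fin m, φ j • P j)
    (hΨ : Ψ = ∑ ℓ : Fin n, ψ ℓ • Q ℓ)
    (hΛ : Λ = ∑ ℓ : Fin n, ∑ j ∈ S, (φ j * τ j) • ((Q ℓ).comp (K'.comp (P j))))
    (hsteps : ∀ (ℓ : Fin n) (j : Fin m), (η / η') * σ ℓ * τ j ≤ σ0 ℓ * τ0 j)
    (hcond : ∀ ℓ, 1 - κ ≥
      ‖∑ j ∈ S, Real.sqrt (wtot j ℓ * σ0 ℓ * τ0 j / π j) •
          ((Q ℓ).comp (K'.comp (P j)))‖ ^ 2) :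
    ∀ (x : X) (y : Y),
      ⟪Φ x, x⟫ - 2 * ⟪Λ x, y⟫ + ⟪Ψ y, y⟫ ≥
        δ * ⟪Φ x, x⟫ + ((κ - δ) / (1 - δ)) * ⟪Ψ y, y⟫ := by
  intro x y
  have hδ1 : δ < 1 := lt_of_le_of_lt hδκ hκ
  have hd : (0:ℝ) < 1 - δ := by linarith
  set Kt := ContinuousLinearMap.adjoint K' with hKt
  -- pointwise projection facts
  have hPap : ∀ j (u : X), P j (P j u) = P j u := fun j u => by
    simpa using congrArg (fun T : X →L[ℝ] X => T u) (hPidem j)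
  have hQap : ∀ ℓ (u : Y), Q ℓ (Q ℓ u) = Q ℓ u := fun ℓ u => by
    simpa using congrArg (fun T : Y →L[ℝ] Y => T u) (hQidem ℓ)
  have hPo : ∀ j j', j ≠ j' → ∀ u u' : X, ⟪P j u, P j' u'⟫ = 0 := by
    intro j j' hjj u u'
    rw [hPsa j u (P j' u')]
    have : P j (P j' u') = 0 := by
      simpa using congrArg (fun T : X →L[ℝ] X => T u') (hPorth j j' hjj)
    rw [this, inner_zero_right]
  -- key vectors
  set v : Fin m → Fin n → X := fun j ℓ => P j (Kt (Q ℓ y)) with hv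
  set g : Fin m → X := fun j => ∑ ℓ, v j ℓ with hg
  -- inner product expansions of Φ, Ψ
  have hipP : ∀ j, ⟪P j x, x⟫ = ‖P j x‖ ^ 2 := fun j => by
    have h1 : ⟪P j x, x⟫ = ⟪P j (P j x), x⟫ := by rw [hPap]
    rw [h1, hPsa j (P j x) x, real_inner_self_eq_norm_sq]
  have hipQ : ∀ ℓ, ⟪Q ℓ y, y⟫ = ‖Q ℓ y‖ ^ 2 := fun ℓ => by
    have h1 : ⟪Q ℓ y, y⟫ = ⟪Q ℓ (Q ℓ y), y⟫ := by rw [hQap]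
    rw [h1, hQsa ℓ (Q ℓ y) y, real_inner_self_eq_norm_sq]
  have hΦx : ⟪Φ x, x⟫ = ∑ j, φ j * ‖P j x‖ ^ 2 := by
    rw [hΦ, ContinuousLinearMap.sum_apply, sum_inner]
    exact Finset.sum_congr rfl fun j _ => by
      rw [ContinuousLinearMap.smul_apply, real_inner_smul_left, hipP j]
  have hΨy : ⟪Ψ y, y⟫ = ∑ ℓ, ψ ℓ * ‖Q ℓ y‖ ^ 2 := by
    rw [hΨ, ContinuousLinearMap.sum_apply, sum_inner]
    exact Finset.sum_congr rfl fun ℓ _ => by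
      rw [ContinuousLinearMap.smul_apply, real_inner_smul_left, hipQ ℓ]
  have hΦnn : ∀ j, 0 ≤ φ j * ‖P j x‖ ^ 2 := fun j =>
    mul_nonneg (hφ j).le (sq_nonneg _)
  -- Λ expansion
  have hterm : ∀ j ℓ, ⟪Q ℓ (K' (P j x)), y⟫ = ⟪P j x, v j ℓ⟫ := fun j ℓ => by
    rw [hQsa ℓ (K' (P j x)) y, hv]
    have h2 : ⟪K' (P j x), Q ℓ y⟫ = ⟪P j x, Kt (Q ℓ y)⟫ := by
      rw [hKt, ContinuousLinearMap.adjoint_inner_right]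
    rw [h2]
    have h3 : ⟪P j x, Kt (Q ℓ y)⟫ = ⟪P j (P j x), Kt (Q ℓ y)⟫ := by rw [hPap]
    rw [h3, hPsa j (P j x) (Kt (Q ℓ y))]
  have hΛxy : ⟪Λ x, y⟫ = ∑ j ∈ S, (φ j * τ j) * ⟪P j x, g j⟫ := by
    rw [hΛ]
    simp only [ContinuousLinearMap.sum_apply, ContinuousLinearMap.smul_apply,
      ContinuousLinearMap.comp_apply, sum_inner, real_inner_smul_left]
    rw [Finset.sum_comm]
    refine Finset.sum_congr rfl fun j _ => ?_
    rw [hg, inner_sum, Finset.mul_sum]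
    exact Finset.sum_congr rfl fun ℓ _ => by rw [hterm j ℓ]
  -- inner products of the v's as quadratic forms in y
  have hvip : ∀ j ℓ k, ⟪v j ℓ, v j k⟫ =
      ⟪y, ((((Q ℓ).comp (K'.comp (P j))).comp (Kt.comp (Q k))) y)⟫ := by
    intro j ℓ k
    simp only [hv, ContinuousLinearMap.comp_apply]
    rw [hPsa j (Kt (Q ℓ y)) (P j (Kt (Q k y))), hPap j]
    rw [hKt, ContinuousLinearMap.adjoint_inner_left]
    rw [hQsa ℓ]
  -- nonnegativity of wtot
  have hwtotnn : ∀ j ℓ, 0 ≤ wtot j ℓ := by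
    intro j ℓ
    rw [hwtot]
    split
    · exact Finset.sum_nonneg fun k _ => by
        split
        · exact (hwpos j ℓ k).le
        · exact le_refl 0
    · exact le_refl 0
  -- the condition of the if, and its symmetry
  have hcsymm : ∀ j ℓ k,
      (((Q ℓ).comp (K'.comp (P j))).comp (Kt.comp (Q k)) = 0) →
      (((Q k).comp (K'.comp (P j))).comp (Kt.comp (Q ℓ)) = 0) := by
    intro j ℓ k h
    have hadj : ContinuousLinearMap.adjoint
        (((Q ℓ).comp (K'.comp (P j))).comp (Kt.comp (Q k)))
        = ((Q k).comp (K'.comp (P j))).comp (Kt.comp (Q ℓ)) := by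
      apply ContinuousLinearMap.ext
      intro u
      apply ext_inner_right ℝ
      intro z
      rw [ContinuousLinearMap.adjoint_inner_left]
      simp only [ContinuousLinearMap.comp_apply]
      rw [hQsa k, hKt, ← hQsa ℓ, ← ContinuousLinearMap.adjoint_inner_right K',
        ← ContinuousLinearMap.adjoint_inner_left K', ← hPsa j]
    rw [← hadj, h, map_zero]
  -- wtot rewritten without the outer if
  have hwtot' : ∀ j ℓ, wtot j ℓ = ∑ k : Fin n,
      (if ((Q ℓ).comp (K'.comp (P j))).comp (Kt.comp (Q k)) ≠ 0 ∧ j ∈ S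
        then w j ℓ k else 0) := by
    intro j ℓ
    rw [hwtot]
    split
    · rfl
    · rename_i h0
      push_neg at h0
      symm
      refine Finset.sum_eq_zero fun k _ => ?_
      rw [if_neg]
      rintro ⟨hne, -⟩
      exact hne (by rw [h0, ContinuousLinearMap.zero_comp])
  -- the cross-term estimate: for j ∈ S, ‖g j‖² ≤ ∑ ℓ wtot j ℓ ‖v j ℓ‖²
  have hgj : ∀ j ∈ S, ‖g j‖ ^ 2 ≤ ∑ ℓ, wtot j ℓ * ‖v j ℓ‖ ^ 2 := by
    intro j hjS
    have hexp : ‖g j‖ ^ 2 = ∑ ℓ, ∑ k, ⟪v j ℓ, v j k⟫ := by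
      rw [← real_inner_self_eq_norm_sq, hg, sum_inner]
      exact Finset.sum_congr rfl fun ℓ _ => by rw [inner_sum]
    rw [hexp]
    have hbound : ∀ ℓ k, ⟪v j ℓ, v j k⟫ ≤
        ((if ((Q ℓ).comp (K'.comp (P j))).comp (Kt.comp (Q k)) ≠ 0 ∧ j ∈ S
            then w j ℓ k * ‖v j ℓ‖ ^ 2 else 0)
         + (if ((Q k).comp (K'.comp (P j))).comp (Kt.comp (Q ℓ)) ≠ 0 ∧ j ∈ S
            then w j k ℓ * ‖v j k‖ ^ 2 else 0)) / 2 := by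
      intro ℓ k
      by_cases hc : ((Q ℓ).comp (K'.comp (P j))).comp (Kt.comp (Q k)) = 0
      · rw [if_neg (by rintro ⟨hne, -⟩; exact hne hc),
          if_neg (by rintro ⟨hne, -⟩; exact hne (hcsymm j ℓ k hc))]
        rw [hvip j ℓ k, hc]
        simp
      · have hc' : ((Q k).comp (K'.comp (P j))).comp (Kt.comp (Q ℓ)) ≠ 0 := by
          intro h
          exact hc (hcsymm j k ℓ h)
        rw [if_pos ⟨hc, hjS⟩, if_pos ⟨hc', hjS⟩]
        have h1 : ⟪v j ℓ, v j k⟫ ≤ ‖v j ℓ‖ * ‖v j k‖ := real_inner_le_norm _ _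
        have h2 : w j k ℓ = 1 / w j ℓ k := hwsym j k ℓ
        have hw : 0 < w j ℓ k := hwpos j ℓ k
        rw [h2]
        have h3 : ‖v j ℓ‖ * ‖v j k‖ ≤
            (w j ℓ k * ‖v j ℓ‖ ^ 2 + 1 / w j ℓ k * ‖v j k‖ ^ 2) / 2 := by
          have hid : (w j ℓ k * ‖v j ℓ‖ ^ 2 + 1 / w j ℓ k * ‖v j k‖ ^ 2) / 2
              - ‖v j ℓ‖ * ‖v j k‖
              = (w j ℓ k * ‖v j ℓ‖ - ‖v j k‖) ^ 2 / (2 * w j ℓ k) := by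
            field_simp
            ring
          have hpos : 0 ≤ (w j ℓ k * ‖v j ℓ‖ - ‖v j k‖) ^ 2 / (2 * w j ℓ k) := by positivity
          linarith
        linarith
    calc ∑ ℓ, ∑ k, ⟪v j ℓ, v j k⟫
        ≤ ∑ ℓ, ∑ k,
          ((if ((Q ℓ).comp (K'.comp (P j))).comp (Kt.comp (Q k)) ≠ 0 ∧ j ∈ S
              then w j ℓ k * ‖v j ℓ‖ ^ 2 else 0)
           + (if ((Q k).comp (K'.comp (P j))).comp (Kt.comp (Q ℓ)) ≠ 0 ∧ j ∈ S
              then w j k ℓ * ‖v j k‖ ^ 2 else 0)) / 2 := by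
          exact Finset.sum_le_sum fun ℓ _ => Finset.sum_le_sum fun k _ => hbound ℓ k
      _ = ∑ ℓ, ∑ k,
          (if ((Q ℓ).comp (K'.comp (P j))).comp (Kt.comp (Q k)) ≠ 0 ∧ j ∈ S
              then w j ℓ k * ‖v j ℓ‖ ^ 2 else 0) := by
          simp only [add_div, Finset.sum_add_distrib]
          rw [Finset.sum_comm (s := Finset.univ) (t := Finset.univ)
            (f := fun ℓ k => (if ((Q k).comp (K'.comp (P j))).comp (Kt.comp (Q ℓ)) ≠ 0 ∧ j ∈ S
              then w j k ℓ * ‖v j k‖ ^ 2 else 0) / 2)]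
          rw [← Finset.sum_add_distrib]
          refine Finset.sum_congr rfl fun ℓ _ => ?_
          rw [← Finset.sum_add_distrib]
          refine Finset.sum_congr rfl fun k _ => ?_
          ring
      _ = ∑ ℓ, wtot j ℓ * ‖v j ℓ‖ ^ 2 := by
          refine Finset.sum_congr rfl fun ℓ _ => ?_
          rw [hwtot' j ℓ, Finset.sum_mul]
          refine Finset.sum_congr rfl fun k _ => ?_
          split
          · rfl
          · rw [zero_mul]
  -- orthogonality of the v j ℓ in j
  have hvorth : ∀ ℓ (j j' : Fin m), j ≠ j' → ⟪v j ℓ, v j' ℓ⟫ = 0 := fun ℓ j j' h =>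
    hPo j j' h _ _
  -- per dual block operator norm estimate
  have hAl : ∀ ℓ, ∑ j ∈ S, (wtot j ℓ * σ0 ℓ * τ0 j / π j) * ‖v j ℓ‖ ^ 2
      ≤ (1 - κ) * ‖Q ℓ y‖ ^ 2 := by
    intro ℓ
    set a : Fin m → ℝ := fun j => Real.sqrt (wtot j ℓ * σ0 ℓ * τ0 j / π j) with ha
    have hann : ∀ j, 0 ≤ wtot j ℓ * σ0 ℓ * τ0 j / π j := fun j =>
      div_nonneg (mul_nonneg (mul_nonneg (hwtotnn j ℓ) (hσ0 ℓ).le) (hτ0 j).le) (hπ j).le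
    have hasq : ∀ j, a j ^ 2 = wtot j ℓ * σ0 ℓ * τ0 j / π j := fun j =>
      Real.sq_sqrt (hann j)
    set A : X →L[ℝ] Y := ∑ j ∈ S, a j • ((Q ℓ).comp (K'.comp (P j))) with hA
    set s : X := ∑ j ∈ S, a j • v j ℓ with hs
    -- ‖s‖² = ∑ a j ² ‖v j ℓ‖²
    have hs2 : ‖s‖ ^ 2 = ∑ j ∈ S, a j ^ 2 * ‖v j ℓ‖ ^ 2 := by
      rw [← real_inner_self_eq_norm_sq, hs, sum_inner]
      refine Finset.sum_congr rfl fun j hj => ?_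
      rw [inner_sum, Finset.sum_eq_single_of_mem j hj]
      · rw [real_inner_smul_left, real_inner_smul_right, real_inner_self_eq_norm_sq]
        ring
      · intro k hk hkj
        rw [real_inner_smul_left, real_inner_smul_right, hvorth ℓ j k (Ne.symm hkj)]
        ring
    -- ⟪s, s⟫ = ⟪Q ℓ y, A s⟫
    have hsip : ⟪s, s⟫ = ⟪Q ℓ y, A s⟫ := by
      conv_lhs => rw [hs]
      rw [sum_inner, hA, ContinuousLinearMap.sum_apply, inner_sum]
      refine Finset.sum_congr rfl fun j _ => ?_
      rw [real_inner_smul_left, ContinuousLinearMap.smul_apply, real_inner_smul_right]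
      congr 1
      simp only [hv, ContinuousLinearMap.comp_apply]
      rw [hPsa j (Kt (Q ℓ y)) s, hKt, ContinuousLinearMap.adjoint_inner_left]
      rw [← hQap ℓ y, hQsa ℓ (Q ℓ y) (K' (P j s)), hQap ℓ y]
    have hnorm : ‖s‖ ^ 2 ≤ (1 - κ) * ‖Q ℓ y‖ ^ 2 := by
      have h1 : ⟪s, s⟫ ≤ ‖Q ℓ y‖ * (‖A‖ * ‖s‖) := by
        rw [hsip]
        calc ⟪Q ℓ y, A s⟫ ≤ ‖Q ℓ y‖ * ‖A s‖ := real_inner_le_norm _ _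
          _ ≤ ‖Q ℓ y‖ * (‖A‖ * ‖s‖) :=
            mul_le_mul_of_nonneg_left (A.le_opNorm s) (norm_nonneg _)
      rw [real_inner_self_eq_norm_sq] at h1
      have hA2 : ‖A‖ ^ 2 ≤ 1 - κ := hcond ℓ
      nlinarith [norm_nonneg s, norm_nonneg (Q ℓ y), norm_nonneg A,
        sq_nonneg (‖A‖ * ‖Q ℓ y‖ - ‖s‖),
        mul_nonneg (norm_nonneg (Q ℓ y)) (norm_nonneg (Q ℓ y))]
    calc ∑ j ∈ S, (wtot j ℓ * σ0 ℓ * τ0 j / π j) * ‖v j ℓ‖ ^ 2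
        = ∑ j ∈ S, a j ^ 2 * ‖v j ℓ‖ ^ 2 := by
          exact Finset.sum_congr rfl fun j _ => by rw [hasq j]
      _ = ‖s‖ ^ 2 := hs2.symm
      _ ≤ (1 - κ) * ‖Q ℓ y‖ ^ 2 := hnorm
  -- step-length estimate : φ j τ j² ≤ ψ ℓ σ0 ℓ τ0 j / π j
  have hkey : ∀ (ℓ : Fin n) (j : Fin m), φ j * τ j ^ 2 ≤ ψ ℓ * σ0 ℓ * τ0 j / π j := by
    intro ℓ j
    rw [le_div_iff₀ (hπ j)]
    have h1 : φ j * τ j ^ 2 * π j = η * τ j := by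
      linear_combination τ j * hcoupleP j
    rw [h1]
    have h2 := mul_le_mul_of_nonneg_left (hsteps ℓ j) (hψ ℓ).le
    calc η * τ j = ψ ℓ * ((η / η') * σ ℓ * τ j) := by
          field_simp
          linear_combination (-(τ j)) * hcoupleD ℓ
      _ ≤ ψ ℓ * (σ0 ℓ * τ0 j) := h2
      _ = ψ ℓ * σ0 ℓ * τ0 j := by ring
  -- the dual-side bound
  have hdual : ∑ j ∈ S, (φ j * τ j ^ 2) * ‖g j‖ ^ 2 ≤ (1 - κ) * ⟪Ψ y, y⟫ := by
    calc ∑ j ∈ S, (φ j * τ j ^ 2) * ‖g j‖ ^ 2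
        ≤ ∑ j ∈ S, ∑ ℓ, (φ j * τ j ^ 2) * (wtot j ℓ * ‖v j ℓ‖ ^ 2) := by
          refine Finset.sum_le_sum fun j hj => ?_
          rw [← Finset.mul_sum]
          exact mul_le_mul_of_nonneg_left (hgj j hj)
            (mul_nonneg (hφ j).le (sq_nonneg _))
      _ ≤ ∑ j ∈ S, ∑ ℓ, ψ ℓ * ((wtot j ℓ * σ0 ℓ * τ0 j / π j) * ‖v j ℓ‖ ^ 2) := by
          refine Finset.sum_le_sum fun j _ => Finset.sum_le_sum fun ℓ _ => ?_
          have hC : 0 ≤ wtot j ℓ * ‖v j ℓ‖ ^ 2 :=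
            mul_nonneg (hwtotnn j ℓ) (sq_nonneg _)
          have := mul_le_mul_of_nonneg_right (hkey ℓ j) hC
          calc (φ j * τ j ^ 2) * (wtot j ℓ * ‖v j ℓ‖ ^ 2)
              ≤ (ψ ℓ * σ0 ℓ * τ0 j / π j) * (wtot j ℓ * ‖v j ℓ‖ ^ 2) := this
            _ = ψ ℓ * ((wtot j ℓ * σ0 ℓ * τ0 j / π j) * ‖v j ℓ‖ ^ 2) := by ring
      _ = ∑ ℓ, ψ ℓ * ∑ j ∈ S, (wtot j ℓ * σ0 ℓ * τ0 j / π j) * ‖v j ℓ‖ ^ 2 := by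
          rw [Finset.sum_comm]
          exact Finset.sum_congr rfl fun ℓ _ => by rw [Finset.mul_sum]
      _ ≤ ∑ ℓ, ψ ℓ * ((1 - κ) * ‖Q ℓ y‖ ^ 2) := by
          exact Finset.sum_le_sum fun ℓ _ =>
            mul_le_mul_of_nonneg_left (hAl ℓ) (hψ ℓ).le
      _ = (1 - κ) * ⟪Ψ y, y⟫ := by
          rw [hΨy, Finset.mul_sum]
          exact Finset.sum_congr rfl fun ℓ _ => by ring
  -- Young's inequality per primal block and assembly
  have hmain : 2 * ⟪Λ x, y⟫ ≤ (1 - δ) * ⟪Φ x, x⟫ + ((1 - κ) / (1 - δ)) * ⟪Ψ y, y⟫ := by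
    have hy : ∀ j ∈ S, 2 * ((φ j * τ j) * ⟪P j x, g j⟫) ≤
        (1 - δ) * (φ j * ‖P j x‖ ^ 2) + (1 / (1 - δ)) * ((φ j * τ j ^ 2) * ‖g j‖ ^ 2) := by
      intro j _
      have h1 : ⟪P j x, g j⟫ ≤ ‖P j x‖ * ‖g j‖ := real_inner_le_norm _ _
      have hφj := hφ j
      have hτj := hτ j
      have h2 : 2 * ((φ j * τ j) * (‖P j x‖ * ‖g j‖)) ≤
          (1 - δ) * (φ j * ‖P j x‖ ^ 2) + (1 / (1 - δ)) * ((φ j * τ j ^ 2) * ‖g j‖ ^ 2) := by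
        rw [div_mul_eq_mul_div, one_mul, ← sub_nonneg]
        have hpos : (0:ℝ) < (1 - δ) * φ j := mul_pos hd hφj
        have hid : (1 - δ) * (φ j * ‖P j x‖ ^ 2) + (φ j * τ j ^ 2) * ‖g j‖ ^ 2 / (1 - δ)
            - 2 * ((φ j * τ j) * (‖P j x‖ * ‖g j‖))
            = ((1 - δ) * φ j * ‖P j x‖ - φ j * τ j * ‖g j‖) ^ 2 / ((1 - δ) * φ j) := by
          field_simp
          ring
        rw [hid]
        positivity
      calc 2 * ((φ j * τ j) * ⟪P j x, g j⟫)
          ≤ 2 * ((φ j * τ j) * (‖P j x‖ * ‖g j‖)) := by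
            have : (0:ℝ) ≤ φ j * τ j := by positivity
            nlinarith [h1, this]
        _ ≤ _ := h2
    calc 2 * ⟪Λ x, y⟫ = ∑ j ∈ S, 2 * ((φ j * τ j) * ⟪P j x, g j⟫) := by
          rw [hΛxy, Finset.mul_sum]
      _ ≤ ∑ j ∈ S, ((1 - δ) * (φ j * ‖P j x‖ ^ 2)
            + (1 / (1 - δ)) * ((φ j * τ j ^ 2) * ‖g j‖ ^ 2)) :=
          Finset.sum_le_sum hy
      _ = (1 - δ) * ∑ j ∈ S, φ j * ‖P j x‖ ^ 2
            + (1 / (1 - δ)) * ∑ j ∈ S, (φ j * τ j ^ 2) * ‖g j‖ ^ 2 := by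
          rw [Finset.sum_add_distrib, Finset.mul_sum, Finset.mul_sum]
      _ ≤ (1 - δ) * ⟪Φ x, x⟫ + (1 / (1 - δ)) * ((1 - κ) * ⟪Ψ y, y⟫) := by
          have hsub : ∑ j ∈ S, φ j * ‖P j x‖ ^ 2 ≤ ⟪Φ x, x⟫ := by
            rw [hΦx]
            exact Finset.sum_le_sum_of_subset_of_nonneg (Finset.subset_univ S)
              fun j _ _ => hΦnn j
          have h1 : (1 - δ) * ∑ j ∈ S, φ j * ‖P j x‖ ^ 2 ≤ (1 - δ) * ⟪Φ x, x⟫ :=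
            mul_le_mul_of_nonneg_left hsub hd.le
          have h2 : (1 / (1 - δ)) * ∑ j ∈ S, (φ j * τ j ^ 2) * ‖g j‖ ^ 2
              ≤ (1 / (1 - δ)) * ((1 - κ) * ⟪Ψ y, y⟫) :=
            mul_le_mul_of_nonneg_left hdual (by positivity)
          linarith
      _ = (1 - δ) * ⟪Φ x, x⟫ + ((1 - κ) / (1 - δ)) * ⟪Ψ y, y⟫ := by ring
  -- final algebra
  have hco : δ * ⟪Φ x, x⟫ + ((κ - δ) / (1 - δ)) * ⟪Ψ y, y⟫
      = ⟪Φ x, x⟫ - ((1 - δ) * ⟪Φ x, x⟫ + ((1 - κ) / (1 - δ)) * ⟪Ψ y, y⟫) + ⟪Ψ y, y⟫ := by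
    field_simp
    ring
  rw [ge_iff_le, hco]
  linarith [hmain]
end

section
/- Assume σ_ℓ·τ_j ≤ σ¹_ℓ·τ⁰_j for all ℓ, j, and that for every ℓ = 1,…,n, 1 − κ ≥ ‖Σ_{j=1}^m √(w_{j,ℓ}·σ¹_ℓ·τ⁰_j/ν_ℓ)·Q_ℓ K' P_j‖² (operator norm). Then for all x ∈ X and y ∈ Y, ⟨Φx,x⟩ − 2⟨Λx,y⟩ + ⟨Ψy,y⟩ ≥ δ⟨Φx,x⟩ + ((κ−δ)/(1−δ))·⟨Ψy,y⟩. -/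
open scoped RealInnerProductSpace Classical
set_option maxHeartbeats 1000000

private lemma orth_sum_sq' {E : Type*} [NormedAddCommGroup E] [InnerProductSpace ℝ E]
    {ι : Type*} (s : Finset ι) (f : ι → E)
    (h : ∀ i ∈ s, ∀ j ∈ s, i ≠ j → ⟪f i, f j⟫ = 0) :
    ‖∑ i ∈ s, f i‖ ^ 2 = ∑ i ∈ s, ‖f i‖ ^ 2 := by
  rw [← real_inner_self_eq_norm_sq, sum_inner]
  refine Finset.sum_congr rfl fun i hi => ?_
  rw [inner_sum, Finset.sum_eq_single_of_mem i hi]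
  · exact real_inner_self_eq_norm_sq _
  · intro j hj hji
    exact h i hi j hj (Ne.symm hji)

private lemma final_alg' {a b c d k : ℝ} (ha : 0 ≤ a) (hb : 0 ≤ b) (hd : 0 < d)
    (hk : 0 ≤ k) (h : c ^ 2 ≤ k * a * b) : 2 * d * c ≤ d ^ 2 * a + k * b := by
  have hu : 0 ≤ d ^ 2 * a := mul_nonneg (sq_nonneg d) ha
  have hv : 0 ≤ k * b := mul_nonneg hk hb
  rcases le_or_gt c 0 with hc | hc
  · nlinarith [mul_pos hd hd]
  · have h1 : (2 * d * c) ^ 2 ≤ (d ^ 2 * a + k * b) ^ 2 := by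
      nlinarith [sq_nonneg (d ^ 2 * a - k * b), mul_le_mul_of_nonneg_left h (sq_nonneg d)]
    nlinarith [mul_pos (mul_pos two_pos hd) hc]

private lemma cross_bound' {p q na nb i w v : ℝ} (hp : 0 < p) (hq : 0 < q) (hw : 0 < w)
    (hwv : w * v = 1) (hna : 0 ≤ na) (hnb : 0 ≤ nb) (hi : i ≤ na * nb) :
    p * (q * i) ≤ (w * (p * na) ^ 2 + v * (q * nb) ^ 2) / 2 := by
  have h1 : p * (q * i) ≤ (p * na) * (q * nb) := by
    have := mul_le_mul_of_nonneg_left (mul_le_mul_of_nonneg_left hi hq.le) hp.le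
    nlinarith [this]
  refine h1.trans ?_
  have hc : 0 ≤ p * na := mul_nonneg hp.le hna
  have hd : 0 ≤ q * nb := mul_nonneg hq.le hnb
  nlinarith [sq_nonneg (w * (p * na) - q * nb), hw, mul_pos hw hw, hwv]

/-- Step-length condition for the full-primal-update method (Lemma 5.1) implies the
lower bound on the local metric. -/
theorem stmt9 {X Y : Type*}
    [NormedAddCommGroup X] [InnerProductSpace ℝ X] [CompleteSpace X]
    [NormedAddCommGroup Y] [InnerProductSpace ℝ Y] [CompleteSpace Y]
    {m n : ℕ}
    (P : Fin m → X →L[ℝ] X) (Q : Fin n → Y →L[ℝ] Y)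
    (hPsa : ∀ j, ∀ u v : X, ⟪P j u, v⟫ = ⟪u, P j v⟫)
    (hPidem : ∀ j, (P j).comp (P j) = P j)
    (hPorth : ∀ j j', j ≠ j' → (P j).comp (P j') = 0)
    (hQsa : ∀ ℓ, ∀ u v : Y, ⟪Q ℓ u, v⟫ = ⟪u, Q ℓ v⟫)
    (hQidem : ∀ ℓ, (Q ℓ).comp (Q ℓ) = Q ℓ)
    (hQorth : ∀ ℓ ℓ', ℓ ≠ ℓ' → (Q ℓ).comp (Q ℓ') = 0)
    (K' : X →L[ℝ] Y)
    (V : Finset (Fin n))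
    (ν : Fin n → ℝ) (hν : ∀ ℓ, 0 < ν ℓ) (hν1 : ∀ ℓ, ν ℓ ≤ 1)
    (φ τ : Fin m → ℝ) (hφ : ∀ j, 0 < φ j) (hτ : ∀ j, 0 < τ j)
    (ψ σ : Fin n → ℝ) (hψ : ∀ ℓ, 0 < ψ ℓ) (hσ : ∀ ℓ, 0 < σ ℓ)
    (η η' : ℝ) (hη : 0 < η) (hη' : 0 < η')
    (hcoupleP : ∀ j, φ j * τ j = η')
    (hcoupleD : ∀ ℓ, ν ℓ * ψ ℓ * σ ℓ = η)
    (hω : η / η' ≤ 1)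
    (τ0 : Fin m → ℝ) (σ1 : Fin n → ℝ)
    (hτ0 : ∀ j, 0 < τ0 j) (hσ1 : ∀ ℓ, 0 < σ1 ℓ)
    (w : Fin m → Fin n → Fin n → ℝ)
    (hwpos : ∀ j ℓ k, 0 < w j ℓ k)
    (hwsym : ∀ j ℓ k, w j ℓ k = 1 / w j k ℓ)
    (wtot : Fin m → Fin n → ℝ)
    (hwtot : ∀ j ℓ, wtot j ℓ =
      if (Q ℓ).comp (K'.comp (P j)) ≠ 0 then
        ∑ k : Fin n,
          (if ((Q ℓ).comp (K'.comp (P j))).comp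
                ((ContinuousLinearMap.adjoint K').comp (Q k)) ≠ 0 ∧ ℓ ∈ V
            then w j ℓ k else 0)
      else 0)
    (δ κ : ℝ) (hδ : 0 ≤ δ) (hδκ : δ ≤ κ) (hκ : κ < 1)
    (Φ : X →L[ℝ] X) (Ψ : Y →L[ℝ] Y) (Λ : X →L[ℝ] Y)
    (hΦ : Φ = ∑ j : Fin m, φ j • P j)
    (hΨ : Ψ = ∑ ℓ : Fin n, ψ ℓ • Q ℓ)
    (hΛ : Λ = -∑ ℓ ∈ V, ∑ j : Fin m, (σ ℓ * ψ ℓ) • ((Q ℓ).comp (K'.comp (P j))))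
    (hsteps : ∀ (ℓ : Fin n) (j : Fin m), σ ℓ * τ j ≤ σ1 ℓ * τ0 j)
    (hcond : ∀ ℓ, 1 - κ ≥
      ‖∑ j : Fin m, Real.sqrt (wtot j ℓ * σ1 ℓ * τ0 j / ν ℓ) •
          ((Q ℓ).comp (K'.comp (P j)))‖ ^ 2) :
    ∀ (x : X) (y : Y),
      ⟪Φ x, x⟫ - 2 * ⟪Λ x, y⟫ + ⟪Ψ y, y⟫ ≥
        δ * ⟪Φ x, x⟫ + ((κ - δ) / (1 - δ)) * ⟪Ψ y, y⟫ := by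
  intro x y
  classical
  set Kd := ContinuousLinearMap.adjoint K' with hKd
  -- projections facts
  have Pid : ∀ j (u : X), P j (P j u) = P j u := fun j u => by
    have := congrArg (fun T : X →L[ℝ] X => T u) (hPidem j)
    simpa using this
  have Qid : ∀ ℓ (u : Y), Q ℓ (Q ℓ u) = Q ℓ u := fun ℓ u => by
    have := congrArg (fun T : Y →L[ℝ] Y => T u) (hQidem ℓ)
    simpa using this
  have adjP : ∀ j, ContinuousLinearMap.adjoint (P j) = P j := fun j =>
    ((ContinuousLinearMap.eq_adjoint_iff (P j) (P j)).mpr (hPsa j)).symm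
  have adjQ : ∀ ℓ, ContinuousLinearMap.adjoint (Q ℓ) = Q ℓ := fun ℓ =>
    ((ContinuousLinearMap.eq_adjoint_iff (Q ℓ) (Q ℓ)).mpr (hQsa ℓ)).symm
  -- notation
  set B : Fin m → Fin n → (X →L[ℝ] Y) := fun j ℓ => (Q ℓ).comp (K'.comp (P j)) with hB
  have adjB : ∀ j ℓ, ContinuousLinearMap.adjoint (B j ℓ) = (P j).comp (Kd.comp (Q ℓ)) := by
    intro j ℓ
    rw [hB]
    rw [ContinuousLinearMap.adjoint_comp, ContinuousLinearMap.adjoint_comp, adjP, adjQ,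
      ContinuousLinearMap.comp_assoc]
  set g : Fin m → Fin n → X := fun j ℓ => P j (Kd (Q ℓ y)) with hg
  have hadjBy : ∀ j ℓ, ContinuousLinearMap.adjoint (B j ℓ) y = g j ℓ := by
    intro j ℓ; rw [adjB]; simp [hg]
  set z : Fin m → X := fun j => ∑ ℓ ∈ V, (σ ℓ * ψ ℓ) • g j ℓ with hz
  -- inner product identities
  have ha : ⟪Φ x, x⟫ = ∑ j, φ j * ‖P j x‖ ^ 2 := by
    rw [hΦ]
    rw [ContinuousLinearMap.sum_apply, sum_inner]
    refine Finset.sum_congr rfl fun j _ => ?_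
    rw [ContinuousLinearMap.smul_apply, real_inner_smul_left]
    congr 1
    calc ⟪P j x, x⟫ = ⟪P j (P j x), x⟫ := by rw [Pid]
      _ = ⟪P j x, P j x⟫ := hPsa j (P j x) x
      _ = ‖P j x‖ ^ 2 := real_inner_self_eq_norm_sq _
  have hb : ⟪Ψ y, y⟫ = ∑ ℓ, ψ ℓ * ‖Q ℓ y‖ ^ 2 := by
    rw [hΨ]
    rw [ContinuousLinearMap.sum_apply, sum_inner]
    refine Finset.sum_congr rfl fun ℓ _ => ?_
    rw [ContinuousLinearMap.smul_apply, real_inner_smul_left]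
    congr 1
    calc ⟪Q ℓ y, y⟫ = ⟪Q ℓ (Q ℓ y), y⟫ := by rw [Qid]
      _ = ⟪Q ℓ y, Q ℓ y⟫ := hQsa ℓ (Q ℓ y) y
      _ = ‖Q ℓ y‖ ^ 2 := real_inner_self_eq_norm_sq _
  have ha0 : (0:ℝ) ≤ ⟪Φ x, x⟫ := by
    rw [ha]
    exact Finset.sum_nonneg fun j _ => mul_nonneg (hφ j).le (sq_nonneg _)
  have hb0 : (0:ℝ) ≤ ⟪Ψ y, y⟫ := by
    rw [hb]
    exact Finset.sum_nonneg fun ℓ _ => mul_nonneg (hψ ℓ).le (sq_nonneg _)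
  -- Λ identity
  have hterm : ∀ j ℓ, ⟪(B j ℓ) x, y⟫ = ⟪P j x, g j ℓ⟫ := by
    intro j ℓ
    calc ⟪(B j ℓ) x, y⟫ = ⟪Q ℓ (K' (P j x)), y⟫ := by simp [hB]
      _ = ⟪K' (P j x), Q ℓ y⟫ := hQsa ℓ (K' (P j x)) y
      _ = ⟪P j x, Kd (Q ℓ y)⟫ := (ContinuousLinearMap.adjoint_inner_right K' (P j x) (Q ℓ y)).symm
      _ = ⟪P j (P j x), Kd (Q ℓ y)⟫ := by rw [Pid]
      _ = ⟪P j x, g j ℓ⟫ := hPsa j (P j x) _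
  have hc : ⟪Λ x, y⟫ = -∑ j, ⟪P j x, z j⟫ := by
    rw [hΛ]
    simp only [ContinuousLinearMap.neg_apply, inner_neg_left, ContinuousLinearMap.sum_apply,
      sum_inner, ContinuousLinearMap.smul_apply, real_inner_smul_left, neg_inj]
    rw [Finset.sum_comm]
    refine Finset.sum_congr rfl fun j _ => ?_
    rw [hz]
    simp only [inner_sum, real_inner_smul_right]
    refine Finset.sum_congr rfl fun ℓ _ => ?_
    rw [← hterm j ℓ]
  -- orthogonality of g in j
  have gorth : ∀ (ℓ k : Fin n) (j j' : Fin m), j ≠ j' → ⟪g j ℓ, g j' k⟫ = 0 := by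
    intro ℓ k j j' hjj
    have h0 : P j (P j' (Kd (Q k y))) = 0 := by
      have := congrArg (fun T : X →L[ℝ] X => T (Kd (Q k y))) (hPorth j j' hjj)
      simpa using this
    calc ⟪g j ℓ, g j' k⟫ = ⟪P j (Kd (Q ℓ y)), P j' (Kd (Q k y))⟫ := rfl
      _ = ⟪Kd (Q ℓ y), P j (P j' (Kd (Q k y)))⟫ := hPsa j _ _
      _ = 0 := by rw [h0, inner_zero_right]
  -- cross vanishing
  have cross0 : ∀ j ℓ k, (B j ℓ).comp (Kd.comp (Q k)) = 0 → ⟪g j ℓ, g j k⟫ = 0 := by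
    intro j ℓ k h0
    have h1 : Q ℓ (K' (P j (Kd (Q k y)))) = 0 := by
      have := congrArg (fun T : Y →L[ℝ] Y => T y) h0
      simpa [hB] using this
    calc ⟪g j ℓ, g j k⟫ = ⟪P j (Kd (Q ℓ y)), P j (Kd (Q k y))⟫ := rfl
      _ = ⟪Kd (Q ℓ y), P j (P j (Kd (Q k y)))⟫ := hPsa j _ _
      _ = ⟪Kd (Q ℓ y), P j (Kd (Q k y))⟫ := by rw [Pid]
      _ = ⟪Q ℓ y, K' (P j (Kd (Q k y)))⟫ := ContinuousLinearMap.adjoint_inner_left K' _ _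
      _ = ⟪y, Q ℓ (K' (P j (Kd (Q k y))))⟫ := hQsa ℓ _ _
      _ = 0 := by rw [h1, inner_zero_right]
  -- symmetry of the coupling condition
  have adjC : ∀ j ℓ k, ContinuousLinearMap.adjoint ((B j ℓ).comp (Kd.comp (Q k)))
      = (B j k).comp (Kd.comp (Q ℓ)) := by
    intro j ℓ k
    have hKdd : ContinuousLinearMap.adjoint Kd = K' := by
      rw [hKd, ContinuousLinearMap.adjoint_adjoint]
    apply ContinuousLinearMap.ext
    intro u
    rw [ContinuousLinearMap.adjoint_comp, ContinuousLinearMap.adjoint_comp, adjQ, adjB j ℓ, hKdd]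
    simp [hB, ContinuousLinearMap.comp_apply]
  have condSymm : ∀ j ℓ k, ((B j ℓ).comp (Kd.comp (Q k)) = 0 ↔ (B j k).comp (Kd.comp (Q ℓ)) = 0) := by
    intro j ℓ k
    constructor
    · intro h0
      rw [← adjC j ℓ k, h0, map_zero]
    · intro h0
      have h1 : ContinuousLinearMap.adjoint ((B j ℓ).comp (Kd.comp (Q k))) = 0 := by
        rw [adjC j ℓ k, h0]
      have := congrArg ContinuousLinearMap.adjoint h1
      simpa [ContinuousLinearMap.adjoint_adjoint] using this
  have hwtot0 : ∀ j ℓ, 0 ≤ wtot j ℓ := by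
    intro j ℓ
    rw [hwtot j ℓ]
    split
    · refine Finset.sum_nonneg fun k _ => ?_
      split_ifs
      · exact (hwpos j ℓ k).le
      · exact le_rfl
    · exact le_rfl
  -- bound on the norm of z j
  have hznorm : ∀ j, ‖z j‖ ^ 2 ≤ ∑ ℓ ∈ V, wtot j ℓ * (σ ℓ * ψ ℓ * ‖g j ℓ‖) ^ 2 := by
    intro j
    have expand : ‖z j‖ ^ 2 = ∑ ℓ ∈ V, ∑ k ∈ V, (σ ℓ * ψ ℓ) * ((σ k * ψ k) * ⟪g j ℓ, g j k⟫) := by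
      simp only [hz]
      rw [← real_inner_self_eq_norm_sq, sum_inner]
      refine Finset.sum_congr rfl fun ℓ _ => ?_
      rw [real_inner_smul_left, inner_sum, Finset.mul_sum]
      refine Finset.sum_congr rfl fun k _ => ?_
      rw [real_inner_smul_right]
    have s1 : (∑ ℓ ∈ V, ∑ k ∈ V, (σ ℓ * ψ ℓ) * ((σ k * ψ k) * ⟪g j ℓ, g j k⟫)) ≤ ∑ ℓ ∈ V, ∑ k ∈ V, (if (B j ℓ).comp (Kd.comp (Q k)) ≠ 0 then (w j ℓ k * (σ ℓ * ψ ℓ * ‖g j ℓ‖) ^ 2 + w j k ℓ * (σ k * ψ k * ‖g j k‖) ^ 2) / 2 else 0) := by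
      refine Finset.sum_le_sum fun ℓ _ => Finset.sum_le_sum fun k _ => ?_
      split_ifs with hC
      · have hip : ⟪g j ℓ, g j k⟫ ≤ ‖g j ℓ‖ * ‖g j k‖ := real_inner_le_norm _ _
        have hww : w j ℓ k * w j k ℓ = 1 := by
          rw [hwsym j ℓ k]
          exact one_div_mul_cancel (hwpos j k ℓ).ne'
        exact cross_bound' (mul_pos (hσ ℓ) (hψ ℓ)) (mul_pos (hσ k) (hψ k)) (hwpos j ℓ k) hww
          (norm_nonneg _) (norm_nonneg _) hip
      · rw [cross0 j ℓ k (not_not.mp hC)]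
        simp
    have s2 : (∑ ℓ ∈ V, ∑ k ∈ V, (if (B j ℓ).comp (Kd.comp (Q k)) ≠ 0 then (w j ℓ k * (σ ℓ * ψ ℓ * ‖g j ℓ‖) ^ 2 + w j k ℓ * (σ k * ψ k * ‖g j k‖) ^ 2) / 2 else 0)) = ∑ ℓ ∈ V, ∑ k ∈ V, (if (B j ℓ).comp (Kd.comp (Q k)) ≠ 0 then w j ℓ k * (σ ℓ * ψ ℓ * ‖g j ℓ‖) ^ 2 else 0) := by
      have split1 : ∀ ℓ k, (if (B j ℓ).comp (Kd.comp (Q k)) ≠ 0 then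
          (w j ℓ k * (σ ℓ * ψ ℓ * ‖g j ℓ‖) ^ 2 + w j k ℓ * (σ k * ψ k * ‖g j k‖) ^ 2) / 2 else 0)
          = (if (B j ℓ).comp (Kd.comp (Q k)) ≠ 0 then w j ℓ k * (σ ℓ * ψ ℓ * ‖g j ℓ‖) ^ 2 else 0) / 2
          + (if (B j ℓ).comp (Kd.comp (Q k)) ≠ 0 then w j k ℓ * (σ k * ψ k * ‖g j k‖) ^ 2 else 0) / 2 := by
        intro ℓ k
        split_ifs
        · ring
        · simp
      simp only [split1]
      rw [Finset.sum_congr rfl fun ℓ (_ : ℓ ∈ V) => Finset.sum_add_distrib, Finset.sum_add_distrib]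
      have swap : ∑ ℓ ∈ V, ∑ k ∈ V, (if (B j ℓ).comp (Kd.comp (Q k)) ≠ 0 then
            w j k ℓ * (σ k * ψ k * ‖g j k‖) ^ 2 else 0) / 2
          = ∑ ℓ ∈ V, ∑ k ∈ V, (if (B j ℓ).comp (Kd.comp (Q k)) ≠ 0 then
            w j ℓ k * (σ ℓ * ψ ℓ * ‖g j ℓ‖) ^ 2 else 0) / 2 := by
        rw [Finset.sum_comm]
        refine Finset.sum_congr rfl fun ℓ _ => Finset.sum_congr rfl fun k _ => ?_
        congr 1
        refine if_congr ?_ rfl rfl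
        exact not_congr (condSymm j k ℓ)
      rw [swap, ← Finset.sum_add_distrib]
      refine Finset.sum_congr rfl fun ℓ _ => ?_
      rw [← Finset.sum_add_distrib]
      refine Finset.sum_congr rfl fun k _ => ?_
      ring
    have s3 : (∑ ℓ ∈ V, ∑ k ∈ V, (if (B j ℓ).comp (Kd.comp (Q k)) ≠ 0 then w j ℓ k * (σ ℓ * ψ ℓ * ‖g j ℓ‖) ^ 2 else 0)) ≤ ∑ ℓ ∈ V, wtot j ℓ * (σ ℓ * ψ ℓ * ‖g j ℓ‖) ^ 2 := by
      refine Finset.sum_le_sum fun ℓ hℓ => ?_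
      by_cases hBz : B j ℓ = 0
      · have hg0 : g j ℓ = 0 := by
          rw [← hadjBy j ℓ, hBz, map_zero]
          rfl
        simp [hg0]
      · rw [hwtot j ℓ, if_pos (by simpa [hB] using hBz), Finset.sum_mul]
        have eterm : ∀ k ∈ V, (if (B j ℓ).comp (Kd.comp (Q k)) ≠ 0 then
            w j ℓ k * (σ ℓ * ψ ℓ * ‖g j ℓ‖) ^ 2 else 0)
            = (if ((B j ℓ).comp (Kd.comp (Q k)) ≠ 0 ∧ ℓ ∈ V) then w j ℓ k else 0)
              * (σ ℓ * ψ ℓ * ‖g j ℓ‖) ^ 2 := by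
          intro k _
          by_cases hC : (B j ℓ).comp (Kd.comp (Q k)) ≠ 0
          · rw [if_pos hC, if_pos ⟨hC, hℓ⟩]
          · rw [if_neg hC, if_neg (by tauto), zero_mul]
        rw [Finset.sum_congr rfl eterm]
        refine Finset.sum_le_sum_of_subset_of_nonneg (Finset.subset_univ V) fun k _ _ => ?_
        split_ifs with hC
        · exact mul_nonneg (hwpos j ℓ k).le (sq_nonneg _)
        · simp
    rw [expand]
    exact (s1.trans_eq s2).trans s3

  -- the per-dual-block operator norm estimate
  have hF7 : ∀ ℓ, ∑ j, (wtot j ℓ * σ1 ℓ * τ0 j / ν ℓ) * ‖g j ℓ‖ ^ 2 ≤ (1 - κ) * ‖Q ℓ y‖ ^ 2 := by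
    intro ℓ
    have hc2 : ∀ j, Real.sqrt (wtot j ℓ * σ1 ℓ * τ0 j / ν ℓ) ^ 2 = wtot j ℓ * σ1 ℓ * τ0 j / ν ℓ := by
      intro j
      have h0 := hwtot0 j ℓ
      have h1 := (hσ1 ℓ).le
      have h2 := (hτ0 j).le
      have h3 := hν ℓ
      exact Real.sq_sqrt (by positivity)
    have horth : ∀ j ∈ Finset.univ, ∀ j' ∈ Finset.univ, j ≠ j' →
        ⟪Real.sqrt (wtot j ℓ * σ1 ℓ * τ0 j / ν ℓ) • g j ℓ,
          Real.sqrt (wtot j' ℓ * σ1 ℓ * τ0 j' / ν ℓ) • g j' ℓ⟫ = (0:ℝ) := by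
      intro j _ j' _ hjj
      rw [real_inner_smul_left, real_inner_smul_right, gorth ℓ ℓ j j' hjj]
      ring
    have hsum : ∑ j, (wtot j ℓ * σ1 ℓ * τ0 j / ν ℓ) * ‖g j ℓ‖ ^ 2
        = ‖∑ j, Real.sqrt (wtot j ℓ * σ1 ℓ * τ0 j / ν ℓ) • g j ℓ‖ ^ 2 := by
      rw [orth_sum_sq' Finset.univ _ horth]
      refine Finset.sum_congr rfl fun j _ => ?_
      rw [norm_smul, mul_pow, Real.norm_eq_abs, sq_abs, hc2 j]
    have hop : ∑ j, Real.sqrt (wtot j ℓ * σ1 ℓ * τ0 j / ν ℓ) • g j ℓ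
        = (ContinuousLinearMap.adjoint
            (∑ j, Real.sqrt (wtot j ℓ * σ1 ℓ * τ0 j / ν ℓ) • B j ℓ)) (Q ℓ y) := by
      rw [map_sum, ContinuousLinearMap.sum_apply]
      refine Finset.sum_congr rfl fun j _ => ?_
      rw [map_smulₛₗ, starRingEnd_apply, star_trivial, ContinuousLinearMap.smul_apply, adjB]
      simp only [ContinuousLinearMap.comp_apply]
      rw [Qid]
    rw [hsum, hop]
    have hnorm : ‖(ContinuousLinearMap.adjoint
        (∑ j, Real.sqrt (wtot j ℓ * σ1 ℓ * τ0 j / ν ℓ) • B j ℓ)) (Q ℓ y)‖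
        ≤ ‖∑ j, Real.sqrt (wtot j ℓ * σ1 ℓ * τ0 j / ν ℓ) • B j ℓ‖ * ‖Q ℓ y‖ := by
      refine (ContinuousLinearMap.le_opNorm _ _).trans ?_
      rw [LinearIsometryEquiv.norm_map]
    calc ‖(ContinuousLinearMap.adjoint
            (∑ j, Real.sqrt (wtot j ℓ * σ1 ℓ * τ0 j / ν ℓ) • B j ℓ)) (Q ℓ y)‖ ^ 2
        ≤ (‖∑ j, Real.sqrt (wtot j ℓ * σ1 ℓ * τ0 j / ν ℓ) • B j ℓ‖ * ‖Q ℓ y‖) ^ 2 :=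
          pow_le_pow_left₀ (norm_nonneg _) hnorm 2
      _ = ‖∑ j, Real.sqrt (wtot j ℓ * σ1 ℓ * τ0 j / ν ℓ) • B j ℓ‖ ^ 2 * ‖Q ℓ y‖ ^ 2 :=
          mul_pow _ _ 2
      _ ≤ (1 - κ) * ‖Q ℓ y‖ ^ 2 := mul_le_mul_of_nonneg_right (hcond ℓ) (sq_nonneg _)
  -- the coefficient inequality
  have hcoeff : ∀ (ℓ : Fin n) (j : Fin m),
      wtot j ℓ * (σ ℓ * ψ ℓ * ‖g j ℓ‖) ^ 2 / φ j
        ≤ ψ ℓ * ((wtot j ℓ * σ1 ℓ * τ0 j / ν ℓ) * ‖g j ℓ‖ ^ 2) := by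
    intro ℓ j
    have e1 : σ ℓ * ψ ℓ * ν ℓ = η := by rw [← hcoupleD ℓ]; ring
    have e2 : φ j * τ j = η' := hcoupleP j
    have hηη' : η ≤ η' := (div_le_one hη').mp hω
    have core : (σ ℓ * ψ ℓ) ^ 2 / φ j ≤ ψ ℓ * σ1 ℓ * τ0 j / ν ℓ := by
      rw [div_le_div_iff₀ (hφ j) (hν ℓ), ← mul_le_mul_iff_of_pos_right (hτ j)]
      calc (σ ℓ * ψ ℓ) ^ 2 * ν ℓ * τ j = σ ℓ * ψ ℓ * (σ ℓ * ψ ℓ * ν ℓ) * τ j := by ring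
        _ = ψ ℓ * (σ ℓ * τ j) * η := by rw [e1]; ring
        _ ≤ ψ ℓ * (σ1 ℓ * τ0 j) * η' := by
            refine mul_le_mul (mul_le_mul_of_nonneg_left (hsteps ℓ j) (hψ ℓ).le) hηη' hη.le ?_
            have := hψ ℓ
            have := hσ1 ℓ
            have := hτ0 j
            positivity
        _ = ψ ℓ * σ1 ℓ * τ0 j * (φ j * τ j) := by rw [e2]; ring
        _ = ψ ℓ * σ1 ℓ * τ0 j * φ j * τ j := by ring
    have expand1 : wtot j ℓ * (σ ℓ * ψ ℓ * ‖g j ℓ‖) ^ 2 / φ j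
        = (wtot j ℓ * ‖g j ℓ‖ ^ 2) * ((σ ℓ * ψ ℓ) ^ 2 / φ j) := by ring
    have expand2 : ψ ℓ * ((wtot j ℓ * σ1 ℓ * τ0 j / ν ℓ) * ‖g j ℓ‖ ^ 2)
        = (wtot j ℓ * ‖g j ℓ‖ ^ 2) * (ψ ℓ * σ1 ℓ * τ0 j / ν ℓ) := by ring
    rw [expand1, expand2]
    exact mul_le_mul_of_nonneg_left core (mul_nonneg (hwtot0 j ℓ) (sq_nonneg _))
  -- the total dual bound
  have hS : ∑ j, ‖z j‖ ^ 2 / φ j ≤ (1 - κ) * ⟪Ψ y, y⟫ := by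
    have s1 : ∑ j, ‖z j‖ ^ 2 / φ j
        ≤ ∑ j, ∑ ℓ ∈ V, wtot j ℓ * (σ ℓ * ψ ℓ * ‖g j ℓ‖) ^ 2 / φ j := by
      refine Finset.sum_le_sum fun j _ => ?_
      rw [← Finset.sum_div]
      exact div_le_div_of_nonneg_right (hznorm j) (hφ j).le
    have s2 : ∑ j, ∑ ℓ ∈ V, wtot j ℓ * (σ ℓ * ψ ℓ * ‖g j ℓ‖) ^ 2 / φ j
        = ∑ ℓ ∈ V, ∑ j, wtot j ℓ * (σ ℓ * ψ ℓ * ‖g j ℓ‖) ^ 2 / φ j := Finset.sum_comm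
    have s3 : ∑ ℓ ∈ V, ∑ j, wtot j ℓ * (σ ℓ * ψ ℓ * ‖g j ℓ‖) ^ 2 / φ j
        ≤ ∑ ℓ ∈ V, ψ ℓ * ((1 - κ) * ‖Q ℓ y‖ ^ 2) := by
      refine Finset.sum_le_sum fun ℓ _ => ?_
      have s3a : ∑ j, wtot j ℓ * (σ ℓ * ψ ℓ * ‖g j ℓ‖) ^ 2 / φ j
          ≤ ∑ j, ψ ℓ * ((wtot j ℓ * σ1 ℓ * τ0 j / ν ℓ) * ‖g j ℓ‖ ^ 2) :=
        Finset.sum_le_sum fun j _ => hcoeff ℓ j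
      refine s3a.trans ?_
      rw [← Finset.mul_sum]
      exact mul_le_mul_of_nonneg_left (hF7 ℓ) (hψ ℓ).le
    have s4 : ∑ ℓ ∈ V, ψ ℓ * ((1 - κ) * ‖Q ℓ y‖ ^ 2) ≤ (1 - κ) * ⟪Ψ y, y⟫ := by
      rw [hb, Finset.mul_sum]
      have s4a : ∑ ℓ ∈ V, ψ ℓ * ((1 - κ) * ‖Q ℓ y‖ ^ 2)
          ≤ ∑ ℓ, ψ ℓ * ((1 - κ) * ‖Q ℓ y‖ ^ 2) := by
        refine Finset.sum_le_sum_of_subset_of_nonneg (Finset.subset_univ V) fun ℓ _ _ => ?_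
        have h1 : (0:ℝ) ≤ 1 - κ := by linarith
        exact mul_nonneg (hψ ℓ).le (mul_nonneg h1 (sq_nonneg _))
      refine s4a.trans (le_of_eq ?_)
      exact Finset.sum_congr rfl fun ℓ _ => by ring
    exact ((s1.trans_eq s2).trans s3).trans s4
  -- Cauchy–Schwarz over the primal blocks
  have hT : |⟪Λ x, y⟫| ≤ ∑ j, ‖P j x‖ * ‖z j‖ := by
    rw [hc, abs_neg]
    refine (Finset.abs_sum_le_sum_abs _ _).trans ?_
    exact Finset.sum_le_sum fun j _ => abs_real_inner_le_norm _ _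
  have hCS : (∑ j, ‖P j x‖ * ‖z j‖) ^ 2 ≤ ⟪Φ x, x⟫ * ∑ j, ‖z j‖ ^ 2 / φ j := by
    have h := Finset.sum_mul_sq_le_sq_mul_sq Finset.univ
      (fun j => Real.sqrt (φ j) * ‖P j x‖) (fun j => ‖z j‖ / Real.sqrt (φ j))
    have e1 : ∀ j : Fin m, Real.sqrt (φ j) * ‖P j x‖ * (‖z j‖ / Real.sqrt (φ j))
        = ‖P j x‖ * ‖z j‖ := by
      intro j
      have h0 : Real.sqrt (φ j) ≠ 0 := (Real.sqrt_pos.mpr (hφ j)).ne'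
      field_simp
    have e2 : ∀ j : Fin m, (Real.sqrt (φ j) * ‖P j x‖) ^ 2 = φ j * ‖P j x‖ ^ 2 := by
      intro j
      rw [mul_pow, Real.sq_sqrt (hφ j).le]
    have e3 : ∀ j : Fin m, (‖z j‖ / Real.sqrt (φ j)) ^ 2 = ‖z j‖ ^ 2 / φ j := by
      intro j
      rw [div_pow, Real.sq_sqrt (hφ j).le]
    have eq1 : (∑ j, ‖P j x‖ * ‖z j‖) ^ 2
        = (∑ j, Real.sqrt (φ j) * ‖P j x‖ * (‖z j‖ / Real.sqrt (φ j))) ^ 2 := by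
      congr 1
      exact Finset.sum_congr rfl fun j _ => (e1 j).symm
    rw [eq1, ha]
    refine h.trans (le_of_eq ?_)
    congr 1
    · exact Finset.sum_congr rfl fun j _ => e2 j
    · exact Finset.sum_congr rfl fun j _ => e3 j
  have hmain : ⟪Λ x, y⟫ ^ 2 ≤ (1 - κ) * ⟪Φ x, x⟫ * ⟪Ψ y, y⟫ := by
    have h1 : ⟪Λ x, y⟫ ^ 2 ≤ (∑ j, ‖P j x‖ * ‖z j‖) ^ 2 := by
      rw [← sq_abs]
      refine pow_le_pow_left₀ (abs_nonneg _) hT 2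
    have h2 : ⟪Φ x, x⟫ * ∑ j, ‖z j‖ ^ 2 / φ j ≤ ⟪Φ x, x⟫ * ((1 - κ) * ⟪Ψ y, y⟫) :=
      mul_le_mul_of_nonneg_left hS ha0
    calc ⟪Λ x, y⟫ ^ 2 ≤ ⟪Φ x, x⟫ * ∑ j, ‖z j‖ ^ 2 / φ j := h1.trans hCS
      _ ≤ ⟪Φ x, x⟫ * ((1 - κ) * ⟪Ψ y, y⟫) := h2
      _ = (1 - κ) * ⟪Φ x, x⟫ * ⟪Ψ y, y⟫ := by ring
  -- conclusion
  have hd : (0:ℝ) < 1 - δ := by linarith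
  have hk0 : (0:ℝ) ≤ 1 - κ := by linarith
  have key := final_alg' ha0 hb0 hd hk0 hmain
  rw [ge_iff_le, ← sub_nonneg]
  have h4 : (⟪Φ x, x⟫ - 2 * ⟪Λ x, y⟫ + ⟪Ψ y, y⟫
      - (δ * ⟪Φ x, x⟫ + (κ - δ) / (1 - δ) * ⟪Ψ y, y⟫)) * (1 - δ)
      = (1 - δ) ^ 2 * ⟪Φ x, x⟫ + (1 - κ) * ⟪Ψ y, y⟫ - 2 * (1 - δ) * ⟪Λ x, y⟫ := by
    field_simp
    ring
  nlinarith [key, h4, hd]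
end

section
/- If z_j^{i+1} = (1 + z_j^i)/√(1 + 1/z̄_i) for all j = 1,…,m and i = 0,…,N−1, then z̄_N ≤ z̄_0 + N/2. -/
lemma key_ineq (x : ℝ) (hx : 0 < x) :
    (1 + x) / Real.sqrt (1 + 1 / x) ≤ x + 1 / 2 := by
  set c := Real.sqrt (1 + 1 / x) with hc
  have h1 : (0:ℝ) < 1 + 1 / x := by positivity
  have hcpos : 0 < c := Real.sqrt_pos.mpr h1
  have hc2 : c ^ 2 = 1 + 1 / x := Real.sq_sqrt h1.le
  have hxc2 : x * c ^ 2 = x + 1 := by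
    rw [hc2, mul_add, mul_one_div_cancel hx.ne', mul_one]
  rw [div_le_iff₀ hcpos]
  nlinarith [sq_nonneg (c * (x + 1 / 2) - (1 + x)), mul_pos hx hcpos,
    sq_nonneg (c - 1), sq_nonneg (x * c - x)]

/-- Technical lemma (Lemma B.2): the recursion
`z_j^{i+1} = (1 + z_j^i)/√(1 + 1/z̄_i)` gives `z̄_N ≤ z̄_0 + N/2`. -/
theorem stmt11 {m : ℕ} [Nonempty (Fin m)] (N : ℕ)
    (z : ℕ → Fin m → ℝ)
    (hz : ∀ i ≤ N, ∀ j, 0 < z i j)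
    (zbar : ℕ → ℝ)
    (hzbar : ∀ i, zbar i = Finset.univ.sup' Finset.univ_nonempty (z i))
    (hrec : ∀ i < N, ∀ j,
      z (i + 1) j = (1 + z i j) / Real.sqrt (1 + 1 / zbar i)) :
    zbar N ≤ zbar 0 + N / 2 := by
  have hzb_pos : ∀ i ≤ N, 0 < zbar i := by
    intro i hi
    obtain ⟨j⟩ := ‹Nonempty (Fin m)›
    have := Finset.le_sup' (z i) (Finset.mem_univ j)
    rw [hzbar i]
    exact lt_of_lt_of_le (hz i hi j) this
  have hstep : ∀ i < N, zbar (i + 1) ≤ zbar i + 1 / 2 := by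
    intro i hi
    rw [hzbar (i + 1)]
    apply Finset.sup'_le
    intro j _
    rw [hrec i hi j]
    have hzle : z i j ≤ zbar i := by
      rw [hzbar i]; exact Finset.le_sup' (z i) (Finset.mem_univ j)
    have h1 : (0:ℝ) < Real.sqrt (1 + 1 / zbar i) := by
      have := hzb_pos i hi.le
      apply Real.sqrt_pos.mpr; positivity
    calc (1 + z i j) / Real.sqrt (1 + 1 / zbar i)
        ≤ (1 + zbar i) / Real.sqrt (1 + 1 / zbar i) := by
          exact div_le_div_of_nonneg_right (by linarith) h1.le
      _ ≤ zbar i + 1 / 2 := key_ineq _ (hzb_pos i hi.le)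
  have main : ∀ n ≤ N, zbar n ≤ zbar 0 + n / 2 := by
    intro n
    induction n with
    | zero => intro _; simp
    | succ k ih =>
      intro hk
      have h1 := hstep k (Nat.lt_of_succ_le hk)
      have h2 := ih (Nat.le_of_succ_le hk)
      push_cast
      linarith
  exact main N le_rfl
end

section
/- For every N ≥ 0 and every j = 1,…,m, φ_j^N ≥ ((2z̄_0 + N + 1)(2z̄_0 + N))/((2z̄_0 + 1)·2z̄_0)·φ_j^0; in particular each test parameter φ_j^N grows at least quadratically in the iteration count N. -/
/-- Quadratic growth of the testing parameters `φ_j^N` under the accelerated step-length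
rules of the full-dual-update method. -/
theorem stmt12 {m : ℕ} [Nonempty (Fin m)]
    (γ τ0 φ0 : Fin m → ℝ)
    (hγ : ∀ j, 0 < γ j) (hτ0 : ∀ j, 0 < τ0 j) (hφ0 : ∀ j, 0 < φ0 j)
    (τ φ : ℕ → Fin m → ℝ) (ω : ℕ → ℝ)
    (hτinit : τ 0 = τ0) (hφinit : φ 0 = φ0)
    (hω : ∀ i, ω i = Finset.univ.sup' Finset.univ_nonempty
      (fun j => (Real.sqrt (1 + 2 * τ i j * γ j))⁻¹))
    (hτrec : ∀ i j, τ (i + 1) j = τ i j / ((1 + 2 * τ i j * γ j) * ω i))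
    (hφrec : ∀ i j, φ (i + 1) j = (1 + 2 * τ i j * γ j) * φ i j)
    (zbar0 : ℝ)
    (hzbar0 : zbar0 = Finset.univ.sup' Finset.univ_nonempty
      (fun j => 1 / (2 * τ0 j * γ j))) :
    ∀ (N : ℕ) (j : Fin m),
      φ N j ≥ ((2 * zbar0 + N + 1) * (2 * zbar0 + N))
        / ((2 * zbar0 + 1) * (2 * zbar0)) * φ0 j := by
  obtain ⟨j0⟩ := ‹Nonempty (Fin m)›
  have hzpos : 0 < zbar0 := by
    have h1 : (1 / (2 * τ0 j0 * γ j0)) ≤ zbar0 := by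
      rw [hzbar0]; exact Finset.le_sup' (fun j => 1 / (2 * τ0 j * γ j)) (Finset.mem_univ j0)
    have h2 : 0 < 1 / (2 * τ0 j0 * γ j0) := by
      have := hτ0 j0; have := hγ j0; positivity
    linarith
  set zb : ℕ → ℝ := fun i => Finset.univ.sup' Finset.univ_nonempty
      (fun j => 1 / (2 * τ i j * γ j)) with hzb
  have key : ∀ i : ℕ, (∀ j, 0 < τ i j) ∧ zb i ≤ zbar0 + i / 2 ∧
      ∀ j, φ i j ≥ ((2 * zbar0 + i + 1) * (2 * zbar0 + i))
        / ((2 * zbar0 + 1) * (2 * zbar0)) * φ0 j := by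
    intro i
    induction i with
    | zero =>
      have hz0 : zb 0 = zbar0 := by rw [hzbar0, hzb]; simp [hτinit]
      refine ⟨by simpa [hτinit] using hτ0, by rw [hz0]; simp, ?_⟩
      intro j
      have hD : (2 * zbar0 + 1) * (2 * zbar0) ≠ 0 := by positivity
      have : ((2 * zbar0 + (0:ℕ) + 1) * (2 * zbar0 + (0:ℕ)))
          / ((2 * zbar0 + 1) * (2 * zbar0)) = 1 := by
        push_cast; rw [add_zero, div_self hD]
      rw [this, hφinit, one_mul]
    | succ i ih =>
      obtain ⟨hτpos, hzble, hφge⟩ := ih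
      have hθpos : ∀ j, 0 < 2 * τ i j * γ j := fun j => by
        have := hτpos j; have := hγ j; positivity
      have hle : ∀ j, 1 / (2 * τ i j * γ j) ≤ zb i := fun j => by
        simp only [hzb]
        exact Finset.le_sup' (fun j => 1 / (2 * τ i j * γ j)) (Finset.mem_univ j)
      have hzbpos : 0 < zb i := lt_of_lt_of_le (by have := hθpos j0; positivity) (hle j0)
      have hθge : ∀ j, 1 / zb i ≤ 2 * τ i j * γ j := fun j =>
        (one_div_le hzbpos (hθpos j)).2 (hle j)
      -- bound on ω
      set s : ℝ := Real.sqrt (1 + 1 / zb i) with hs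
      have hspos : 0 < s := Real.sqrt_pos.mpr (by positivity)
      have hs2 : s ^ 2 = 1 + 1 / zb i := Real.sq_sqrt (by positivity)
      have hωle : ω i ≤ s⁻¹ := by
        rw [hω i]
        apply Finset.sup'_le
        intro j _
        have h1 : 1 + 1 / zb i ≤ 1 + 2 * τ i j * γ j := by linarith [hθge j]
        exact inv_anti₀ hspos (Real.sqrt_le_sqrt h1)
      have hωpos : 0 < ω i := by
        have h1 : (Real.sqrt (1 + 2 * τ i j0 * γ j0))⁻¹ ≤ ω i := by
          rw [hω i]
          exact Finset.le_sup' (fun j => (Real.sqrt (1 + 2 * τ i j * γ j))⁻¹) (Finset.mem_univ j0)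
        have h2 : 0 < (Real.sqrt (1 + 2 * τ i j0 * γ j0))⁻¹ := by
          have := hθpos j0
          have : 0 < Real.sqrt (1 + 2 * τ i j0 * γ j0) := Real.sqrt_pos.mpr (by linarith)
          positivity
        linarith
      have hτpos' : ∀ j, 0 < τ (i + 1) j := by
        intro j
        rw [hτrec]
        exact div_pos (hτpos j) (mul_pos (by linarith [hθpos j]) hωpos)
      refine ⟨hτpos', ?_, ?_⟩
      · -- zb (i+1) ≤ zbar0 + (i+1)/2
        have hstep : zb (i + 1) ≤ zb i + 1 / 2 := by
          simp only [hzb]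
          apply Finset.sup'_le
          intro j _
          have hnew : 1 / (2 * τ (i + 1) j * γ j)
              = (1 / (2 * τ i j * γ j) + 1) * ω i := by
            rw [hτrec]
            have h1 := hθpos j
            field_simp
            have h2 : τ i j * γ j ≠ 0 := by have := hτpos j; have := hγ j; positivity
            rw [div_add' _ _ _ h2, div_left_inj' h2]; ring
          rw [hnew]
          have h1 : (1 / (2 * τ i j * γ j) + 1) * ω i ≤ (zb i + 1) * ω i := by
            apply mul_le_mul_of_nonneg_right _ (le_of_lt hωpos)
            linarith [hle j]
          have h2 : (zb i + 1) * ω i ≤ (zb i + 1) * s⁻¹ := by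
            apply mul_le_mul_of_nonneg_left hωle
            linarith
          have h3 : (zb i + 1) * s⁻¹ ≤ zb i + 1 / 2 := by
            rw [mul_inv_le_iff₀ hspos]
            have h4 : s ^ 2 * zb i = zb i + 1 := by
              rw [hs2]; field_simp
            nlinarith [sq_nonneg (s * zb i - (zb i + 1 / 2)), hspos, hzbpos, h4]
          linarith
        have : zb i + 1 / 2 ≤ zbar0 + (i + 1 : ℕ) / 2 := by
          push_cast; linarith
        linarith
      · -- φ bound
        intro j
        set a : ℝ := 2 * zbar0 + i with ha
        have hapos : 0 < a := by have : (0:ℝ) ≤ i := Nat.cast_nonneg i; positivity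
        have hθa : 2 / a ≤ 2 * τ i j * γ j := by
          have h1 : 1 / (a / 2) ≤ 1 / zb i := by
            apply one_div_le_one_div_of_le hzbpos
            rw [ha]; linarith [hzble]
          have h2 : 1 / (a / 2) = 2 / a := by
            rw [one_div_div]
          linarith [hθge j, h2 ▸ h1]
        have hφpos : 0 < φ i j := lt_of_lt_of_le (by
          have h1 : 0 < ((2 * zbar0 + i + 1) * (2 * zbar0 + i))
              / ((2 * zbar0 + 1) * (2 * zbar0)) * φ0 j := by
            have := hφ0 j
            have : (0:ℝ) ≤ i := Nat.cast_nonneg i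
            positivity
          exact h1) (hφge j)
        have hD : (0:ℝ) < (2 * zbar0 + 1) * (2 * zbar0) := by positivity
        have hratio : (1 + 2 / a) * (((2 * zbar0 + i + 1) * (2 * zbar0 + i))
            / ((2 * zbar0 + 1) * (2 * zbar0)))
            = ((2 * zbar0 + (i+1:ℕ) + 1) * (2 * zbar0 + (i+1:ℕ)))
              / ((2 * zbar0 + 1) * (2 * zbar0)) := by
          push_cast
          rw [ha]
          field_simp
          ring
        rw [hφrec]
        calc ((2 * zbar0 + (i+1:ℕ) + 1) * (2 * zbar0 + (i+1:ℕ)))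
              / ((2 * zbar0 + 1) * (2 * zbar0)) * φ0 j
            = (1 + 2 / a) * (((2 * zbar0 + i + 1) * (2 * zbar0 + i))
              / ((2 * zbar0 + 1) * (2 * zbar0))) * φ0 j := by rw [hratio]
          _ ≤ (1 + 2 / a) * φ i j := by
              rw [mul_assoc]
              apply mul_le_mul_of_nonneg_left (hφge j)
              positivity
          _ ≤ (1 + 2 * τ i j * γ j) * φ i j := by
              apply mul_le_mul_of_nonneg_right _ (le_of_lt hφpos)
              linarith
  intro N j
  exact (key N).2.2 j
end

section
/- For every i ≥ 0, ω̄ = max{ max_{j=1,…,m} (1 + 2τ_j^i γ̃_j)^{−1}, max_{ℓ=1,…,n} (1 + 2σ_ℓ^i γ̄_ℓ)^{−1} }; consequently the step lengths are non-increasing: τ_j^{i+1} ≤ τ_j^i and σ_ℓ^{i+1} ≤ σ_ℓ^i for all i, j, ℓ. -/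
private lemma val_rec (t g ω : ℝ) (ht : 0 < t) (hg : 0 < g) (hω : 0 < ω) :
    (1 + 2 * (t / ((1 + 2 * t * g) * ω)) * g)⁻¹ = ω / (ω + 1 - (1 + 2 * t * g)⁻¹) := by
  have htg : 0 < t * g := mul_pos ht hg
  have h1 : (0:ℝ) < 1 + 2 * t * g := by positivity
  rw [show ω / (ω + 1 - (1 + 2 * t * g)⁻¹) = ((ω + 1 - (1 + 2 * t * g)⁻¹) / ω)⁻¹ by
    rw [inv_div]]
  congr 1
  field_simp
  ring

/-- Under the linear-rate step-length rules, the quantity `ω̄` stays invariant along the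
iterations, and the step lengths are non-increasing. -/
theorem stmt13 {m n : ℕ} [Nonempty (Fin m)] [Nonempty (Fin n)]
    (γtil : Fin m → ℝ) (γbar : Fin n → ℝ)
    (hγtil : ∀ j, 0 < γtil j) (hγbar : ∀ ℓ, 0 < γbar ℓ)
    (τ0 : Fin m → ℝ) (σ0 : Fin n → ℝ)
    (hτ0 : ∀ j, 0 < τ0 j) (hσ0 : ∀ ℓ, 0 < σ0 ℓ)
    (ωbar : ℝ)
    (hωbar : ωbar = max
      (Finset.univ.sup' Finset.univ_nonempty (fun j => (1 + 2 * τ0 j * γtil j)⁻¹))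
      (Finset.univ.sup' Finset.univ_nonempty (fun ℓ => (1 + 2 * σ0 ℓ * γbar ℓ)⁻¹)))
    (τ : ℕ → Fin m → ℝ) (σ : ℕ → Fin n → ℝ)
    (hτinit : τ 0 = τ0) (hσinit : σ 0 = σ0)
    (hτrec : ∀ i j, τ (i + 1) j = τ i j / ((1 + 2 * τ i j * γtil j) * ωbar))
    (hσrec : ∀ i ℓ, σ (i + 1) ℓ = σ i ℓ / ((1 + 2 * σ i ℓ * γbar ℓ) * ωbar)) :
    (∀ i : ℕ, ωbar = max
        (Finset.univ.sup' Finset.univ_nonempty (fun j => (1 + 2 * τ i j * γtil j)⁻¹))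
        (Finset.univ.sup' Finset.univ_nonempty (fun ℓ => (1 + 2 * σ i ℓ * γbar ℓ)⁻¹)))
      ∧ (∀ (i : ℕ) (j : Fin m), τ (i + 1) j ≤ τ i j)
      ∧ (∀ (i : ℕ) (ℓ : Fin n), σ (i + 1) ℓ ≤ σ i ℓ) := by
  -- ωbar is positive
  have hωpos : 0 < ωbar := by
    obtain ⟨j⟩ := ‹Nonempty (Fin m)›
    have h1 : (0:ℝ) < (1 + 2 * τ0 j * γtil j)⁻¹ := by
      have := hτ0 j; have := hγtil j; positivity
    have h2 : (1 + 2 * τ0 j * γtil j)⁻¹ ≤ ωbar := by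
      rw [hωbar]
      exact le_trans (Finset.le_sup' (fun j => (1 + 2 * τ0 j * γtil j)⁻¹) (Finset.mem_univ j)) (le_max_left _ _)
    linarith
  -- positivity of all iterates
  have hpos : ∀ i, (∀ j, 0 < τ i j) ∧ (∀ ℓ, 0 < σ i ℓ) := by
    intro i
    induction i with
    | zero => exact ⟨by simpa [hτinit] using hτ0, by simpa [hσinit] using hσ0⟩
    | succ i ih =>
      refine ⟨fun j => ?_, fun ℓ => ?_⟩
      · rw [hτrec]
        have := ih.1 j; have := hγtil j; positivity
      · rw [hσrec]
        have := ih.2 ℓ; have := hγbar ℓ; positivity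
  -- the invariant
  have hinv : ∀ i : ℕ, ωbar = max
      (Finset.univ.sup' Finset.univ_nonempty (fun j => (1 + 2 * τ i j * γtil j)⁻¹))
      (Finset.univ.sup' Finset.univ_nonempty (fun ℓ => (1 + 2 * σ i ℓ * γbar ℓ)⁻¹)) := by
    intro i
    induction i with
    | zero => simpa [hτinit, hσinit] using hωbar
    | succ i ih =>
      have hτi := (hpos i).1
      have hσi := (hpos i).2
      -- each old value is ≤ ωbar
      have hxτ : ∀ j, (1 + 2 * τ i j * γtil j)⁻¹ ≤ ωbar := fun j => by
        rw [ih]; exact le_trans (Finset.le_sup' (fun j => (1 + 2 * τ i j * γtil j)⁻¹) (Finset.mem_univ j)) (le_max_left _ _)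
      have hxσ : ∀ ℓ, (1 + 2 * σ i ℓ * γbar ℓ)⁻¹ ≤ ωbar := fun ℓ => by
        rw [ih]; exact le_trans (Finset.le_sup' (fun ℓ => (1 + 2 * σ i ℓ * γbar ℓ)⁻¹) (Finset.mem_univ ℓ)) (le_max_right _ _)
      -- new values formula
      have hnewτ : ∀ j, (1 + 2 * τ (i+1) j * γtil j)⁻¹
          = ωbar / (ωbar + 1 - (1 + 2 * τ i j * γtil j)⁻¹) := fun j => by
        rw [hτrec]; exact val_rec _ _ _ (hτi j) (hγtil j) hωpos
      have hnewσ : ∀ ℓ, (1 + 2 * σ (i+1) ℓ * γbar ℓ)⁻¹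
          = ωbar / (ωbar + 1 - (1 + 2 * σ i ℓ * γbar ℓ)⁻¹) := fun ℓ => by
        rw [hσrec]; exact val_rec _ _ _ (hσi ℓ) (hγbar ℓ) hωpos
      -- new values ≤ ωbar
      have hubτ : ∀ j, (1 + 2 * τ (i+1) j * γtil j)⁻¹ ≤ ωbar := fun j => by
        rw [hnewτ j]
        exact div_le_self hωpos.le (by linarith [hxτ j])
      have hubσ : ∀ ℓ, (1 + 2 * σ (i+1) ℓ * γbar ℓ)⁻¹ ≤ ωbar := fun ℓ => by
        rw [hnewσ ℓ]
        exact div_le_self hωpos.le (by linarith [hxσ ℓ])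
      refine le_antisymm ?_ (max_le (Finset.sup'_le _ _ fun j _ => hubτ j)
        (Finset.sup'_le _ _ fun ℓ _ => hubσ ℓ))
      -- ωbar ≤ new max : use the index attaining the old max
      rcases max_choice
        (Finset.univ.sup' Finset.univ_nonempty (fun j => (1 + 2 * τ i j * γtil j)⁻¹))
        (Finset.univ.sup' Finset.univ_nonempty (fun ℓ => (1 + 2 * σ i ℓ * γbar ℓ)⁻¹)) with hc | hc
      · obtain ⟨j, _, hj⟩ := Finset.exists_mem_eq_sup' (Finset.univ_nonempty)
          (fun j => (1 + 2 * τ i j * γtil j)⁻¹)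
        have hxj : (1 + 2 * τ i j * γtil j)⁻¹ = ωbar := by rw [ih, hc, hj]
        have : (1 + 2 * τ (i+1) j * γtil j)⁻¹ = ωbar := by
          rw [hnewτ j, hxj]; simp
        calc ωbar = (1 + 2 * τ (i+1) j * γtil j)⁻¹ := this.symm
          _ ≤ _ := le_trans (Finset.le_sup' (fun j => (1 + 2 * τ (i+1) j * γtil j)⁻¹) (Finset.mem_univ j)) (le_max_left _ _)
      · obtain ⟨ℓ, _, hℓ⟩ := Finset.exists_mem_eq_sup' (Finset.univ_nonempty)
          (fun ℓ => (1 + 2 * σ i ℓ * γbar ℓ)⁻¹)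
        have hxℓ : (1 + 2 * σ i ℓ * γbar ℓ)⁻¹ = ωbar := by rw [ih, hc, hℓ]
        have : (1 + 2 * σ (i+1) ℓ * γbar ℓ)⁻¹ = ωbar := by
          rw [hnewσ ℓ, hxℓ]; simp
        calc ωbar = (1 + 2 * σ (i+1) ℓ * γbar ℓ)⁻¹ := this.symm
          _ ≤ _ := le_trans (Finset.le_sup' (fun ℓ => (1 + 2 * σ (i+1) ℓ * γbar ℓ)⁻¹) (Finset.mem_univ ℓ)) (le_max_right _ _)
  refine ⟨hinv, fun i j => ?_, fun i ℓ => ?_⟩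
  · have ht := (hpos i).1 j
    have hg := hγtil j
    have h1 : (0:ℝ) < 1 + 2 * τ i j * γtil j := by positivity
    have hx : (1 + 2 * τ i j * γtil j)⁻¹ ≤ ωbar := by
      rw [hinv i]; exact le_trans (Finset.le_sup' (fun j => (1 + 2 * τ i j * γtil j)⁻¹) (Finset.mem_univ j)) (le_max_left _ _)
    have hcancel : (1 + 2 * τ i j * γtil j) * (1 + 2 * τ i j * γtil j)⁻¹ = 1 :=
      mul_inv_cancel₀ h1.ne'
    have hone : 1 ≤ (1 + 2 * τ i j * γtil j) * ωbar := by nlinarith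
    rw [hτrec]
    exact div_le_self ht.le hone
  · have ht := (hpos i).2 ℓ
    have hg := hγbar ℓ
    have h1 : (0:ℝ) < 1 + 2 * σ i ℓ * γbar ℓ := by positivity
    have hx : (1 + 2 * σ i ℓ * γbar ℓ)⁻¹ ≤ ωbar := by
      rw [hinv i]; exact le_trans (Finset.le_sup' (fun ℓ => (1 + 2 * σ i ℓ * γbar ℓ)⁻¹) (Finset.mem_univ ℓ)) (le_max_right _ _)
    have hcancel : (1 + 2 * σ i ℓ * γbar ℓ) * (1 + 2 * σ i ℓ * γbar ℓ)⁻¹ = 1 :=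
      mul_inv_cancel₀ h1.ne'
    have hone : 1 ≤ (1 + 2 * σ i ℓ * γbar ℓ) * ωbar := by nlinarith
    rw [hσrec]
    exact div_le_self ht.le hone
end

section
/- For every i ≥ 0 and all j = 1,…,m and ℓ = 1,…,n, σ_ℓ^{i+2}·τ_j^{i+1} ≤ σ_ℓ^1·τ_j^0. -/
/-- Under the accelerated step-length rules of the full-primal-update method, the products
`σ_ℓ^{i+2}·τ_j^{i+1}` stay bounded by `σ_ℓ^1·τ_j^0`. -/
theorem stmt14 {m n : ℕ} [Nonempty (Fin m)]
    (γtil : Fin m → ℝ) (hγtil : ∀ j, 0 < γtil j)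
    (τ0 : Fin m → ℝ) (hτ0 : ∀ j, 0 < τ0 j)
    (σ1 : Fin n → ℝ) (hσ1 : ∀ ℓ, 0 < σ1 ℓ)
    (τ : ℕ → Fin m → ℝ) (σ : ℕ → Fin n → ℝ) (ωbar : ℕ → ℝ)
    (hτinit : τ 0 = τ0) (hσinit : σ 1 = σ1)
    (hωbar0 : ωbar 0 = 1)
    (hωbarrec : ∀ i, ωbar (i + 1) = Finset.univ.sup' Finset.univ_nonempty
      (fun j => (Real.sqrt (1 + 2 * τ i j * γtil j))⁻¹))
    (hτrec : ∀ i j, τ (i + 1) j = τ i j / ((1 + 2 * τ i j * γtil j) * ωbar (i + 1)))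
    (hσrec : ∀ i ℓ, σ (i + 2) ℓ = σ (i + 1) ℓ / ωbar i) :
    ∀ (i : ℕ) (j : Fin m) (ℓ : Fin n), σ (i + 2) ℓ * τ (i + 1) j ≤ σ 1 ℓ * τ 0 j := by
  -- basic positivity facts
  have hfac : ∀ i j, 0 < τ i j → (1:ℝ) < 1 + 2 * τ i j * γtil j := by
    intro i j h
    nlinarith [hγtil j]
  have hωpos : ∀ i, (∀ j, 0 < τ i j) → 0 < ωbar (i + 1) ∧ ωbar (i + 1) ≤ 1 := by
    intro i hpos
    constructor
    · rw [hωbarrec i]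
      obtain ⟨j0⟩ := (inferInstance : Nonempty (Fin m))
      refine lt_of_lt_of_le ?_ (Finset.le_sup' _ (Finset.mem_univ j0))
      have h1 : (0:ℝ) < 1 + 2 * τ i j0 * γtil j0 := by
        nlinarith [hpos j0, hγtil j0]
      positivity
    · rw [hωbarrec i]
      apply Finset.sup'_le
      intro j _
      have h1 : (1:ℝ) ≤ Real.sqrt (1 + 2 * τ i j * γtil j) := by
        have := Real.sqrt_le_sqrt (le_of_lt (hfac i j (hpos j)))
        simpa using this
      calc (Real.sqrt (1 + 2 * τ i j * γtil j))⁻¹ ≤ 1⁻¹ := by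
            apply inv_anti₀ one_pos h1
        _ = 1 := by norm_num
  have hτpos : ∀ i j, 0 < τ i j := by
    intro i
    induction i with
    | zero => intro j; rw [hτinit]; exact hτ0 j
    | succ k ih =>
      intro j
      rw [hτrec k j]
      have h2 := (hωpos k ih).1
      have h1' : (0:ℝ) < 1 + 2 * τ k j * γtil j := by nlinarith [ih j, hγtil j]
      exact div_pos (ih j) (mul_pos h1' h2)
  have hωpos' : ∀ i, 0 < ωbar (i + 1) := fun i => (hωpos i (hτpos i)).1
  have hωle : ∀ i, ωbar (i + 1) ≤ 1 := fun i => (hωpos i (hτpos i)).2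
  -- key step estimate: τ^{i+1} ≤ τ^i · ω̄^{i+1}
  have hkey : ∀ i j, τ (i + 1) j ≤ τ i j * ωbar (i + 1) := by
    intro i j
    have hs : (0:ℝ) < 1 + 2 * τ i j * γtil j := by nlinarith [hτpos i j, hγtil j]
    have hsq : Real.sqrt (1 + 2 * τ i j * γtil j) ^ 2 = 1 + 2 * τ i j * γtil j :=
      Real.sq_sqrt hs.le
    have hsqrtpos : (0:ℝ) < Real.sqrt (1 + 2 * τ i j * γtil j) :=
      Real.sqrt_pos.mpr hs
    have hle : (Real.sqrt (1 + 2 * τ i j * γtil j))⁻¹ ≤ ωbar (i + 1) := by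
      rw [hωbarrec i]
      exact Finset.le_sup' (fun j => (Real.sqrt (1 + 2 * τ i j * γtil j))⁻¹)
        (Finset.mem_univ j)
    have hω := hωpos' i
    -- ω̄² ≥ (1 + 2τγ)⁻¹, so (1+2τγ)·ω̄² ≥ 1
    have hineq : (1:ℝ) ≤ (1 + 2 * τ i j * γtil j) * ωbar (i + 1) ^ 2 := by
      have h2 : (Real.sqrt (1 + 2 * τ i j * γtil j))⁻¹ ^ 2 ≤ ωbar (i + 1) ^ 2 := by
        apply pow_le_pow_left₀ (by positivity) hle
      rw [inv_pow, hsq] at h2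
      calc (1:ℝ) = (1 + 2 * τ i j * γtil j) * (1 + 2 * τ i j * γtil j)⁻¹ := by
            field_simp
        _ ≤ (1 + 2 * τ i j * γtil j) * ωbar (i + 1) ^ 2 := by
            apply mul_le_mul_of_nonneg_left h2 hs.le
    rw [hτrec i j, div_le_iff₀ (by positivity)]
    have hτp := hτpos i j
    nlinarith [hineq, hτp, hω]
  -- positivity of σ
  have hσpos : ∀ i ℓ, 0 < σ (i + 1) ℓ := by
    intro i
    induction i with
    | zero => intro ℓ; rw [hσinit]; exact hσ1 ℓ
    | succ k ih =>
      intro ℓ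
      rw [show k + 1 + 1 = k + 2 by ring, hσrec k ℓ]
      cases k with
      | zero => rw [hωbar0]; simpa using ih ℓ
      | succ k' => exact div_pos (ih ℓ) (hωpos' k')
  -- strengthened claim
  have H : ∀ i (j : Fin m) (ℓ : Fin n),
      σ (i + 2) ℓ * τ (i + 1) j ≤ σ 1 ℓ * τ 0 j * ωbar (i + 1) := by
    intro i
    induction i with
    | zero =>
      intro j ℓ
      have hσ2 : σ 2 ℓ = σ 1 ℓ := by rw [hσrec 0 ℓ, hωbar0, div_one]
      rw [hσ2, mul_assoc]
      exact mul_le_mul_of_nonneg_left (hkey 0 j) (by rw [hσinit]; exact (hσ1 ℓ).le)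
    | succ k ih =>
      intro j ℓ
      have hσ3 : σ (k + 1 + 2) ℓ = σ (k + 2) ℓ / ωbar (k + 1) := hσrec (k + 1) ℓ
      have hτ2 : τ (k + 1 + 1) j ≤ τ (k + 1) j * ωbar (k + 1 + 1) := hkey (k + 1) j
      have hωp := hωpos' k
      have hωp2 := hωpos' (k + 1)
      have hσp : 0 < σ (k + 2) ℓ := hσpos (k + 1) ℓ
      have hτp : 0 < τ (k + 1 + 1) j := hτpos (k + 2) j
      calc σ (k + 1 + 2) ℓ * τ (k + 1 + 1) j
          = σ (k + 2) ℓ / ωbar (k + 1) * τ (k + 1 + 1) j := by rw [hσ3]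
        _ ≤ σ (k + 2) ℓ / ωbar (k + 1) * (τ (k + 1) j * ωbar (k + 1 + 1)) := by
            apply mul_le_mul_of_nonneg_left hτ2 (by positivity)
        _ = σ (k + 2) ℓ * τ (k + 1) j * ωbar (k + 1 + 1) / ωbar (k + 1) := by ring
        _ ≤ σ 1 ℓ * τ 0 j * ωbar (k + 1) * ωbar (k + 1 + 1) / ωbar (k + 1) := by
            apply div_le_div_of_nonneg_right _ hωp.le
            apply mul_le_mul_of_nonneg_right (ih j ℓ) hωp2.le
        _ = σ 1 ℓ * τ 0 j * ωbar (k + 1 + 1) := by field_simp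
  intro i j ℓ
  calc σ (i + 2) ℓ * τ (i + 1) j ≤ σ 1 ℓ * τ 0 j * ωbar (i + 1) := H i j ℓ
    _ ≤ σ 1 ℓ * τ 0 j * 1 := by
        apply mul_le_mul_of_nonneg_left (hωle i)
        exact mul_nonneg (by rw [hσinit]; exact (hσ1 ℓ).le) (by rw [hτinit]; exact (hτ0 j).le)
    _ = σ 1 ℓ * τ 0 j := by ring
end
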